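/- arXiv:1505.00731 — 6 statements merged into one kernel-verified Lean document; each statement's English description precedes it below -/
import Mathlib

section
/- Let U be an optimal machine. Then for every partial computable function A : List Bool →. Bool, the liminf of the error rate is positive: there exist a real ε > 0 and N such that ε_n(A) ≥ ε for all n ≥ N (so liminf_{n→∞} ε_n(A) > 0). -/
open Filter

/-- Kolmogorov complexity of `m` relative to machine `U` (∞ if `m` has no description). -/
noncomputable def KU (U : List Bool →. ℕ) (m : ℕ) : ℕ∞ :=
  sInf {l : ℕ∞ | ∃ p : List Bool, m ∈ U p ∧ (p.length : ℕ∞) = l}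

/-- `U` is an optimal machine. -/
def OptimalMachine (U : List Bool →. ℕ) : Prop :=
  Partrec U ∧ ∀ V : List Bool →. ℕ, Partrec V → ∃ c : ℕ, ∀ m, KU U m ≤ KU V m + (c : ℕ∞)

/-- A total function on strings is length-bounded if it increases length by at most a constant. -/
def LengthBounded (h : List Bool → List Bool) : Prop :=
  ∃ c : ℕ, ∀ x, (h x).length ≤ x.length + c

/-- `U` is an effectively optimal machine. -/
def EffOptimal (U : List Bool →. ℕ) : Prop :=
  Partrec U ∧ ∀ V : List Bool →. ℕ, Partrec V →
    ∃ h : List Bool → List Bool, Computable h ∧ LengthBounded h ∧ ∀ x, U (h x) = V x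

/-- `x` is an error point of `A` as an approximate decision procedure for `dom U`. -/
def ErrorPoint (U : List Bool →. ℕ) (A : List Bool →. Bool) (x : List Bool) : Prop :=
  ¬(((U x).Dom ∧ true ∈ A x) ∨ (¬(U x).Dom ∧ false ∈ A x))

/-- fraction of error points among strings of length at most `n`. -/
noncomputable def errRate (U : List Bool →. ℕ) (A : List Bool →. Bool) (n : ℕ) : ℝ :=
  (Set.ncard {x : List Bool | x.length ≤ n ∧ ErrorPoint U A x} : ℝ) / 2 ^ (n + 1)

def LeftTotal (U : List Bool →. ℕ) : Prop :=
  ∀ x y : List Bool, x.length = y.length → List.Lex (· < ·) x y → (U y).Dom → (U x).Dom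

noncomputable def haltRate (U : List Bool →. ℕ) (n : ℕ) : ℝ :=
  (Set.ncard {x : List Bool | x.length ≤ n ∧ (U x).Dom} : ℝ) / 2 ^ (n + 1)

def MOptimal (S : Set (List Bool)) : Prop :=
  REPred (· ∈ S) ∧ ∀ W : Set (List Bool), REPred (· ∈ W) →
    ∃ h : List Bool → List Bool, Computable h ∧ LengthBounded h ∧ ∀ x, x ∈ W ↔ h x ∈ S

def SimpleSet (S : Set (List Bool)) : Prop :=
  REPred (· ∈ S) ∧ Sᶜ.Infinite ∧
    ∀ W : Set (List Bool), REPred (· ∈ W) → W ⊆ Sᶜ → W.Finite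

noncomputable def compTime (c : Nat.Partrec.Code) (p : List Bool) : ℕ :=
  sInf {k : ℕ | (Nat.Partrec.Code.evaln k c (Encodable.encode p)).isSome}

noncomputable def BB (U : List Bool →. ℕ) (c : Nat.Partrec.Code) (n : ℕ) : ℕ :=
  sSup {t : ℕ | ∃ p : List Bool, p.length ≤ n ∧ (U p).Dom ∧ t = compTime c p}

noncomputable def Bfun (U : List Bool →. ℕ) (n : ℕ) : ℕ :=
  sSup {m : ℕ | KU U m ≤ (n : ℕ∞)}



section LERsec
set_option linter.dupNamespace false

namespace LER

open Encodable Nat.Partrec Nat.Partrec.Code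

/-- all strings of length ≤ n -/
def strs : ℕ → List (List Bool)
  | 0 => [[]]
  | n+1 => [] :: ((strs n).map (true :: ·) ++ (strs n).map (false :: ·))

theorem mem_strs {n : ℕ} {x : List Bool} : x ∈ strs n ↔ x.length ≤ n := by
  induction n generalizing x with
  | zero =>
    cases x <;> simp [strs]
  | succ n ih =>
    cases x with
    | nil => simp [strs]
    | cons b x =>
      cases b <;> simp [strs, ih, Nat.succ_le_succ_iff]

theorem nodup_strs (n : ℕ) : (strs n).Nodup := by
  induction n with
  | zero => simp [strs]
  | succ n ih =>
    refine List.Nodup.cons ?_ (List.Nodup.append ?_ ?_ ?_)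
    · simp
    · exact ih.map (fun a b h => by simpa using h)
    · exact ih.map (fun a b h => by simpa using h)
    · intro x hx hy
      simp only [List.mem_map] at hx hy
      obtain ⟨a, _, rfl⟩ := hx
      obtain ⟨b, _, h⟩ := hy
      simp at h

theorem ncard_filter_strs (n : ℕ) (p : List Bool → Bool) :
    {x : List Bool | x.length ≤ n ∧ p x = true}.ncard = ((strs n).filter p).length := by
  have h1 : {x : List Bool | x.length ≤ n ∧ p x = true} = ↑((strs n).filter p).toFinset := by
    ext x
    simp [List.mem_filter, mem_strs]
  rw [h1, Set.ncard_coe_finset]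
  exact List.toFinset_card_of_nodup ((nodup_strs n).filter p)

theorem finite_len_le (n : ℕ) : {x : List Bool | x.length ≤ n}.Finite := by
  refine Set.Finite.subset (strs n).finite_toSet ?_
  intro x hx
  simpa [mem_strs] using hx

theorem ncard_len_eq (k : ℕ) : {r : List Bool | r.length = k}.ncard = 2 ^ k := by
  rw [← Nat.card_coe_set_eq]
  have e : {r : List Bool | r.length = k} ≃ List.Vector Bool k := Equiv.refl _
  rw [Nat.card_congr e, Nat.card_eq_fintype_card, card_vector]
  simp

def noncovP (cU cA : Code) (t : ℕ) (x : List Bool) : Bool :=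
  decide (evaln t cU (encode x) = Option.none ∧
    ¬ evaln t cA (encode x) = Option.some (encode (false : Bool)))

def NC (cU cA : Code) (t n : ℕ) : ℕ := ((strs n).filter (noncovP cU cA t)).length

def EX (cU : Code) (t n : ℕ) : List ℕ := (strs n).filterMap (fun x => evaln t cU (encode x))

def cand (cU : Code) (t n e : ℕ) : List ℕ :=
  (List.range (e + (EX cU t n).length + 1)).filter (fun m => decide (¬ m ∈ EX cU t n))

def pick (cU : Code) (t n e : ℕ) : ℕ := (cand cU t n e).getD e 0

theorem lt_length_cand (cU : Code) (t n e : ℕ) : e < (cand cU t n e).length := by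
  classical
  set L := EX cU t n with hL
  set N := e + L.length + 1 with hN
  have hsplit := (List.range N).length_eq_length_filter_add (fun m => decide (¬ m ∈ L))
  have hnot : (fun m : ℕ => !(decide (¬ m ∈ L))) = fun m : ℕ => decide (m ∈ L) := by
    funext m; by_cases h : m ∈ L <;> simp [h]
  rw [hnot] at hsplit
  have hrange : (List.range N).length = N := List.length_range
  have hmemle : ((List.range N).filter (fun m => decide (m ∈ L))).length ≤ L.length := by
    have h1 : ((List.range N).filter (fun m => decide (m ∈ L))).toFinset.card
        = ((List.range N).filter (fun m => decide (m ∈ L))).length :=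
      List.toFinset_card_of_nodup (List.nodup_range.filter _)
    rw [← h1]
    refine le_trans (Finset.card_le_card ?_) (List.toFinset_card_le L)
    intro m hm
    simp only [List.mem_toFinset, List.mem_filter, decide_eq_true_eq] at hm ⊢
    exact hm.2
  have hc : (cand cU t n e).length = ((List.range N).filter (fun m => decide (¬ m ∈ L))).length :=
    rfl
  omega

theorem cand_append (cU : Code) (t n : ℕ) {e e' : ℕ} (h : e ≤ e') :
    ∃ s, cand cU t n e' = cand cU t n e ++ s := by
  have hEq : e' + (EX cU t n).length + 1 = (e + (EX cU t n).length + 1) + (e' - e) := by omega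
  exact ⟨_, by unfold cand; rw [hEq, List.range_add, List.filter_append]⟩

theorem nodup_cand (cU : Code) (t n e : ℕ) : (cand cU t n e).Nodup :=
  List.nodup_range.filter _

theorem pick_mem_cand (cU : Code) (t n e : ℕ) : pick cU t n e ∈ cand cU t n e := by
  rw [pick, List.getD_eq_getElem _ _ (lt_length_cand cU t n e)]
  exact List.getElem_mem _

theorem pick_not_mem (cU : Code) (t n e : ℕ) : pick cU t n e ∉ EX cU t n := by
  have := pick_mem_cand cU t n e
  rw [cand, List.mem_filter] at this
  simpa using this.2

theorem pick_injective (cU : Code) (t n : ℕ) : Function.Injective (pick cU t n) := by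
  intro e1 e2 h
  by_contra hne
  wlog hlt : e1 < e2 generalizing e1 e2
  · exact this h.symm (Ne.symm hne) (by omega)
  obtain ⟨s, hs⟩ := cand_append cU t n (le_of_lt hlt)
  have h1 : e1 < (cand cU t n e1).length := lt_length_cand cU t n e1
  have h2 : e2 < (cand cU t n e2).length := lt_length_cand cU t n e2
  have h1' : e1 < (cand cU t n e2).length := by
    rw [hs, List.length_append]; omega
  have p1 : pick cU t n e1 = (cand cU t n e2).getD e1 0 := by
    rw [pick, hs, List.getD_append _ _ _ _ h1]
  have p2 : (cand cU t n e2).getD e1 0 = (cand cU t n e2)[e1] :=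
    List.getD_eq_getElem _ _ h1'
  have p3 : pick cU t n e2 = (cand cU t n e2)[e2] :=
    List.getD_eq_getElem _ _ h2
  rw [p1, p2, p3] at h
  exact hne ((nodup_cand cU t n e2).getElem_inj_iff.mp h)

theorem mem_EX {cU : Code} {t n y : ℕ} {x : List Bool} (hx : x.length ≤ n)
    (h : evaln t cU (encode x) = some y) : y ∈ EX cU t n := by
  rw [EX, List.mem_filterMap]
  exact ⟨x, mem_strs.mpr hx, h⟩

theorem NC_eq_ncard (cU cA : Code) (t n : ℕ) :
    {x : List Bool | x.length ≤ n ∧ noncovP cU cA t x = true}.ncard = NC cU cA t n :=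
  ncard_filter_strs n _

theorem noncovP_antitone {cU cA : Code} {t t' : ℕ} (h : t ≤ t') {x : List Bool}
    (hx : noncovP cU cA t' x = true) : noncovP cU cA t x = true := by
  rw [noncovP, decide_eq_true_eq] at hx ⊢
  refine ⟨?_, fun hc => hx.2 (Option.mem_def.mp (evaln_mono h (Option.mem_def.mpr hc)))⟩
  cases hE : evaln t cU (encode x) with
  | none => rfl
  | some y =>
    have := evaln_mono h (Option.mem_def.mpr hE)
    rw [Option.mem_def, hx.1] at this
    exact absurd this (by simp)

/-! ### the machine -/

def dOf (q : List Bool) : ℕ := q.idxOf false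

def rOf (q : List Bool) : List Bool := q.drop (dOf q + 1)

def nOf (q : List Bool) : ℕ := (rOf q).length + 2 * dOf q + 1

def thr (k : ℕ) : ℕ := 2 ^ (k - 1)

def VB (cU cA : Code) (q : List Bool) (t : ℕ) : Bool :=
  decide (NC cU cA t (nOf q) < thr (rOf q).length)

def Vm (cU cA : Code) : List Bool →. ℕ := fun q =>
  (Nat.rfind (fun t => Part.some (VB cU cA q t))).map
    (fun t => pick cU t (nOf q) (encode (rOf q)))

theorem mem_Vm {cU cA : Code} {q : List Bool} {t₀ : ℕ} (h1 : VB cU cA q t₀ = true)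
    (h2 : ∀ t < t₀, VB cU cA q t = false) :
    pick cU t₀ (nOf q) (encode (rOf q)) ∈ Vm cU cA q := by
  rw [Vm, Part.mem_map_iff]
  refine ⟨t₀, Nat.mem_rfind.mpr ⟨by simp [h1], fun {m} hm => by simp [h2 m hm]⟩, rfl⟩

theorem dOf_spec (d : ℕ) (r : List Bool) :
    dOf (List.replicate d true ++ false :: r) = d := by
  induction d with
  | zero => simp [dOf]
  | succ d ih =>
    rw [dOf] at ih ⊢
    simpa [List.replicate_succ, List.idxOf_cons] using ih

theorem rOf_spec (d : ℕ) (r : List Bool) :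
    rOf (List.replicate d true ++ false :: r) = r := by
  rw [rOf, dOf_spec]
  have : List.replicate d true ++ false :: r
      = (List.replicate d true ++ [false]) ++ r := by simp
  rw [this]
  have hlen : (List.replicate d true ++ [false]).length = d + 1 := by simp
  rw [← hlen, List.drop_left]

/-! ### computability -/

theorem primrec_strs : Primrec strs := by
  have hct : Primrec (fun x : List Bool => true :: x) :=
    Primrec.list_cons.comp (Primrec.const true) Primrec.id
  have hcf : Primrec (fun x : List Bool => false :: x) :=
    Primrec.list_cons.comp (Primrec.const false) Primrec.id
  have hstep : Primrec (fun p : ℕ × List (List Bool) =>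
      [] :: (p.2.map (true :: ·) ++ p.2.map (false :: ·))) :=
    Primrec.list_cons.comp (Primrec.const [])
      (Primrec.list_append.comp
        (Primrec.list_map Primrec.snd (hct.comp₂ Primrec₂.right))
        (Primrec.list_map Primrec.snd (hcf.comp₂ Primrec₂.right)))
  have h : Primrec (Nat.rec [[]] (fun _ ih =>
      [] :: (ih.map (true :: ·) ++ ih.map (false :: ·))) : ℕ → List (List Bool)) :=
    Primrec.nat_rec₁ _ hstep.to₂
  refine h.of_eq fun n => ?_
  induction n with
  | zero => simp [strs]
  | succ n ih => simp [strs, ← ih]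

theorem filter_eq_filterMap {α : Type*} (p : α → Bool) (l : List α) :
    l.filter p = l.filterMap (fun x => if p x = true then some x else none) := by
  induction l with
  | nil => rfl
  | cons a l ih =>
    rw [List.filter_cons, List.filterMap_cons]
    by_cases h : p a = true <;> simp [h, ih]

theorem primrec_evalnU (cU : Code) :
    Primrec₂ (fun (t m : ℕ) => evaln t cU m) :=
  (primrec_evaln.comp ((Primrec.fst.pair (Primrec.const cU)).pair Primrec.snd)).to₂

theorem primrec_noncovP (cU cA : Code) :
    Primrec (fun a : (ℕ × ℕ) × List Bool => noncovP cU cA a.1.1 a.2) := by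
  have h1 : PrimrecPred (fun a : (ℕ × ℕ) × List Bool =>
      evaln a.1.1 cU (encode a.2) = Option.none) :=
    PrimrecRel.comp Primrec.eq
      ((primrec_evalnU cU).comp (Primrec.fst.comp Primrec.fst)
        (Primrec.encode.comp Primrec.snd))
      (Primrec.const Option.none)
  have h2 : PrimrecPred (fun a : (ℕ × ℕ) × List Bool =>
      evaln a.1.1 cA (encode a.2) = Option.some (encode (false : Bool))) :=
    PrimrecRel.comp Primrec.eq
      ((primrec_evalnU cA).comp (Primrec.fst.comp Primrec.fst)
        (Primrec.encode.comp Primrec.snd))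
      (Primrec.const _)
  refine (h1.and h2.not).decide.of_eq fun a => ?_
  simp only [noncovP]

theorem primrec_NC (cU cA : Code) : Primrec₂ (NC cU cA) := by
  have hg : Primrec (fun a : (ℕ × ℕ) × List Bool =>
      if noncovP cU cA a.1.1 a.2 = true then some a.2 else none) := by
    have hc : Primrec (fun a : (ℕ × ℕ) × List Bool => noncovP cU cA a.1.1 a.2) :=
      primrec_noncovP cU cA
    exact Primrec.ite (PrimrecRel.comp Primrec.eq hc (Primrec.const true))
      (Primrec.option_some.comp Primrec.snd) (Primrec.const (Option.none : Option (List Bool)))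
  have h : Primrec (fun p : ℕ × ℕ =>
      ((strs p.2).filterMap (fun x => if noncovP cU cA p.1 x = true then some x else none)).length) :=
    Primrec.list_length.comp
      (Primrec.listFilterMap (primrec_strs.comp Primrec.snd) hg)
  have h' : Primrec (fun p : ℕ × ℕ => NC cU cA p.1 p.2) := by
    refine h.of_eq fun p => ?_
    rw [NC, filter_eq_filterMap]
  exact h' 

theorem primrec_EX (cU : Code) : Primrec₂ (EX cU) := by
  have h : Primrec (fun p : ℕ × ℕ => (strs p.2).filterMap (fun x => evaln p.1 cU (encode x))) :=
    Primrec.listFilterMap (primrec_strs.comp Primrec.snd)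
      (Primrec.to₂ ((primrec_evalnU cU).comp (Primrec.fst.comp Primrec.fst)
        (Primrec.encode.comp Primrec.snd)))
  exact h.to₂

theorem primrec_memEX (cU : Code) :
    Primrec (fun a : ((ℕ × ℕ) × ℕ) × ℕ => decide (¬ a.2 ∈ EX cU a.1.1.1 a.1.1.2)) := by
  have hEX : Primrec (fun a : ((ℕ × ℕ) × ℕ) × ℕ => EX cU a.1.1.1 a.1.1.2) :=
    (primrec_EX cU).comp (Primrec.fst.comp (Primrec.fst.comp Primrec.fst))
      (Primrec.snd.comp (Primrec.fst.comp Primrec.fst))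
  have hmem : PrimrecPred (fun a : ((ℕ × ℕ) × ℕ) × ℕ => a.2 ∈ EX cU a.1.1.1 a.1.1.2) := by
    have h0 : PrimrecPred (fun a : ((ℕ × ℕ) × ℕ) × ℕ =>
        (EX cU a.1.1.1 a.1.1.2).idxOf a.2 < (EX cU a.1.1.1 a.1.1.2).length) :=
      PrimrecRel.comp Primrec.nat_lt
        (Primrec₂.comp (Primrec.list_idxOf (α := ℕ)) Primrec.snd hEX) (Primrec.list_length.comp hEX)
    refine h0.of_eq fun a => ?_
    exact List.idxOf_lt_length_iff (a := a.2) (l := EX cU a.1.1.1 a.1.1.2)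
  exact hmem.not.decide

theorem primrec_cand (cU : Code) :
    Primrec (fun a : (ℕ × ℕ) × ℕ => cand cU a.1.1 a.1.2 a.2) := by
  have hEX : Primrec (fun a : (ℕ × ℕ) × ℕ => EX cU a.1.1 a.1.2) :=
    (primrec_EX cU).comp (Primrec.fst.comp Primrec.fst) (Primrec.snd.comp Primrec.fst)
  have hrange : Primrec (fun a : (ℕ × ℕ) × ℕ =>
      List.range (a.2 + (EX cU a.1.1 a.1.2).length + 1)) :=
    Primrec.list_range.comp
      (Primrec.succ.comp (Primrec.nat_add.comp Primrec.snd (Primrec.list_length.comp hEX)))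
  have hg : Primrec (fun a : ((ℕ × ℕ) × ℕ) × ℕ =>
      if (decide (¬ a.2 ∈ EX cU a.1.1.1 a.1.1.2)) = true then some a.2 else none) :=
    Primrec.ite
      (PrimrecRel.comp Primrec.eq (primrec_memEX cU) (Primrec.const true))
      (Primrec.option_some.comp Primrec.snd) (Primrec.const (Option.none : Option ℕ))
  have h : Primrec (fun a : (ℕ × ℕ) × ℕ =>
      (List.range (a.2 + (EX cU a.1.1 a.1.2).length + 1)).filterMap
        (fun m => if (decide (¬ m ∈ EX cU a.1.1 a.1.2)) = true then some m else none)) :=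
    Primrec.listFilterMap hrange hg.to₂
  refine h.of_eq fun a => ?_
  rw [cand, filter_eq_filterMap]

theorem primrec_pick (cU : Code) :
    Primrec (fun a : (ℕ × ℕ) × ℕ => pick cU a.1.1 a.1.2 a.2) := by
  have h : Primrec (fun a : (ℕ × ℕ) × ℕ => (cand cU a.1.1 a.1.2 a.2).getD a.2 0) :=
    (Primrec.list_getD 0).comp (primrec_cand cU) Primrec.snd
  exact h

theorem primrec_drop : Primrec₂ (fun (n : ℕ) (l : List Bool) => l.drop n) := by
  have h : Primrec (fun p : ℕ × List Bool =>
      (p.1.rec p.2 (fun _ ih => ih.tail) : List Bool)) :=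
    Primrec.nat_rec' Primrec.fst Primrec.snd
      (Primrec.to₂ (Primrec.list_tail.comp (Primrec.snd.comp Primrec.snd)))
  have h' : Primrec (fun p : ℕ × List Bool => p.2.drop p.1) := by
    refine h.of_eq fun p => ?_
    obtain ⟨n, l⟩ := p
    induction n with
    | zero => rfl
    | succ n ih =>
      show (Nat.rec l (fun _ ih => ih.tail) n : List Bool).tail = l.drop (n + 1)
      rw [ih]
      exact List.tail_drop
  exact h' 

theorem primrec_dOf : Primrec dOf :=
  Primrec₂.comp Primrec.list_idxOf (Primrec.const false) Primrec.id

theorem primrec_rOf : Primrec rOf :=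
  Primrec₂.comp primrec_drop (Primrec.succ.comp primrec_dOf) Primrec.id

theorem primrec_thr : Primrec thr := by
  have h2 : Primrec (fun k : ℕ => (Nat.rec 1 (fun _ ih => 2 * ih) k : ℕ)) :=
    Primrec.nat_rec₁ 1 (Primrec.to₂ (Primrec.nat_double.comp Primrec.snd))
  have hpow : Primrec (fun k : ℕ => 2 ^ k) := by
    refine h2.of_eq fun k => ?_
    induction k with
    | zero => rfl
    | succ k ih =>
      show 2 * (Nat.rec 1 (fun _ ih => 2 * ih) k : ℕ) = 2 ^ (k + 1)
      rw [ih, pow_succ]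
      ring
  exact hpow.comp Primrec.pred

theorem primrec_nOf : Primrec nOf :=
  Primrec.succ.comp (Primrec.nat_add.comp (Primrec.list_length.comp primrec_rOf)
    (Primrec.nat_double.comp primrec_dOf))

theorem computable_VB (cU cA : Code) : Computable₂ (VB cU cA) := by
  have hlt : PrimrecPred (fun a : List Bool × ℕ =>
      NC cU cA a.2 (nOf a.1) < thr (rOf a.1).length) :=
    PrimrecRel.comp Primrec.nat_lt
      (Primrec₂.comp (primrec_NC cU cA) Primrec.snd (primrec_nOf.comp Primrec.fst))
      (primrec_thr.comp (Primrec.list_length.comp (primrec_rOf.comp Primrec.fst)))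
  have h : Primrec (fun a : List Bool × ℕ => VB cU cA a.1 a.2) := by
    refine Primrec.of_eq hlt.decide fun a => ?_
    simp only [VB]
  exact (show Primrec₂ (VB cU cA) from h).to_comp

theorem computable_pickq (cU : Code) :
    Computable₂ (fun (q : List Bool) (t : ℕ) => pick cU t (nOf q) (encode (rOf q))) := by
  have h : Primrec (fun a : List Bool × ℕ => pick cU a.2 (nOf a.1) (encode (rOf a.1))) :=
    (primrec_pick cU).comp
      ((Primrec.snd.pair (primrec_nOf.comp Primrec.fst)).pair
        (Primrec.encode.comp (primrec_rOf.comp Primrec.fst)))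
  exact (show Primrec₂ (fun (q : List Bool) (t : ℕ) => pick cU t (nOf q) (encode (rOf q))) from h).to_comp

theorem partrec_Vm (cU cA : Code) : Partrec (Vm cU cA) := by
  have hrf : Partrec (fun q : List Bool => Nat.rfind (fun t => Part.some (VB cU cA q t))) := by
    have := Partrec.rfind (Computable₂.partrec₂ (computable_VB cU cA))
    exact this.of_eq fun q => rfl
  exact (hrf.map (computable_pickq cU)).of_eq fun q => rfl

theorem KU_le_of_mem {V : List Bool →. ℕ} {m : ℕ} {q : List Bool} (h : m ∈ V q) :
    KU V m ≤ (q.length : ℕ∞) := sInf_le ⟨q, h, rfl⟩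

theorem exists_of_KU_le {U : List Bool →. ℕ} {m L : ℕ} (h : KU U m ≤ (L : ℕ∞)) :
    ∃ p, m ∈ U p ∧ p.length ≤ L := by
  by_contra hcon
  push_neg at hcon
  have hge : ((L + 1 : ℕ) : ℕ∞) ≤ KU U m := by
    apply le_sInf
    rintro l ⟨p, hp, rfl⟩
    exact_mod_cast Nat.succ_le_of_lt (hcon p hp)
  have hLL := hge.trans h
  rw [Nat.cast_le] at hLL
  omega

theorem codeOf {σ : Type} [Primcodable σ] {f : List Bool →. σ} (hf : Partrec f) :
    ∃ c : Code, ∀ p : List Bool, eval c (encode p) = (f p).map encode := by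
  obtain ⟨c, hc⟩ := Code.exists_code.1 hf
  refine ⟨c, fun p => ?_⟩
  rw [hc]
  simp [encodek]

end LER

end LERsec

/-- for an optimal machine `U`, every partial computable approximate
decision procedure `A` for the halting problem has liminf error rate bounded away from 0. -/
theorem liminf_error_rate_pos (U : List Bool →. ℕ) (hU : OptimalMachine U)
    (A : List Bool →. Bool) (hA : Partrec A) :
    ∃ ε : ℝ, 0 < ε ∧ ∃ N : ℕ, ∀ n ≥ N, ε ≤ errRate U A n := by
  classical
  open Encodable Nat.Partrec.Code in
  obtain ⟨hUpr, hopt⟩ := hU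
  obtain ⟨cU, hcU⟩ := LER.codeOf hUpr
  obtain ⟨cA, hcA⟩ := LER.codeOf hA
  have hUmem : ∀ (p : List Bool) (m : ℕ), m ∈ U p ↔ m ∈ eval cU (encode p) := by
    intro p m
    rw [hcU p, Part.mem_map_iff]
    constructor
    · intro h
      exact ⟨m, h, by simp⟩
    · rintro ⟨a, ha, rfl⟩
      simpa using ha
  have hAfalse : ∀ p : List Bool,
      false ∈ A p ↔ (encode (false : Bool)) ∈ eval cA (encode p) := by
    intro p
    rw [hcA p, Part.mem_map_iff]
    constructor
    · intro h
      exact ⟨false, h, rfl⟩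
    · rintro ⟨b, hb, henc⟩
      have hb' := encode_injective henc
      subst hb'
      exact hb
  obtain ⟨c, hc⟩ := hopt (LER.Vm cU cA) (LER.partrec_Vm cU cA)
  refine ⟨1 / 2 ^ (2 * c + 3), by positivity, 2 * c + 2, fun n hn => ?_⟩
  set j := n - (2 * c + 2) with hj
  set k := j + 1 with hk
  have hnj : n = k + 2 * c + 1 := by omega
  set E := {x : List Bool | x.length ≤ n ∧ ErrorPoint U A x} with hE
  have hEfin : E.Finite := (LER.finite_len_le n).subset fun x hx => hx.1
  have hmain : 2 ^ j ≤ E.ncard := by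
    by_cases Hh : ∃ t, LER.NC cU cA t n < 2 ^ j
    · -- the machine halts on inputs 1^c 0 r with |r| = k
      set t₀ := Nat.find Hh with ht0
      have hfind : LER.NC cU cA t₀ n < 2 ^ j := Nat.find_spec Hh
      have hmin : ∀ t < t₀, ¬ LER.NC cU cA t n < 2 ^ j := fun t ht => Nat.find_min Hh ht
      have hthr : LER.thr k = 2 ^ j := by
        have hkj : k - 1 = j := by omega
        rw [LER.thr, hkj]
      have hq : ∀ r : List Bool, r.length = k →
          LER.pick cU t₀ n (encode r) ∈ LER.Vm cU cA (List.replicate c true ++ false :: r) := by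
        intro r hr
        have hd : LER.dOf (List.replicate c true ++ false :: r) = c := LER.dOf_spec c r
        have hrr : LER.rOf (List.replicate c true ++ false :: r) = r := LER.rOf_spec c r
        have hnq : LER.nOf (List.replicate c true ++ false :: r) = n := by
          rw [LER.nOf, hd, hrr, hr]
          omega
        have h1 : LER.VB cU cA (List.replicate c true ++ false :: r) t₀ = true := by
          rw [LER.VB, hnq, hrr, hr, hthr]
          exact decide_eq_true hfind
        have h2 : ∀ t < t₀, LER.VB cU cA (List.replicate c true ++ false :: r) t = false := by
          intro t ht
          rw [LER.VB, hnq, hrr, hr, hthr]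
          exact decide_eq_false (hmin t ht)
        have hmem := LER.mem_Vm h1 h2
        rwa [hnq, hrr] at hmem
      have hKU : ∀ r : List Bool, r.length = k →
          ∃ p : List Bool, LER.pick cU t₀ n (encode r) ∈ U p ∧ p.length ≤ n := by
        intro r hr
        have hlen : (List.replicate c true ++ false :: r).length = k + c + 1 := by
          rw [List.length_append, List.length_replicate, List.length_cons, hr]
          omega
        have h1 : KU (LER.Vm cU cA) (LER.pick cU t₀ n (encode r)) ≤ ((k + c + 1 : ℕ) : ℕ∞) := by
          have hle := LER.KU_le_of_mem (hq r hr)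
          rwa [hlen] at hle
        have h2 : KU U (LER.pick cU t₀ n (encode r)) ≤ ((n : ℕ) : ℕ∞) := by
          calc KU U (LER.pick cU t₀ n (encode r))
              ≤ KU (LER.Vm cU cA) (LER.pick cU t₀ n (encode r)) + (c : ℕ∞) := hc _
            _ ≤ ((k + c + 1 : ℕ) : ℕ∞) + (c : ℕ∞) := add_le_add_left h1 _
            _ = ((n : ℕ) : ℕ∞) := by
                rw [← Nat.cast_add]
                exact congrArg _ (by omega)
        exact LER.exists_of_KU_le h2
      choose! f hf1 hf2 using hKU
      set Bad := {x : List Bool | x.length ≤ n ∧ LER.noncovP cU cA t₀ x = true} with hBad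
      have hBadfin : Bad.Finite := (LER.finite_len_le n).subset fun x hx => hx.1
      have hBadcard : Bad.ncard < 2 ^ j := by
        rw [hBad, LER.NC_eq_ncard]
        exact hfind
      have himg : ∀ r : List Bool, r.length = k → f r ∈ E ∪ Bad := by
        intro r hr
        have hm : LER.pick cU t₀ n (encode r) ∈ U (f r) := hf1 r hr
        have hlen : (f r).length ≤ n := hf2 r hr
        by_cases hS : evaln t₀ cU (encode (f r)) = Option.none
        · by_cases hF : evaln t₀ cA (encode (f r)) = Option.some (encode (false : Bool))
          · left
            refine ⟨hlen, ?_⟩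
            have hfalse : false ∈ A (f r) :=
              (hAfalse (f r)).2 (evaln_sound (Option.mem_def.mpr hF))
            have hdom : (U (f r)).Dom := Part.dom_iff_mem.mpr ⟨_, hm⟩
            rintro (⟨hD, htrue⟩ | ⟨hnD, hfa⟩)
            · exact absurd (Part.mem_unique htrue hfalse) (by simp)
            · exact hnD hdom
          · right
            refine ⟨hlen, ?_⟩
            rw [LER.noncovP]
            exact decide_eq_true ⟨hS, hF⟩
        · exfalso
          obtain ⟨y, hy⟩ := Option.ne_none_iff_exists'.mp hS
          have hyv : y ∈ eval cU (encode (f r)) := evaln_sound (Option.mem_def.mpr hy)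
          have hmv : LER.pick cU t₀ n (encode r) ∈ eval cU (encode (f r)) := (hUmem _ _).1 hm
          have hyeq : y = LER.pick cU t₀ n (encode r) := Part.mem_unique hyv hmv
          subst hyeq
          exact LER.pick_not_mem cU t₀ n (encode r) (LER.mem_EX hlen hy)
      set Sk := {r : List Bool | r.length = k} with hSk
      have hSkfin : Sk.Finite := (LER.finite_len_le k).subset fun x hx => le_of_eq hx
      have hinj : Set.InjOn f Sk := by
        intro r1 h1 r2 h2 hff
        have hm1 : LER.pick cU t₀ n (encode r1) ∈ U (f r2) := by
          rw [← hff]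
          exact hf1 r1 h1
        have hm2 : LER.pick cU t₀ n (encode r2) ∈ U (f r2) := hf1 r2 h2
        exact encode_injective (LER.pick_injective cU t₀ n (Part.mem_unique hm1 hm2))
      have himg' : f '' Sk ⊆ E ∪ Bad := by
        rintro _ ⟨r, hr, rfl⟩
        exact himg r hr
      have e1 : (f '' Sk).ncard = 2 ^ k := by
        rw [Set.ncard_image_of_injOn hinj, hSk, LER.ncard_len_eq]
      have e2 : (f '' Sk).ncard ≤ (E ∪ Bad).ncard :=
        Set.ncard_le_ncard himg' (hEfin.union hBadfin)
      have e3 := Set.ncard_union_le E Bad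
      have e4 : 2 ^ k = 2 ^ j + 2 ^ j := by
        rw [hk, pow_succ]
        ring
      omega
    · push_neg at Hh
      set g := fun t => LER.NC cU cA t n with hg
      have hne : (Set.range g).Nonempty := ⟨g 0, 0, rfl⟩
      obtain ⟨t₀, ht₀⟩ := Nat.sInf_mem hne
      set B := fun t => {x : List Bool | x.length ≤ n ∧ LER.noncovP cU cA t x = true} with hB
      have hBfin : ∀ t, (B t).Finite := fun t => (LER.finite_len_le n).subset fun x hx => hx.1
      have hBcard : ∀ t, (B t).ncard = g t := fun t => LER.NC_eq_ncard cU cA t n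
      have hanti : ∀ {t t' : ℕ}, t ≤ t' → B t' ⊆ B t := by
        intro t t' h x hx
        exact ⟨hx.1, LER.noncovP_antitone h hx.2⟩
      have hsub : ∀ t, B t₀ ⊆ B t := by
        intro t
        rcases le_or_gt t t₀ with h | h
        · exact hanti h
        · have h1 : B t ⊆ B t₀ := hanti (le_of_lt h)
          have h2 : (B t₀).ncard ≤ (B t).ncard := by
            rw [hBcard, hBcard, ht₀]
            exact Nat.sInf_le ⟨t, rfl⟩
          rw [Set.eq_of_subset_of_ncard_le h1 h2 (hBfin t₀)]
      have hBE : B t₀ ⊆ E := by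
        intro x hx
        have hall : ∀ t, LER.noncovP cU cA t x = true := fun t => (hsub t hx).2
        have hparts : ∀ t, evaln t cU (encode x) = Option.none ∧
            ¬ evaln t cA (encode x) = Option.some (encode (false : Bool)) := by
          intro t
          have := hall t
          rw [LER.noncovP] at this
          exact of_decide_eq_true this
        refine ⟨hx.1, ?_⟩
        rintro (⟨hD, hT⟩ | ⟨hnD, hFA⟩)
        · obtain ⟨m, hm⟩ := Part.dom_iff_mem.mp hD
          obtain ⟨t, hts⟩ := evaln_complete.mp ((hUmem _ _).1 hm)
          rw [Option.mem_def, (hparts t).1] at hts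
          exact absurd hts (by simp)
        · obtain ⟨t, hts⟩ := evaln_complete.mp ((hAfalse x).1 hFA)
          exact (hparts t).2 (Option.mem_def.mp hts)
      calc 2 ^ j ≤ g t₀ := Hh t₀
        _ = (B t₀).ncard := (hBcard t₀).symm
        _ ≤ E.ncard := Set.ncard_le_ncard hBE hEfin
  rw [errRate, ← hE]
  have h2 : (2 : ℝ) ^ j ≤ (E.ncard : ℝ) := by exact_mod_cast hmain
  have heq : (1 : ℝ) / 2 ^ (2 * c + 3) = (2 : ℝ) ^ j / 2 ^ (n + 1) := by
    rw [show n + 1 = j + (2 * c + 3) from by omega, pow_add]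
    rw [div_eq_div_iff (by positivity) (by positivity)]
    ring
  rw [heq]
  gcongr
end

section
/- Let U be an optimal machine. There exists a real ε > 0 such that for every partial computable function A : List Bool →. Bool, the error rate satisfies ε_n(A) ≥ ε for infinitely many n (so limsup_{n→∞} ε_n(A) ≥ ε). -/
open Filter

namespace LimsupAux
open Encodable

/-- binary value of a list of bits (little-endian). -/
def bval : List Bool → ℕ
  | [] => 0
  | b :: r => (if b then 1 else 0) + 2 * bval r

/-- `L`-bit binary representation of `v`. -/
def toBits : ℕ → ℕ → List Bool
  | 0, _ => []
  | L + 1, v => decide (v % 2 = 1) :: toBits L (v / 2)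

@[simp] lemma toBits_length : ∀ L v, (toBits L v).length = L
  | 0, _ => rfl
  | L + 1, v => by simp [toBits, toBits_length L]

lemma bval_toBits : ∀ L v, v < 2 ^ L → bval (toBits L v) = v
  | 0, v, h => by simpa [toBits, bval] using (Nat.lt_one_iff.1 h).symm
  | L + 1, v, h => by
    have h2 : v / 2 < 2 ^ L := by
      rw [Nat.div_lt_iff_lt_mul (by norm_num)]
      calc v < 2 ^ (L + 1) := h
      _ = 2 ^ L * 2 := by ring
    simp only [toBits, bval, bval_toBits L (v / 2) h2]
    rcases Nat.even_or_odd v with he | ho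
    · have : v % 2 = 0 := Nat.even_iff.1 he
      simp [this]; omega
    · have : v % 2 = 1 := Nat.odd_iff.1 ho
      simp [this]; omega

/-- parse off leading `false`s; on `false^a ++ true :: r` returns `(a, r)`. -/
def parse : List Bool → ℕ × List Bool
  | [] => (0, [])
  | true :: q => (0, q)
  | false :: q => ((parse q).1 + 1, (parse q).2)

lemma parse_spec : ∀ a r, parse (List.replicate a false ++ true :: r) = (a, r)
  | 0, r => rfl
  | a + 1, r => by simp [List.replicate_succ, parse, parse_spec a r]


open Encodable

lemma pair_le_sq (x y : ℕ) : Nat.pair x y ≤ (x + y + 1) ^ 2 := by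
  unfold Nat.pair
  split <;> nlinarith

def strBound : ℕ → ℕ
  | 0 => 1
  | n + 1 => (strBound n + 2) ^ 2 + 2

lemma encode_lt_strBound : ∀ (n : ℕ) (l : List Bool), l.length ≤ n → encode l < strBound n
  | n, [] => fun _ => by
    have : (1:ℕ) ≤ strBound n := by
      cases n <;> simp [strBound] <;> positivity
    simpa [encode_list_nil] using Nat.lt_of_lt_of_le Nat.zero_lt_one this
  | 0, b :: l => fun h => by simp at h
  | n + 1, b :: l => fun h => by
    have hl : encode l < strBound n := encode_lt_strBound n l (by simpa using h)
    have hb : encode b ≤ 1 := by cases b <;> simp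
    have : Nat.pair (encode b) (encode l) ≤ (strBound n + 2) ^ 2 := by
      calc Nat.pair (encode b) (encode l) ≤ (encode b + encode l + 1) ^ 2 := pair_le_sq _ _
        _ ≤ (strBound n + 2) ^ 2 := by
            have : encode b + encode l + 1 ≤ strBound n + 2 := by omega
            exact Nat.pow_le_pow_left this 2
    calc encode (b :: l) = Nat.pair (encode b) (encode l) + 1 := by
          simp [encode_list_cons]
      _ ≤ (strBound n + 2) ^ 2 + 1 := by omega
      _ < strBound (n + 1) := by simp [strBound]

def strOpt (n k : ℕ) : Option (List Bool) :=
  (decode (α := List Bool) k).bind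
    (fun l => if l.length ≤ n ∧ encode l = k then some l else none)

def strs (n : ℕ) : List (List Bool) := (List.range (strBound n)).filterMap (strOpt n)

lemma mem_strOpt {n k : ℕ} {l : List Bool} (h : l ∈ strOpt n k) :
    l.length ≤ n ∧ encode l = k := by
  rcases Option.bind_eq_some_iff.1 h with ⟨l', _, hif⟩
  split at hif
  · cases hif; tauto
  · cases hif

lemma mem_strs {n : ℕ} {l : List Bool} : l ∈ strs n ↔ l.length ≤ n := by
  constructor
  · intro h
    rcases List.mem_filterMap.1 h with ⟨k, _, hk⟩
    exact (mem_strOpt hk).1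
  · intro h
    refine List.mem_filterMap.2 ⟨encode l, ?_, ?_⟩
    · exact List.mem_range.2 (encode_lt_strBound n l h)
    · simp [strOpt, encodek, h]

lemma nodup_strs (n : ℕ) : (strs n).Nodup := by
  refine List.Nodup.filterMap ?_ List.nodup_range
  intro k k' l hk hk'
  rw [← (mem_strOpt hk).2, ← (mem_strOpt hk').2]


open Encodable Primrec
open Nat.Partrec (Code)
open Nat.Partrec.Code

variable {α β γ σ : Type*} [Primcodable α] [Primcodable β] [Primcodable γ] [Primcodable σ]

theorem primrec_filter {f : α → List β} {g : α → β → Bool} (hf : Primrec f) (hg : Primrec₂ g) :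
    Primrec fun a => (f a).filter (g a) := by
  have h : Primrec fun a => (f a).foldr (fun b s => bif g a b then b :: s else s) ([] : List β) :=
    list_foldr hf (const []) <|
      (Primrec.cond (hg.comp fst (fst.comp snd))
        (list_cons.comp (fst.comp snd) (snd.comp snd)) (snd.comp snd)).to₂
  refine h.of_eq fun a => ?_
  induction f a with
  | nil => rfl
  | cons b l ih => cases hgb : g a b <;> simp [List.filter_cons, hgb, ih]

theorem primrec_filterMap {f : α → List β} {g : α → β → Option γ}
    (hf : Primrec f) (hg : Primrec₂ g) : Primrec fun a => (f a).filterMap (g a) := by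
  have h : Primrec fun a =>
      (f a).foldr (fun b s => Option.casesOn (g a b) s (· :: s)) ([] : List γ) :=
    list_foldr hf (const []) <|
      (Primrec.option_casesOn (hg.comp fst (fst.comp snd)) (snd.comp snd)
        (list_cons.comp snd ((snd.comp snd).comp fst)).to₂).to₂
  refine h.of_eq fun a => ?_
  induction f a with
  | nil => rfl
  | cons b l ih => cases hgb : g a b <;> simp [List.filterMap_cons, hgb, ih]

theorem primrec_foldr_max {f : α → List ℕ} (hf : Primrec f) :
    Primrec fun a => (f a).foldr max 0 :=
  list_foldr hf (const 0) (nat_max.comp (fst.comp snd) (snd.comp snd)).to₂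

theorem primrec_pow2 : Primrec fun a : ℕ => 2 ^ a :=
  (Primrec₂.unpaired'.1 Nat.Primrec.pow).comp (const 2) Primrec.id

theorem primrec_parse : Primrec parse := by
  have h := list_rec (f := @id (List Bool))
      (g := fun _ => ((0 : ℕ), ([] : List Bool)))
      (h := fun _ (x : Bool × List Bool × (ℕ × List Bool)) =>
        bif x.1 then (0, x.2.1) else (x.2.2.1 + 1, x.2.2.2))
      Primrec.id (const ((0 : ℕ), ([] : List Bool)))
      ((Primrec.cond (fst.comp snd)
        ((const (0 : ℕ)).pair (fst.comp (snd.comp snd)))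
        ((succ.comp (fst.comp (snd.comp (snd.comp snd)))).pair
          (snd.comp (snd.comp (snd.comp snd))))).to₂)
  refine h.of_eq fun l => ?_
  induction l with
  | nil => rfl
  | cons b q ih => cases b <;> simp [parse, ← ih] <;> rfl

theorem primrec_strBound : Primrec strBound := by
  have h : Primrec (Nat.rec 1 (fun _ IH => (IH + 2) ^ 2 + 2) : ℕ → ℕ) := by
    refine nat_rec₁ 1 ?_
    have hsq : Primrec fun x : ℕ => (x + 2) ^ 2 + 2 :=
      succ.comp <| succ.comp <|
        ((Primrec₂.unpaired'.1 Nat.Primrec.pow).comp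
          (succ.comp (succ.comp Primrec.id)) (const 2))
    exact (hsq.comp snd).to₂
  refine h.of_eq fun n => ?_
  induction n with
  | zero => rfl
  | succ n ih => simp [strBound, ← ih]

theorem primrec_strOpt : Primrec₂ strOpt := by
  refine option_bind (Primrec.decode.comp snd) ?_
  have hc : PrimrecPred fun x : (ℕ × ℕ) × List Bool =>
      x.2.length ≤ x.1.1 ∧ encode x.2 = x.1.2 :=
    PrimrecPred.and (nat_le.comp (list_length.comp snd) (fst.comp fst))
      (Primrec.eq.comp (Primrec.encode.comp snd) (snd.comp fst))
  exact (Primrec.ite hc (option_some.comp snd) (const none)).to₂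


theorem primrec_strs : Primrec strs :=
  primrec_filterMap (list_range.comp primrec_strBound) primrec_strOpt

/-- the length parameter `n` computed from input `p`. -/
def nOf (p : List Bool) : ℕ := (parse p).2.length + 2 ^ (parse p).1

theorem primrec_pow2x : Primrec fun a : ℕ => 2 ^ a :=
  (Primrec₂.unpaired'.1 Nat.Primrec.pow).comp (const 2) Primrec.id

theorem primrec_nOf : Primrec nOf :=
  nat_add.comp (list_length.comp (snd.comp primrec_parse))
    (primrec_pow2x.comp (fst.comp primrec_parse))

/-- number of strings of length `≤ n` seen to halt (under code `c`) within `t` steps. -/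
def hcount (c : Code) (n t : ℕ) : ℕ :=
  ((strs n).filter fun q => (evaln t c (encode q)).isSome).length

/-- number of strings of length `≤ n` seen to output `false` (i.e. `0`) within `t` steps. -/
def fcount (c : Code) (n t : ℕ) : ℕ :=
  ((strs n).filter fun q => decide (evaln t c (encode q) = some 0)).length

/-- one more than the max output produced by strings of length `≤ n` within `t` steps. -/
def vmax (c : Code) (n t : ℕ) : ℕ :=
  ((strs n).filterMap fun q => evaln t c (encode q)).foldr max 0 + 1

set_option maxHeartbeats 1000000 in
theorem primrec_hcount : Primrec fun x : (Code × ℕ) × ℕ => hcount x.1.1 x.1.2 x.2 :=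
  list_length.comp <| primrec_filter (primrec_strs.comp (snd.comp fst))
    ((option_isSome.comp <| primrec_evaln.comp <|
      (((snd.comp fst).pair (fst.comp (fst.comp fst))).pair (Primrec.encode.comp snd))).to₂)

set_option maxHeartbeats 1000000 in
theorem primrec_fcount : Primrec fun x : (Code × ℕ) × ℕ => fcount x.1.1 x.1.2 x.2 :=
  list_length.comp <| primrec_filter (primrec_strs.comp (snd.comp fst))
    ((Primrec.eq.comp (primrec_evaln.comp <|
      (((snd.comp fst).pair (fst.comp (fst.comp fst))).pair (Primrec.encode.comp snd)))
      (const (some 0))).decide.to₂)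

set_option maxHeartbeats 1000000 in
theorem primrec_vmax : Primrec fun x : (Code × ℕ) × ℕ => vmax x.1.1 x.1.2 x.2 :=
  succ.comp <| primrec_foldr_max <| primrec_filterMap (primrec_strs.comp (snd.comp fst))
    ((primrec_evaln.comp <|
      (((snd.comp fst).pair (fst.comp (fst.comp fst))).pair (Primrec.encode.comp snd))).to₂)

theorem primrec_bval : Primrec bval := by
  have h := list_foldr (f := @id (List Bool)) (g := fun _ => (0 : ℕ))
      (h := fun _ (x : Bool × ℕ) => (bif x.1 then 1 else 0) + 2 * x.2)
      Primrec.id (const 0)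
      ((nat_add.comp (Primrec.cond (fst.comp snd) (const 1) (const 0))
        (nat_mul.comp (const 2) (snd.comp snd))).to₂)
  refine h.of_eq fun l => ?_
  induction l with
  | nil => rfl
  | cons b r ih => cases b <;> simp [bval, ← ih]

/-- the candidate stopping target computed from the input `p`. -/
def tgt (p : List Bool) : ℕ :=
  (strs (nOf p)).length + 2 ^ ((parse p).2.length - 1) - bval (parse p).2



theorem primrec_tgt : Primrec tgt :=
  nat_sub.comp
    (nat_add.comp (list_length.comp (primrec_strs.comp primrec_nOf))
      (primrec_pow2x.comp (nat_sub.comp (list_length.comp (snd.comp primrec_parse)) (const 1))))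
    (primrec_bval.comp (snd.comp primrec_parse))

/-- code of the candidate algorithm, extracted from `n`. -/
def cAOf (p : List Bool) : Code := Denumerable.ofNat Code (Nat.unpair (nOf p)).1

theorem primrec_cAOf : Primrec cAOf :=
  (Primrec.ofNat Code).comp (fst.comp (Primrec.unpair.comp primrec_nOf))

/-- one step of the search performed by the machine `Vm cU`. -/
def step (cU : Code) (p : List Bool) (t : ℕ) : Option ℕ :=
  if hcount cU (nOf p) t + fcount (cAOf p) (nOf p) t = tgt p
  then some (vmax cU (nOf p) t) else none

set_option maxHeartbeats 1000000 in
theorem computable_step (cU : Code) : Computable₂ (step cU) := by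
  have hn : Primrec fun x : List Bool × ℕ => nOf x.1 := primrec_nOf.comp fst
  have h1 : Primrec fun x : List Bool × ℕ => hcount cU (nOf x.1) x.2 :=
    primrec_hcount.comp (((const cU).pair hn).pair snd)
  have h2 : Primrec fun x : List Bool × ℕ => fcount (cAOf x.1) (nOf x.1) x.2 :=
    primrec_fcount.comp (((primrec_cAOf.comp fst).pair hn).pair snd)
  have h3 : Primrec fun x : List Bool × ℕ => vmax cU (nOf x.1) x.2 :=
    primrec_vmax.comp (((const cU).pair hn).pair snd)
  have h : Primrec₂ (step cU) :=
    (Primrec.ite (Primrec.eq.comp (nat_add.comp h1 h2) (primrec_tgt.comp fst))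
      (option_some.comp h3) (const none)).to₂
  exact h.to_comp

/-- the adversary machine built from (a code of) `U`. -/
def Vm (cU : Code) : List Bool →. ℕ := fun p => Nat.rfindOpt (step cU p)

theorem partrec_Vm (cU : Code) : Partrec (Vm cU) :=
  Partrec.rfindOpt (computable_step cU)


lemma le_foldr_max {l : List ℕ} {w : ℕ} (h : w ∈ l) : w ≤ l.foldr max 0 := by
  induction l with
  | nil => cases h
  | cons b l ih =>
    rcases List.mem_cons.1 h with rfl | h'
    · exact le_max_left _ _
    · exact le_trans (ih h') (le_max_right _ _)

lemma part_bool_cases {o : Part Bool} (h : o.Dom) : true ∈ o ∨ false ∈ o := by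
  have hm := Part.get_mem h
  cases hg : o.get h
  · right; rwa [hg] at hm
  · left; rwa [hg] at hm



lemma finite_len_le (n : ℕ) : {x : List Bool | x.length ≤ n}.Finite := by
  apply Set.Finite.subset (Finset.finite_toSet (strs n).toFinset)
  intro x hx
  simp only [Finset.coe_sort_coe, Finset.mem_coe, List.mem_toFinset, mem_strs]
  exact hx

lemma hcount_eq_ncard (c : Code) (n t : ℕ) :
    hcount c n t
      = Set.ncard {q : List Bool | q.length ≤ n ∧ ((evaln t c (encode q)).isSome : Prop)} := by
  classical
  rw [hcount, ← List.toFinset_card_of_nodup ((nodup_strs n).filter _), ← Set.ncard_coe_finset,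
    List.toFinset_filter]
  congr 1
  ext x
  simp [mem_strs]

lemma fcount_eq_ncard (c : Code) (n t : ℕ) :
    fcount c n t = Set.ncard {q : List Bool | q.length ≤ n ∧ evaln t c (encode q) = some 0} := by
  classical
  rw [fcount, ← List.toFinset_card_of_nodup ((nodup_strs n).filter _), ← Set.ncard_coe_finset,
    List.toFinset_filter]
  congr 1
  ext x
  simp [mem_strs]

set_option maxHeartbeats 1000000 in
theorem key (U : List Bool →. ℕ) (A : List Bool →. Bool) (cU cA : Code)
    (hcU : ∀ p : List Bool, eval cU (encode p) = (U p).map encode)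
    (hcA : ∀ x : List Bool, eval cA (encode x) = (A x).map encode)
    (a n : ℕ)
    (hn1 : (Nat.unpair n).1 = encode cA)
    (hjn : 2 ^ a + 1 ≤ n)
    (hE : Set.ncard {x : List Bool | x.length ≤ n ∧ ErrorPoint U A x} < 2 ^ (n - 2 ^ a - 1)) :
    ∃ (O : ℕ) (p : List Bool), O ∈ Vm cU p ∧ p.length = (n - 2 ^ a) + a + 1 ∧
      ∀ q : List Bool, q.length ≤ n → ∀ v ∈ U q, v < O := by
  classical
  set L := n - 2 ^ a with hLdef
  have hL1 : 1 ≤ L := by omega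
  have hnL : n = L + 2 ^ a := by omega
  set Sa : (List Bool → Prop) → Set (List Bool) :=
    fun P => {x : List Bool | x.length ≤ n ∧ P x} with hSa
  have hfin : ∀ P, (Sa P).Finite := fun P =>
    Set.Finite.subset (finite_len_le n) (fun x hx => hx.1)
  have hpart : ∀ P Q : List Bool → Prop,
      (Sa P).ncard = (Sa fun x => P x ∧ Q x).ncard + (Sa fun x => P x ∧ ¬ Q x).ncard := by
    intro P Q
    have hdisj : Disjoint (Sa fun x => P x ∧ Q x) (Sa fun x => P x ∧ ¬ Q x) := by
      rw [Set.disjoint_left]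
      rintro x ⟨_, _, hq⟩ ⟨_, _, hnq⟩
      exact hnq hq
    have hu : Sa P = (Sa fun x => P x ∧ Q x) ∪ (Sa fun x => P x ∧ ¬ Q x) := by
      ext x
      constructor
      · rintro ⟨hl, hp⟩
        by_cases hq : Q x
        · exact Or.inl ⟨hl, hp, hq⟩
        · exact Or.inr ⟨hl, hp, hq⟩
      · rintro (⟨hl, hp, _⟩ | ⟨hl, hp, _⟩) <;> exact ⟨hl, hp⟩
    rw [hu, Set.ncard_union_eq hdisj (hfin _) (hfin _)]
  have hcongr : ∀ P Q : List Bool → Prop, (∀ x, x.length ≤ n → (P x ↔ Q x)) →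
      Sa P = Sa Q := by
    intro P Q h
    ext x
    exact ⟨fun ⟨hl, hp⟩ => ⟨hl, (h x hl).1 hp⟩, fun ⟨hl, hq⟩ => ⟨hl, (h x hl).2 hq⟩⟩
  have hmono : ∀ P Q : List Bool → Prop, (∀ x, x.length ≤ n → P x → Q x) →
      (Sa P).ncard ≤ (Sa Q).ncard := by
    intro P Q h
    exact Set.ncard_le_ncard (fun x hx => ⟨hx.1, h x hx.1 hx.2⟩) (hfin _)
  -- abbreviations for the cardinalities
  set B := (Sa fun q => (U q).Dom).ncard with hB
  set T := (Sa fun x => true ∈ A x).ncard with hT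
  set F := (Sa fun x => false ∈ A x).ncard with hF
  set dd := (Sa fun x => ¬(A x).Dom).ncard with hdd
  set G := (Sa fun x => (U x).Dom ∧ true ∈ A x).ncard with hG
  set e1 := (Sa fun x => true ∈ A x ∧ ¬(U x).Dom).ncard with he1
  set e2 := (Sa fun x => (U x).Dom ∧ ¬ true ∈ A x).ncard with he2
  set E := (Sa fun x => ErrorPoint U A x).ncard with hEdef
  have hEc : E < 2 ^ (L - 1) := hE
  -- identities
  have hid1a : B = G + e2 := hpart _ _
  have hid1b : T = G + e1 := by
    have hswap : (Sa fun x => true ∈ A x ∧ (U x).Dom) = Sa fun x => (U x).Dom ∧ true ∈ A x :=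
      hcongr _ _ (fun x _ => and_comm)
    rw [hT, hpart (fun x => true ∈ A x) (fun x => (U x).Dom), hswap, ← hG, ← he1]
  have hid2 : (Sa fun _ => True).ncard = T + F + dd := by
    rw [hpart (fun _ => True) (fun x => (A x).Dom)]
    have h2 : (Sa fun x => True ∧ (A x).Dom).ncard = T + F := by
      rw [hpart (fun x => True ∧ (A x).Dom) (fun x => true ∈ A x)]
      have hTeq : (Sa fun x => (True ∧ (A x).Dom) ∧ true ∈ A x) = Sa fun x => true ∈ A x :=
        hcongr _ _ (fun x _ => ⟨fun h => h.2, fun h => ⟨⟨trivial, Part.dom_iff_mem.2 ⟨_, h⟩⟩, h⟩⟩)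
      have hFeq : (Sa fun x => (True ∧ (A x).Dom) ∧ ¬ true ∈ A x) = Sa fun x => false ∈ A x := by
        apply hcongr
        intro x _
        constructor
        · rintro ⟨⟨_, hdom⟩, hnt⟩
          rcases part_bool_cases hdom with h | h
          · exact absurd h hnt
          · exact h
        · intro h
          exact ⟨⟨trivial, Part.dom_iff_mem.2 ⟨_, h⟩⟩, fun ht =>
            Bool.noConfusion (Part.mem_unique ht h)⟩
      rw [hTeq, hFeq, hT, hF]
    have h3 : (Sa fun x => True ∧ ¬(A x).Dom).ncard = dd := by
      rw [hdd]
      congr 1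
      exact hcongr _ _ (fun x _ => ⟨fun h => h.2, fun h => ⟨trivial, h⟩⟩)
    rw [h2, h3]
  -- error bounds
  have he2E : e2 ≤ E := by
    apply hmono
    intro x _ hx
    rintro (⟨_, ht⟩ | ⟨hnd, _⟩)
    · exact hx.2 ht
    · exact hnd hx.1
  have hde1E : dd + e1 ≤ E := by
    have hdisj : Disjoint (Sa fun x => ¬(A x).Dom) (Sa fun x => true ∈ A x ∧ ¬(U x).Dom) := by
      rw [Set.disjoint_left]
      rintro x ⟨_, hnd⟩ ⟨_, ht, _⟩
      exact hnd (Part.dom_iff_mem.2 ⟨_, ht⟩)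
    rw [hdd, he1, ← Set.ncard_union_eq hdisj (hfin _) (hfin _)]
    apply Set.ncard_le_ncard _ (hfin _)
    rintro x (⟨hl, hnd⟩ | ⟨hl, ht, hnu⟩)
    · refine ⟨hl, ?_⟩
      rintro (⟨_, ht⟩ | ⟨_, hf⟩)
      · exact hnd (Part.dom_iff_mem.2 ⟨_, ht⟩)
      · exact hnd (Part.dom_iff_mem.2 ⟨_, hf⟩)
    · refine ⟨hl, ?_⟩
      rintro (⟨hd, _⟩ | ⟨_, hf⟩)
      · exact hnu hd
      · exact Bool.noConfusion (Part.mem_unique ht hf)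
  -- the total count
  have hMS : (strs n).length = (Sa fun _ => True).ncard := by
    have : (Sa fun _ => True) = ↑(strs n).toFinset := by
      ext x
      simp [hSa, mem_strs]
    rw [this, Set.ncard_coe_finset, List.toFinset_card_of_nodup (nodup_strs n)]
  -- the offset value
  set s' := 2 ^ (L - 1) + (dd + e1) - e2 with hs'
  have hs1 : 1 ≤ s' := by omega
  have h2L : 2 ^ L = 2 ^ (L - 1) + 2 ^ (L - 1) := by
    conv_lhs => rw [show L = (L - 1) + 1 by omega]
    rw [pow_succ]
    omega
  have hs2 : s' < 2 ^ L := by omega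
  -- the input string
  set r := toBits L s' with hrdef
  have hrlen : r.length = L := toBits_length L s'
  have hrval : bval r = s' := bval_toBits L s' hs2
  set p := List.replicate a false ++ true :: r with hpdef
  have hparse : parse p = (a, r) := parse_spec a r
  have hplen : p.length = L + a + 1 := by
    rw [hpdef]
    simp [hrlen]
    omega
  have hnOf : nOf p = n := by
    rw [nOf, hparse]
    simp only []
    rw [hrlen]
    omega
  have hmaster : B + F + s' = (Sa fun _ => True).ncard + 2 ^ (L - 1) := by omega
  have htgt : tgt p = B + F := by
    rw [tgt, hparse]
    simp only []
    rw [hnOf, hrlen, hrval, hMS]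
    omega
  have hcA' : cAOf p = cA := by
    rw [cAOf, hnOf, hn1, Denumerable.ofNat_encode]
  -- halting time witnesses
  have hDQex : ∀ q : List Bool, ∃ k, ((U q).Dom → (evaln k cU (encode q)).isSome) := by
    intro q
    by_cases h : (U q).Dom
    · have hv : encode ((U q).get h) ∈ eval cU (encode q) := by
        rw [hcU]
        exact Part.mem_map _ (Part.get_mem h)
      obtain ⟨k, hk⟩ := evaln_complete.1 hv
      rw [Option.mem_def] at hk
      exact ⟨k, fun _ => by rw [hk]; rfl⟩
    · exact ⟨0, fun h' => absurd h' h⟩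
  have hFQex : ∀ x : List Bool, ∃ k, (false ∈ A x → evaln k cA (encode x) = some 0) := by
    intro x
    by_cases h : false ∈ A x
    · have hv : (0 : ℕ) ∈ eval cA (encode x) := by
        rw [hcA]
        exact Part.mem_map _ h
      obtain ⟨k, hk⟩ := evaln_complete.1 hv
      exact ⟨k, fun _ => hk⟩
    · exact ⟨0, fun h' => absurd h' h⟩
  choose fk hfk using hDQex
  choose gk hgk using hFQex
  set t : ℕ := max (((strs n).map fk).foldr max 0) (((strs n).map gk).foldr max 0) with ht
  have hfkt : ∀ q : List Bool, q.length ≤ n → fk q ≤ t := by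
    intro q hq
    refine le_trans (le_foldr_max ?_) (le_max_left _ _)
    exact List.mem_map_of_mem (f := fk) (mem_strs.2 hq)
  have hgkt : ∀ q : List Bool, q.length ≤ n → gk q ≤ t := by
    intro q hq
    refine le_trans (le_foldr_max ?_) (le_max_right _ _)
    exact List.mem_map_of_mem (f := gk) (mem_strs.2 hq)
  -- soundness of counts
  have hsound : ∀ u : ℕ, ∀ q : List Bool, (evaln u cU (encode q)).isSome → (U q).Dom := by
    intro u q hq
    obtain ⟨v, hv⟩ := Option.isSome_iff_exists.1 hq
    have hv' := evaln_sound (k := u) (c := cU) (n := encode q) (x := v) hv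
    rw [hcU] at hv'
    obtain ⟨w, hw, _⟩ := (Part.mem_map_iff _).1 hv'
    exact Part.dom_iff_mem.2 ⟨w, hw⟩
  have hfsound : ∀ u : ℕ, ∀ x : List Bool, evaln u cA (encode x) = some 0 → false ∈ A x := by
    intro u x hx
    have hv' := evaln_sound (k := u) (c := cA) (n := encode x) (x := 0) hx
    rw [hcA] at hv'
    obtain ⟨b, hb, hbe⟩ := (Part.mem_map_iff _).1 hv'
    cases b
    · exact hb
    · exact absurd hbe (by decide)
  -- counts are exact at time t
  have hht : hcount cU n t = B := by
    rw [hcount_eq_ncard, hB]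
    congr 1
    ext q
    constructor
    · rintro ⟨hl, hq⟩
      exact ⟨hl, hsound t q hq⟩
    · rintro ⟨hl, hq⟩
      refine ⟨hl, ?_⟩
      obtain ⟨v, hv⟩ := Option.isSome_iff_exists.1 (hfk q hq)
      rw [evaln_mono (hfkt q hl) hv]
      rfl
  have hft : fcount cA n t = F := by
    rw [fcount_eq_ncard, hF]
    congr 1
    ext x
    constructor
    · rintro ⟨hl, hx⟩
      exact ⟨hl, hfsound t x hx⟩
    · rintro ⟨hl, hx⟩
      exact ⟨hl, evaln_mono (hgkt x hl) (hgk x hx)⟩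
  -- the machine halts on p
  have hstept : step cU p t = some (vmax cU n t) := by
    rw [step, hnOf, hcA', hht, hft, htgt, if_pos rfl]
  have hdomV : (Vm cU p).Dom := by
    rw [Vm, Nat.rfindOpt_dom]
    exact ⟨t, vmax cU n t, hstept⟩
  refine ⟨(Vm cU p).get hdomV, p, Part.get_mem hdomV, hplen, ?_⟩
  -- analysis of the found time
  obtain ⟨t', ht'⟩ := Nat.rfindOpt_spec (Part.get_mem hdomV)
  rw [Option.mem_def, step, hnOf, hcA'] at ht'
  by_cases hcond : hcount cU n t' + fcount cA n t' = tgt p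
  swap
  · rw [if_neg hcond] at ht'
    exact absurd ht' (by simp)
  rw [if_pos hcond] at ht'
  have hOval : (Vm cU p).get hdomV = vmax cU n t' := by
    injection ht' with h
    exact h.symm
  -- counts at t' are also exact
  have hle1 : hcount cU n t' ≤ B := by
    rw [hcount_eq_ncard, hB]
    exact Set.ncard_le_ncard (fun q hq => ⟨hq.1, hsound t' q hq.2⟩) (hfin _)
  have hle2 : fcount cA n t' ≤ F := by
    rw [fcount_eq_ncard, hF]
    exact Set.ncard_le_ncard (fun x hx => ⟨hx.1, hfsound t' x hx.2⟩) (hfin _)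
  have hexact : hcount cU n t' = B := by
    rw [htgt] at hcond
    omega
  have hfull : {q : List Bool | q.length ≤ n ∧ ((evaln t' cU (encode q)).isSome : Prop)}
      = Sa fun q => (U q).Dom := by
    apply Set.eq_of_subset_of_ncard_le
    · exact fun q hq => ⟨hq.1, hsound t' q hq.2⟩
    · rw [← hB, ← hexact, hcount_eq_ncard]
    · exact hfin _
  -- final claim
  intro q hq v hv
  have hqD : q ∈ Sa fun q => (U q).Dom := ⟨hq, Part.dom_iff_mem.2 ⟨v, hv⟩⟩
  rw [← hfull] at hqD
  obtain ⟨w, hw⟩ := Option.isSome_iff_exists.1 hqD.2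
  have hwe := evaln_sound (k := t') (c := cU) (n := encode q) (x := w) hw
  rw [hcU] at hwe
  obtain ⟨v', hv', hv'e⟩ := (Part.mem_map_iff _).1 hwe
  have hwv : w = v := by
    rw [← hv'e, Part.mem_unique hv' hv, Encodable.encode_nat]
  have hwmem : w ∈ (strs n).filterMap fun q' => evaln t' cU (encode q') := by
    rw [List.mem_filterMap]
    exact ⟨q, mem_strs.2 hq, hw⟩
  have hmax := le_foldr_max hwmem
  rw [hOval, vmax]
  omega

lemma KU_le {W : List Bool →. ℕ} {m : ℕ} {p : List Bool} (h : m ∈ W p) :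
    KU W m ≤ (p.length : ℕ∞) :=
  sInf_le ⟨p, h, rfl⟩

lemma le_KU {W : List Bool →. ℕ} {m n : ℕ} (h : ∀ p : List Bool, m ∈ W p → n < p.length) :
    ((n : ℕ∞) + 1) ≤ KU W m := by
  apply le_sInf
  rintro l ⟨p, hm, hl⟩
  rw [← hl]
  have := h p hm
  exact_mod_cast this

lemma exists_code_graph {σ : Type} [Primcodable σ] {f : List Bool →. σ} (hf : Partrec f) :
    ∃ c : Code, ∀ p : List Bool, eval c (encode p) = (f p).map encode := by
  obtain ⟨c, hc⟩ := Nat.Partrec.Code.exists_code.1 hf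
  refine ⟨c, fun p => ?_⟩
  rw [hc]
  simp [Encodable.encodek]

end LimsupAux

/-- for an optimal machine `U` there is a single `ε > 0` such that every
partial computable `A` has error rate at least `ε` for infinitely many `n`. -/
theorem limsup_error_rate_uniform (U : List Bool →. ℕ) (hU : OptimalMachine U) :
    ∃ ε : ℝ, 0 < ε ∧ ∀ A : List Bool →. Bool, Partrec A →
      ∀ N : ℕ, ∃ n ≥ N, ε ≤ errRate U A n := by
  classical
  obtain ⟨hUp, hopt⟩ := hU
  obtain ⟨cU, hcU⟩ := LimsupAux.exists_code_graph hUp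
  obtain ⟨cst, hKV⟩ := hopt (LimsupAux.Vm cU) (LimsupAux.partrec_Vm cU)
  set a := cst + 1 with ha
  have hac : a + cst + 1 ≤ 2 ^ a := by
    have h1 : cst < 2 ^ cst := Nat.lt_two_pow_self
    have h2 : 2 ^ a = 2 * 2 ^ cst := by rw [ha, pow_succ]; ring
    omega
  refine ⟨((2 : ℝ) ^ (2 ^ a + 2))⁻¹, by positivity, ?_⟩
  intro A hA N
  by_contra hcon
  push_neg at hcon
  obtain ⟨cA, hcA⟩ := LimsupAux.exists_code_graph hA
  set n := Nat.pair (Encodable.encode cA) (max N (2 ^ a + 1)) with hn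
  have hnN : N ≤ n := le_trans (le_max_left _ _) (Nat.right_le_pair _ _)
  have hjn : 2 ^ a + 1 ≤ n := le_trans (le_max_right _ _) (Nat.right_le_pair _ _)
  have hn1 : (Nat.unpair n).1 = Encodable.encode cA := by rw [hn, Nat.unpair_pair]
  have herr := hcon n hnN
  have hE : Set.ncard {x : List Bool | x.length ≤ n ∧ ErrorPoint U A x}
      < 2 ^ (n - 2 ^ a - 1) := by
    rw [errRate] at herr
    have h2 : (0 : ℝ) < 2 ^ (n + 1) := by positivity
    rw [div_lt_iff₀ h2] at herr
    have hpow : ((2 : ℝ) ^ (2 ^ a + 2))⁻¹ * 2 ^ (n + 1) = 2 ^ (n - 2 ^ a - 1) := by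
      rw [inv_mul_eq_div, div_eq_iff (by positivity), ← pow_add]
      congr 1
      omega
    rw [hpow] at herr
    have hcast : ((2 : ℝ) ^ (n - 2 ^ a - 1)) = ((2 ^ (n - 2 ^ a - 1) : ℕ) : ℝ) := by
      push_cast
      ring
    rw [hcast] at herr
    exact_mod_cast herr
  obtain ⟨O, p, hOmem, hplen, hbig⟩ := LimsupAux.key U A cU cA hcU hcA a n hn1 hjn hE
  have hup : KU U O ≤ (((n - 2 ^ a) + a + 1 + cst : ℕ) : ℕ∞) := by
    calc KU U O ≤ KU (LimsupAux.Vm cU) O + (cst : ℕ∞) := hKV O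
    _ ≤ (p.length : ℕ∞) + (cst : ℕ∞) := add_le_add_left (LimsupAux.KU_le hOmem) _
    _ = _ := by rw [hplen]; norm_cast
  have hlow : ((n : ℕ∞) + 1) ≤ KU U O := by
    apply LimsupAux.le_KU
    intro q hq
    by_contra hlen
    push_neg at hlen
    exact absurd rfl (ne_of_lt (hbig q hlen O hq))
  have hle : ((n : ℕ∞) + 1) ≤ (((n - 2 ^ a) + a + 1 + cst : ℕ) : ℕ∞) := le_trans hlow hup
  have hnat : n + 1 ≤ (n - 2 ^ a) + a + 1 + cst := by exact_mod_cast hle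
  omega
end

section
/- Let U be an optimal machine. For every rational ε > 0 there exists a partial computable function A : List Bool →. Bool such that liminf_{n→∞} ε_n(A) ≤ ε. -/
open Filter

namespace SmallLiminfAux

open Nat.Partrec (Code)
open Nat.Partrec.Code
open Encodable

def hkB (c : Code) (k : ℕ) (p : List Bool) : Bool :=
  (evaln k c (encode p)).isSome

def allStr : ℕ → List (List Bool)
  | 0 => [[]]
  | j + 1 => [] :: ((allStr j).map (true :: ·) ++ (allStr j).map (false :: ·))

theorem mem_allStr : ∀ j (p : List Bool), p ∈ allStr j ↔ p.length ≤ j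
  | 0, p => by cases p <;> simp [allStr]
  | j+1, p => by
      cases p with
      | nil => simp [allStr]
      | cons b q =>
        have ih := mem_allStr j q
        cases b <;>
          simp [allStr, List.mem_append, List.mem_map, ih, Nat.succ_le_succ_iff]

theorem nodup_allStr : ∀ j, (allStr j).Nodup
  | 0 => by simp [allStr]
  | j+1 => by
      have ih := nodup_allStr j
      have hinj1 : Function.Injective (fun p : List Bool => true :: p) := by
        intro a b h; simpa using h
      have hinj2 : Function.Injective (fun p : List Bool => false :: p) := by
        intro a b h; simpa using h
      refine List.nodup_cons.2 ⟨?_, List.Nodup.append (ih.map hinj1) (ih.map hinj2) ?_⟩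
      · simp [List.mem_append, List.mem_map]
      · intro x hx1 hx2
        rcases List.mem_map.1 hx1 with ⟨a, -, rfl⟩
        rcases List.mem_map.1 hx2 with ⟨b, -, hb⟩
        simp at hb

theorem length_allStr : ∀ j, (allStr j).length = 2 ^ (j+1) - 1
  | 0 => by simp [allStr]
  | j+1 => by
      have ih := length_allStr j
      have h1 : 1 ≤ 2 ^ (j+1) := Nat.one_le_two_pow
      have h2 : 2 ^ (j+1+1) = 2 * 2 ^ (j+1) := by ring
      simp [allStr, ih]
      omega

def cnt (c : Code) (k j : ℕ) : ℕ := ((allStr j).filter (hkB c k)).length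

def Kf (qa qb j : ℕ) : ℕ := (qa * 2 ^ (j + 1) + (qb - 1)) / qb

def condB (c : Code) (qa qb N0 t : ℕ) (n k : ℕ) : Bool :=
  (List.range (n + t + 1)).all fun j => decide (j < N0) || decide (Kf qa qb j ≤ cnt c k j)

def Af (c : Code) (qa qb N0 t : ℕ) : List Bool →. Bool := fun x =>
  Nat.rfindOpt fun k => bif condB c qa qb N0 t x.length k then some (hkB c k x) else none

theorem condB_iff {c qa qb N0 t n k} :
    condB c qa qb N0 t n k = true ↔ ∀ j < n + t + 1, N0 ≤ j → Kf qa qb j ≤ cnt c k j := by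
  simp [condB, List.all_eq_true, List.mem_range, Decidable.or_iff_not_imp_left]

-- semantics
theorem hkB_mono {c k k' p} (hkk : k ≤ k') (h : hkB c k p = true) : hkB c k' p = true := by
  rcases Option.isSome_iff_exists.1 h with ⟨v, hv⟩
  exact Option.isSome_iff_exists.2 ⟨v, evaln_mono hkk hv⟩

section sem
variable {U : List Bool →. ℕ} {c : Code}

theorem hkB_dom
    (hc : eval c = fun n => Part.bind (decode (α := List Bool) n) fun a => (U a).map encode)
    {k p} (h : hkB c k p = true) : (U p).Dom := by
  rcases Option.isSome_iff_exists.1 h with ⟨v, hv⟩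
  have hmem : v ∈ eval c (encode p) := evaln_sound hv
  rw [hc] at hmem
  simp [encodek] at hmem
  exact Part.dom_iff_mem.2 ⟨v, hmem⟩

theorem hkB_total
    (hc : eval c = fun n => Part.bind (decode (α := List Bool) n) fun a => (U a).map encode)
    {p} (h : (U p).Dom) : ∃ k, hkB c k p = true := by
  have h1 : (U p).get h ∈ U p := Part.get_mem h
  have h2 : encode ((U p).get h) ∈ eval c (encode p) := by
    rw [hc]; simp [encodek]
    exact h1
  rcases evaln_complete.1 h2 with ⟨k, hk⟩
  exact ⟨k, Option.isSome_iff_exists.2 ⟨_, hk⟩⟩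

end sem

-- foldl helpers
theorem foldl_cnt {α} (f : α → Bool) : ∀ (l : List α) (s : ℕ),
    l.foldl (fun acc q => acc + (bif f q then 1 else 0)) s = s + (l.filter f).length
  | [], s => by simp
  | a :: l, s => by
      by_cases h : f a <;> simp [h, foldl_cnt f l] <;> omega

theorem foldl_all {α} (f : α → Bool) : ∀ (l : List α) (b : Bool),
    l.foldl (fun b a => b && f a) b = (b && l.all f)
  | [], b => by simp
  | a :: l, b => by
      simp [foldl_all f l, Bool.and_assoc]

-- primrec
theorem hkB_primrec (c : Code) : Primrec₂ (hkB c) :=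
  (Primrec.option_isSome.comp
    (primrec_evaln.comp
      ((Primrec.fst.pair (Primrec.const c)).pair (Primrec.encode.comp Primrec.snd)))).to₂

theorem allStr_primrec : Primrec allStr := by
  have hmap1 : Primrec₂ fun (_ : ℕ × List (List Bool)) (p : List Bool) => true :: p :=
    (Primrec.list_cons.comp (Primrec.const true) Primrec.snd).to₂
  have hmap2 : Primrec₂ fun (_ : ℕ × List (List Bool)) (p : List Bool) => false :: p :=
    (Primrec.list_cons.comp (Primrec.const false) Primrec.snd).to₂
  have hf : Primrec₂ fun (_ : ℕ) (ih : List (List Bool)) =>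
      ([] : List Bool) :: (ih.map (true :: ·) ++ ih.map (false :: ·)) :=
    (Primrec.list_cons.comp (Primrec.const ([] : List Bool))
      (Primrec.list_append.comp
        (Primrec.list_map Primrec.snd hmap1)
        (Primrec.list_map Primrec.snd hmap2))).to₂
  have H := Primrec.nat_rec₁ ([[]] : List (List Bool)) hf
  exact H.of_eq (by
    intro j; induction j with
    | zero => rfl
    | succ n ih => simp [allStr, ← ih])

theorem cnt_primrec (c : Code) : Primrec₂ (cnt c) := by
  have hh : Primrec₂ fun (p : ℕ × ℕ) (s : ℕ × List Bool) =>
      s.1 + (bif hkB c p.1 s.2 then 1 else 0) :=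
    (Primrec.nat_add.comp (Primrec.fst.comp Primrec.snd)
      (Primrec.cond
        ((hkB_primrec c).comp (Primrec.fst.comp Primrec.fst) (Primrec.snd.comp Primrec.snd))
        (Primrec.const 1) (Primrec.const 0))).to₂
  have H : Primrec fun p : ℕ × ℕ =>
      (allStr p.2).foldl (fun acc q => acc + (bif hkB c p.1 q then 1 else 0)) 0 :=
    Primrec.list_foldl (allStr_primrec.comp Primrec.snd) (Primrec.const 0) hh
  have H2 : Primrec fun p : ℕ × ℕ => cnt c p.1 p.2 :=
    H.of_eq (fun p => by rw [foldl_cnt]; simp [cnt])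
  exact H2

theorem pow2_primrec : Primrec fun j : ℕ => 2 ^ j := by
  have H := Primrec.nat_rec₁ (1 : ℕ)
    ((Primrec.nat_add.comp Primrec.snd Primrec.snd).to₂ :
      Primrec₂ fun (_ : ℕ) (ih : ℕ) => ih + ih)
  exact H.of_eq (by
    intro j; induction j with
    | zero => rfl
    | succ n ih => simp [pow_succ, ← ih]; ring)

theorem Kf_primrec (qa qb : ℕ) : Primrec (Kf qa qb) :=
  Primrec.nat_div.comp
    (Primrec.nat_add.comp
      (Primrec.nat_mul.comp (Primrec.const qa) (pow2_primrec.comp Primrec.succ))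
      (Primrec.const (qb - 1)))
    (Primrec.const qb)

theorem condB_primrec (c : Code) (qa qb N0 t : ℕ) : Primrec₂ (condB c qa qb N0 t) := by
  have hh : Primrec₂ fun (p : ℕ × ℕ) (s : Bool × ℕ) =>
      s.1 && (decide (s.2 < N0) || decide (Kf qa qb s.2 ≤ cnt c p.2 s.2)) :=
    (Primrec.and.comp (Primrec.fst.comp Primrec.snd)
      (Primrec.or.comp
        (Primrec.nat_lt.comp (Primrec.snd.comp Primrec.snd) (Primrec.const N0)).decide
        (Primrec.nat_le.comp ((Kf_primrec qa qb).comp (Primrec.snd.comp Primrec.snd))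
          ((cnt_primrec c).comp (Primrec.snd.comp Primrec.fst)
            (Primrec.snd.comp Primrec.snd))).decide)).to₂
  have H : Primrec fun p : ℕ × ℕ =>
      (List.range (p.1 + t + 1)).foldl
        (fun b j => b && (decide (j < N0) || decide (Kf qa qb j ≤ cnt c p.2 j))) true :=
    Primrec.list_foldl
      (Primrec.list_range.comp
        (Primrec.nat_add.comp (Primrec.nat_add.comp Primrec.fst (Primrec.const t))
          (Primrec.const 1)))
      (Primrec.const true) hh
  have H2 : Primrec fun p : ℕ × ℕ => condB c qa qb N0 t p.1 p.2 :=
    H.of_eq (fun p => by rw [foldl_all]; simp [condB])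
  exact H2

theorem Af_partrec (c : Code) (qa qb N0 t : ℕ) : Partrec (Af c qa qb N0 t) := by
  have hcond : Primrec fun p : List Bool × ℕ => condB c qa qb N0 t p.1.length p.2 :=
    (condB_primrec c qa qb N0 t).comp (Primrec.list_length.comp Primrec.fst) Primrec.snd
  have hval : Primrec fun p : List Bool × ℕ => some (hkB c p.2 p.1) :=
    Primrec.option_some.comp ((hkB_primrec c).comp Primrec.snd Primrec.fst)
  have G : Primrec fun p : List Bool × ℕ =>
      bif condB c qa qb N0 t p.1.length p.2 then some (hkB c p.2 p.1) else none :=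
    Primrec.cond hcond hval (Primrec.const none)
  exact Partrec.rfindOpt (G.to₂.to_comp)

theorem Af_eq {c qa qb N0 t} (hex : ∀ n, ∃ k, condB c qa qb N0 t n k = true) (x : List Bool) :
    Af c qa qb N0 t x = Part.some (hkB c (Nat.find (hex x.length)) x) := by
  apply Part.eq_some_iff.2
  have hspec := Nat.find_spec (hex x.length)
  refine Part.mem_bind_iff.2 ⟨Nat.find (hex x.length), ?_, ?_⟩
  · refine Nat.mem_rfind.2 ⟨?_, ?_⟩
    · simp [hspec]
    · intro m hm
      have := Nat.find_min (hex x.length) hm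
      simp only [Bool.not_eq_true] at this
      simp [this]
  · simp [hspec]

def F (j : ℕ) : Finset (List Bool) := (allStr j).toFinset

theorem mem_F {j : ℕ} {p : List Bool} : p ∈ F j ↔ p.length ≤ j := by
  simp [F, mem_allStr]

theorem card_F (j : ℕ) : (F j).card = 2 ^ (j + 1) - 1 := by
  rw [F, List.toFinset_card_of_nodup (nodup_allStr j), length_allStr]

theorem cnt_eq (c : Code) (k j : ℕ) :
    cnt c k j = ((F j).filter (fun p => hkB c k p = true)).card := by
  rw [cnt, F, ← List.toFinset_filter,
    List.toFinset_card_of_nodup ((nodup_allStr j).filter _)]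

theorem cnt_mono {c : Code} {j k k' : ℕ} (hkk : k ≤ k') : cnt c k j ≤ cnt c k' j := by
  rw [cnt_eq, cnt_eq]
  refine Finset.card_le_card fun x hx => ?_
  rcases Finset.mem_filter.1 hx with ⟨h1, h2⟩
  exact Finset.mem_filter.2 ⟨h1, hkB_mono hkk h2⟩

section withU
variable (U : List Bool →. ℕ) [DecidablePred fun p : List Bool => (U p).Dom]

def DF (j : ℕ) : Finset (List Bool) := (F j).filter (fun p => (U p).Dom)

theorem haltRate_eq (j : ℕ) : haltRate U j = ((DF U j).card : ℝ) / 2 ^ (j + 1) := by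
  rw [haltRate]
  congr 2
  rw [show {x : List Bool | x.length ≤ j ∧ (U x).Dom} = ↑(DF U j) by
    ext x; simp [DF, mem_F]]
  rw [Set.ncard_coe_finset]

theorem errRate_eq (A : List Bool →. Bool) [DecidablePred (ErrorPoint U A)] (j : ℕ) :
    errRate U A j = (((F j).filter (ErrorPoint U A)).card : ℝ) / 2 ^ (j + 1) := by
  rw [errRate]
  congr 2
  rw [show {x : List Bool | x.length ≤ j ∧ ErrorPoint U A x} =
      ↑((F j).filter (ErrorPoint U A)) by ext x; simp [mem_F, and_comm]]
  rw [Set.ncard_coe_finset]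

variable {U}

theorem exists_cond {c : Code}
    (hc : eval c = fun n => Part.bind (decode (α := List Bool) n) fun a => (U a).map encode)
    (qa qb N0 t : ℕ)
    (hN : ∀ j, N0 ≤ j → Kf qa qb j ≤ (DF U j).card) :
    ∀ n, ∃ k, condB c qa qb N0 t n k = true := by
  classical
  intro n
  have step : ∀ j, ∃ k, (DF U j).card ≤ cnt c k j := by
    intro j
    set g : List Bool → ℕ := fun p => if h : ∃ k, hkB c k p = true then Nat.find h else 0
      with hg
    refine ⟨(DF U j).sup g, ?_⟩
    rw [cnt_eq]
    apply Finset.card_le_card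
    intro p hp
    have hdom : (U p).Dom := (Finset.mem_filter.1 hp).2
    have hpF : p ∈ F j := (Finset.mem_filter.1 hp).1
    have hex2 : ∃ k, hkB c k p = true := hkB_total hc hdom
    have h1 : hkB c (g p) p = true := by
      rw [hg]; simp only [dif_pos hex2]; exact Nat.find_spec hex2
    exact Finset.mem_filter.2 ⟨hpF, hkB_mono (Finset.le_sup hp) h1⟩
  choose f hf using step
  refine ⟨(Finset.range (n + t + 1)).sup f, condB_iff.2 ?_⟩
  intro j hj hNj
  calc Kf qa qb j ≤ (DF U j).card := hN j hNj
    _ ≤ cnt c (f j) j := hf j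
    _ ≤ cnt c ((Finset.range (n + t + 1)).sup f) j :=
        cnt_mono (Finset.le_sup (Finset.mem_range.2 hj))

end withU

theorem Kf_le {q : ℚ} (hq : 0 < q) {j H : ℕ} (h : q * 2 ^ (j + 1) ≤ (H : ℚ)) :
    Kf q.num.toNat q.den j ≤ H := by
  have hqb : 0 < q.den := q.pos
  have hqa : (q.num.toNat : ℚ) = q * q.den := by
    have h1 : ((q.num.toNat : ℚ)) = (q.num : ℚ) := by
      exact_mod_cast Int.toNat_of_nonneg (Rat.num_nonneg.2 hq.le)
    have h2 : q * (q.den : ℚ) = (q.num : ℚ) := by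
      have hd : ((q.den : ℚ)) ≠ 0 := by
        exact_mod_cast Nat.pos_iff_ne_zero.1 q.pos
      calc q * (q.den : ℚ) = ((q.num : ℚ) / q.den) * q.den := by rw [Rat.num_div_den q]
        _ = (q.num : ℚ) := div_mul_cancel₀ _ hd
    rw [h1, ← h2]
  have key : q.num.toNat * 2 ^ (j + 1) ≤ q.den * H := by
    have : ((q.num.toNat * 2 ^ (j + 1) : ℕ) : ℚ) ≤ ((q.den * H : ℕ) : ℚ) := by
      push_cast
      rw [hqa]
      calc q * q.den * 2 ^ (j + 1) = (q * 2 ^ (j + 1)) * q.den := by ring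
        _ ≤ (H : ℚ) * q.den := by
            apply mul_le_mul_of_nonneg_right h (by positivity)
        _ = (q.den : ℚ) * H := by ring
    exact_mod_cast this
  rw [Kf, Nat.div_le_iff_le_mul_add_pred hqb]
  omega

theorem le_Kf {q : ℚ} (hq : 0 < q) (j : ℕ) :
    q * 2 ^ (j + 1) ≤ (Kf q.num.toNat q.den j : ℚ) := by
  have hqb : 0 < q.den := q.pos
  have hqa : (q.num.toNat : ℚ) = q * q.den := by
    have h1 : ((q.num.toNat : ℚ)) = (q.num : ℚ) := by
      exact_mod_cast Int.toNat_of_nonneg (Rat.num_nonneg.2 hq.le)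
    have h2 : q * (q.den : ℚ) = (q.num : ℚ) := by
      have hd : ((q.den : ℚ)) ≠ 0 := by
        exact_mod_cast Nat.pos_iff_ne_zero.1 q.pos
      calc q * (q.den : ℚ) = ((q.num : ℚ) / q.den) * q.den := by rw [Rat.num_div_den q]
        _ = (q.num : ℚ) := div_mul_cancel₀ _ hd
    rw [h1, ← h2]
  have key : q.num.toNat * 2 ^ (j + 1) ≤ q.den * Kf q.num.toNat q.den j := by
    have h1 := Nat.div_add_mod (q.num.toNat * 2 ^ (j + 1) + (q.den - 1)) q.den
    have h2 : (q.num.toNat * 2 ^ (j + 1) + (q.den - 1)) % q.den < q.den :=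
      Nat.mod_lt _ hqb
    rw [Kf]
    omega
  have key2 : ((q.num.toNat * 2 ^ (j + 1) : ℕ) : ℚ) ≤ ((q.den * Kf q.num.toNat q.den j : ℕ) : ℚ) := by
    exact_mod_cast key
  push_cast at key2
  rw [hqa] at key2
  have hd : (0:ℚ) < q.den := by exact_mod_cast hqb
  apply le_of_mul_le_mul_right _ hd
  calc q * 2 ^ (j + 1) * q.den = q * q.den * 2 ^ (j + 1) := by ring
    _ ≤ (q.den : ℚ) * (Kf q.num.toNat q.den j : ℚ) := key2
    _ = (Kf q.num.toNat q.den j : ℚ) * q.den := by ring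


end SmallLiminfAux

open SmallLiminfAux

/-- for every rational `ε > 0` there is a partial computable `A` whose
liminf error rate is at most `ε`. -/
theorem exists_small_liminf_error_rate (U : List Bool →. ℕ) (hU : OptimalMachine U)
    (ε : ℚ) (hε : 0 < ε) :
    ∃ A : List Bool →. Bool, Partrec A ∧
      Filter.liminf (fun n => errRate U A n) Filter.atTop ≤ (ε : ℝ) := by
  classical
  obtain ⟨hUP, -⟩ := hU
  obtain ⟨c, hc⟩ := Nat.Partrec.Code.exists_code.1 hUP
  have hεR : (0:ℝ) < (ε:ℝ) := by exact_mod_cast hε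
  have herrnonneg : ∀ (A : List Bool →. Bool) n, 0 ≤ errRate U A n := fun A n =>
    div_nonneg (Nat.cast_nonneg _) (by positivity)
  have hrnonneg : ∀ n, 0 ≤ haltRate U n := fun n =>
    div_nonneg (Nat.cast_nonneg _) (by positivity)
  have hrle : ∀ n, haltRate U n ≤ 1 := by
    intro n
    rw [haltRate_eq U n, div_le_one (by positivity)]
    have h1 : (DF U n).card ≤ 2 ^ (n+1) := by
      calc (DF U n).card ≤ (F n).card := Finset.card_le_card (Finset.filter_subset _ _)
        _ ≤ 2 ^ (n+1) := by rw [card_F]; exact Nat.sub_le _ _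
    calc ((DF U n).card : ℝ) ≤ ((2 ^ (n+1) : ℕ) : ℝ) := by exact_mod_cast h1
      _ = 2 ^ (n+1) := by push_cast; ring
  by_cases hLε : Filter.liminf (fun n => haltRate U n) Filter.atTop ≤ (ε : ℝ)
  · refine ⟨fun _ => Part.some false, Computable.partrec (Computable.const false), ?_⟩
    have heq : (fun n => errRate U (fun _ : List Bool => Part.some false) n)
        = fun n => haltRate U n := by
      funext n
      have hset : {x : List Bool | x.length ≤ n ∧
          ErrorPoint U (fun _ : List Bool => Part.some false) x}
          = {x : List Bool | x.length ≤ n ∧ (U x).Dom} := by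
        ext x
        simp only [Set.mem_setOf_eq, and_congr_right_iff]
        intro _
        constructor
        · intro h
          by_contra hnd
          exact h (Or.inr ⟨hnd, Part.mem_some_iff.2 rfl⟩)
        · intro hd
          rintro (⟨-, htrue⟩ | ⟨hnd, -⟩)
          · simpa using Part.mem_some_iff.1 htrue
          · exact hnd hd
      unfold errRate haltRate; rw [hset]
    rw [heq]
    exact hLε
  · push_neg at hLε
    have hLpos : 0 < Filter.liminf (fun n => haltRate U n) Filter.atTop :=
      lt_trans hεR hLε
    obtain ⟨t, ht⟩ := pow_unbounded_of_one_lt (y := (2:ℝ)) ((4:ℝ)/ε) one_lt_two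
    set δ : ℚ := ε / (4 * (t+1)) with hδdef
    have hδpos : 0 < δ := by rw [hδdef]; positivity
    have hδR : (0:ℝ) < (δ:ℝ) := by exact_mod_cast hδpos
    have hmax : max (Filter.liminf (fun n => haltRate U n) Filter.atTop - (δ:ℝ)) 0
        < Filter.liminf (fun n => haltRate U n) Filter.atTop := max_lt (by linarith) hLpos
    obtain ⟨q, hq1, hq2⟩ := exists_rat_btwn hmax
    have hqpos : 0 < q := by
      have h2 : (0:ℝ) < (q:ℝ) := lt_of_le_of_lt (le_max_right _ _) hq1
      exact_mod_cast h2
    have hLq : Filter.liminf (fun n => haltRate U n) Filter.atTop < (q:ℝ) + (δ:ℝ) := by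
      have h5 : Filter.liminf (fun n => haltRate U n) Filter.atTop - (δ:ℝ)
          ≤ max (Filter.liminf (fun n => haltRate U n) Filter.atTop - (δ:ℝ)) 0 :=
        le_max_left _ _
      linarith [lt_of_le_of_lt h5 hq1]
    obtain ⟨N0, hN0⟩ := Filter.eventually_atTop.1
      (Filter.eventually_lt_of_lt_liminf hq2 (Filter.isBoundedUnder_of ⟨0, hrnonneg⟩))
    have hKH : ∀ j, N0 ≤ j → Kf q.num.toNat q.den j ≤ (DF U j).card := by
      intro j hj
      apply Kf_le hqpos
      have h6 := hN0 j hj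
      rw [haltRate_eq U j] at h6
      have h7 : (q:ℝ) * 2 ^ (j+1) ≤ ((DF U j).card : ℝ) := by
        rw [lt_div_iff₀ (by positivity)] at h6
        linarith
      have h8 : ((q * 2 ^ (j+1) : ℚ) : ℝ) ≤ (((DF U j).card : ℕ) : ℝ) := by
        push_cast
        push_cast at h7
        linarith
      exact_mod_cast h8
    have hex : ∀ n, ∃ k, condB c q.num.toNat q.den N0 t n k = true :=
      exists_cond hc q.num.toNat q.den N0 t hKH
    refine ⟨Af c q.num.toNat q.den N0 t, Af_partrec c q.num.toNat q.den N0 t, ?_⟩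
    have hfreq : ∃ᶠ m in Filter.atTop, haltRate U m < (q:ℝ) + (δ:ℝ) :=
      Filter.frequently_lt_of_liminf_lt
        ((Filter.isBoundedUnder_of ⟨1, hrle⟩).isCoboundedUnder_ge) hLq
    apply Filter.liminf_le_of_frequently_le _
      (Filter.isBoundedUnder_of ⟨0, fun n => herrnonneg _ n⟩)
    refine (hfreq.and_eventually (Filter.eventually_ge_atTop (N0 + t + 1))).mono ?_
    rintro m ⟨hgood, hge⟩
    obtain ⟨s, rfl⟩ : ∃ s, m = s + t + 1 := ⟨m - (t+1), by omega⟩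
    have hsN0 : N0 ≤ s := by omega
    -- counting
    have hScard : ∀ n, s + 1 ≤ n →
        ((F (s+t+1)).filter
          (fun y => (U y).Dom ∧ hkB c (Nat.find (hex n)) y = false)).card
          + Kf q.num.toNat q.den (s+t+1) ≤ (DF U (s+t+1)).card := by
      intro n hn1
      have hcond := Nat.find_spec (hex n)
      have hKcnt : Kf q.num.toNat q.den (s+t+1) ≤ cnt c (Nat.find (hex n)) (s+t+1) :=
        (condB_iff.1 hcond) (s+t+1) (by omega) (by omega)
      rw [cnt_eq] at hKcnt
      have hdisj : Disjoint
          ((F (s+t+1)).filter (fun y => (U y).Dom ∧ hkB c (Nat.find (hex n)) y = false))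
          ((F (s+t+1)).filter (fun p => hkB c (Nat.find (hex n)) p = true)) := by
        rw [Finset.disjoint_left]
        intro a ha hb
        have h1 := (Finset.mem_filter.1 ha).2.2
        have h2 := (Finset.mem_filter.1 hb).2
        rw [h1] at h2
        simp at h2
      have hcup := Finset.card_union_of_disjoint hdisj
      have h9 : ((F (s+t+1)).filter (fun y => (U y).Dom ∧ hkB c (Nat.find (hex n)) y = false))
          ∪ ((F (s+t+1)).filter (fun p => hkB c (Nat.find (hex n)) p = true)) ⊆ DF U (s+t+1) := by
        intro a ha
        rcases Finset.mem_union.1 ha with ha | ha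
        · exact Finset.mem_filter.2 ⟨(Finset.mem_filter.1 ha).1, (Finset.mem_filter.1 ha).2.1⟩
        · exact Finset.mem_filter.2 ⟨(Finset.mem_filter.1 ha).1,
            hkB_dom hc (Finset.mem_filter.1 ha).2⟩
      have h10 := Finset.card_le_card h9
      omega
    have hsub : (F (s+t+1)).filter (ErrorPoint U (Af c q.num.toNat q.den N0 t))
        ⊆ F s ∪ (Finset.Icc (s+1) (s+t+1)).biUnion
            (fun n => (F (s+t+1)).filter
              (fun y => (U y).Dom ∧ hkB c (Nat.find (hex n)) y = false)) := by
      intro x hx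
      rcases Finset.mem_filter.1 hx with ⟨hxF, hxe⟩
      have hxlen : x.length ≤ s + t + 1 := mem_F.1 hxF
      by_cases hlen : x.length ≤ s
      · exact Finset.mem_union_left _ (mem_F.2 hlen)
      · push_neg at hlen
        refine Finset.mem_union_right _
          (Finset.mem_biUnion.2 ⟨x.length, Finset.mem_Icc.2 ⟨hlen, hxlen⟩, ?_⟩)
        have hval := Af_eq hex x
        cases hhk : hkB c (Nat.find (hex x.length)) x with
        | true =>
            exact absurd (Or.inl ⟨hkB_dom hc hhk,
              by rw [hval, hhk]; exact Part.mem_some_iff.2 rfl⟩) hxe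
        | false =>
            have hdom : (U x).Dom := by
              by_contra hnd
              exact hxe (Or.inr ⟨hnd, by rw [hval, hhk]; exact Part.mem_some_iff.2 rfl⟩)
            exact Finset.mem_filter.2 ⟨hxF, hdom, hhk⟩
    -- to reals
    have hDF : ((DF U (s+t+1)).card : ℝ) < ((q:ℝ) + (δ:ℝ)) * 2 ^ (s+t+1+1) := by
      rw [haltRate_eq U (s+t+1)] at hgood
      exact (div_lt_iff₀ (by positivity)).1 hgood
    have hKfm : (q:ℝ) * 2 ^ (s+t+1+1) ≤ ((Kf q.num.toNat q.den (s+t+1) : ℕ) : ℝ) := by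
      have h11 := le_Kf hqpos (s+t+1)
      have h12 : ((q * 2 ^ (s+t+1+1) : ℚ) : ℝ) ≤ (((Kf q.num.toNat q.den (s+t+1) : ℕ) : ℚ) : ℝ) := by
        exact_mod_cast h11
      push_cast at h12 ⊢
      linarith
    have hgap : ((DF U (s+t+1)).card : ℝ) - ((Kf q.num.toNat q.den (s+t+1) : ℕ) : ℝ)
        ≤ (δ:ℝ) * 2 ^ (s+t+1+1) := by nlinarith [hDF, hKfm]
    have hsum : ((((F (s+t+1)).filter (ErrorPoint U (Af c q.num.toNat q.den N0 t))).card : ℕ) : ℝ)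
        ≤ 2 ^ (s+1) + ((t:ℝ)+1) * ((δ:ℝ) * 2 ^ (s+t+1+1)) := by
      have h13 := Finset.card_le_card hsub
      have h14 := Finset.card_union_le (F s)
        ((Finset.Icc (s+1) (s+t+1)).biUnion
          (fun n => (F (s+t+1)).filter
            (fun y => (U y).Dom ∧ hkB c (Nat.find (hex n)) y = false)))
      have h15 := Finset.card_biUnion_le (s := Finset.Icc (s+1) (s+t+1))
        (t := fun n => (F (s+t+1)).filter
          (fun y => (U y).Dom ∧ hkB c (Nat.find (hex n)) y = false))
      -- bound the sum
      have h16 : ∑ n ∈ Finset.Icc (s+1) (s+t+1),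
          (((F (s+t+1)).filter
            (fun y => (U y).Dom ∧ hkB c (Nat.find (hex n)) y = false)).card : ℝ)
          ≤ ((t:ℝ)+1) * ((δ:ℝ) * 2 ^ (s+t+1+1)) := by
        have h17 : ∀ n ∈ Finset.Icc (s+1) (s+t+1),
            (((F (s+t+1)).filter
              (fun y => (U y).Dom ∧ hkB c (Nat.find (hex n)) y = false)).card : ℝ)
            ≤ (δ:ℝ) * 2 ^ (s+t+1+1) := by
          intro n hn
          have h18 := hScard n (Finset.mem_Icc.1 hn).1
          have h19 : (((F (s+t+1)).filter
              (fun y => (U y).Dom ∧ hkB c (Nat.find (hex n)) y = false)).card : ℝ)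
              + ((Kf q.num.toNat q.den (s+t+1) : ℕ) : ℝ) ≤ ((DF U (s+t+1)).card : ℝ) := by
            exact_mod_cast h18
          linarith
        calc ∑ n ∈ Finset.Icc (s+1) (s+t+1),
            (((F (s+t+1)).filter
              (fun y => (U y).Dom ∧ hkB c (Nat.find (hex n)) y = false)).card : ℝ)
            ≤ ∑ _n ∈ Finset.Icc (s+1) (s+t+1), (δ:ℝ) * 2 ^ (s+t+1+1) :=
              Finset.sum_le_sum h17
          _ = ((t:ℝ)+1) * ((δ:ℝ) * 2 ^ (s+t+1+1)) := by
              rw [Finset.sum_const, Nat.card_Icc]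
              have : s + t + 1 + 1 - (s+1) = t + 1 := by omega
              rw [this, nsmul_eq_mul]
              push_cast
              ring
      have h20 : (((F s).card : ℕ) : ℝ) ≤ 2 ^ (s+1) := by
        rw [card_F]
        have h21 : (((2:ℕ) ^ (s+1) - 1 : ℕ) : ℝ) ≤ ((2 ^ (s+1) : ℕ) : ℝ) := by
          exact_mod_cast Nat.sub_le _ _
        calc (((2:ℕ) ^ (s+1) - 1 : ℕ) : ℝ) ≤ ((2 ^ (s+1) : ℕ) : ℝ) := h21
          _ = 2 ^ (s+1) := by push_cast; ring
      have h22 : (((F (s+t+1)).filter (ErrorPoint U (Af c q.num.toNat q.den N0 t))).card : ℝ)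
          ≤ (((F s).card : ℕ) : ℝ) + ∑ n ∈ Finset.Icc (s+1) (s+t+1),
            (((F (s+t+1)).filter
              (fun y => (U y).Dom ∧ hkB c (Nat.find (hex n)) y = false)).card : ℝ) := by
        have h23 : ((F (s+t+1)).filter (ErrorPoint U (Af c q.num.toNat q.den N0 t))).card
            ≤ (F s).card + ∑ n ∈ Finset.Icc (s+1) (s+t+1),
              ((F (s+t+1)).filter
                (fun y => (U y).Dom ∧ hkB c (Nat.find (hex n)) y = false)).card := by
          calc ((F (s+t+1)).filter (ErrorPoint U (Af c q.num.toNat q.den N0 t))).card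
              ≤ _ := h13
            _ ≤ _ + _ := h14
            _ ≤ _ := by exact Nat.add_le_add_left h15 _
        exact_mod_cast h23
      linarith
    -- final arithmetic
    rw [errRate_eq U _ (s+t+1)]
    rw [div_le_iff₀ (by positivity)]
    have hpow : (2:ℝ) ^ (s+t+1+1) = 2 ^ (s+1) * 2 ^ (t+1) := by
      rw [← pow_add]
      congr 1
      omega
    have hb1 : (2:ℝ) ^ (s+1) ≤ ((ε:ℝ)/4) * 2 ^ (s+t+1+1) := by
      have h24 : (4:ℝ)/ε ≤ 2 ^ (t+1) := by
        calc (4:ℝ)/ε ≤ 2 ^ t := le_of_lt ht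
          _ ≤ 2 ^ (t+1) := by
            apply pow_le_pow_right₀ (by norm_num)
            omega
      have h25 : (2:ℝ)^(s+1) * ((4:ℝ)/ε) ≤ 2^(s+1) * 2^(t+1) :=
        mul_le_mul_of_nonneg_left h24 (by positivity)
      calc (2:ℝ)^(s+1) = (2^(s+1) * ((4:ℝ)/ε)) * ((ε:ℝ)/4) := by
            field_simp
        _ ≤ (2^(s+1) * 2^(t+1)) * ((ε:ℝ)/4) := by
            apply mul_le_mul_of_nonneg_right h25 (by positivity)
        _ = ((ε:ℝ)/4) * 2 ^ (s+t+1+1) := by rw [hpow]; ring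
    have hb2 : ((t:ℝ)+1) * (δ:ℝ) = (ε:ℝ)/4 := by
      rw [hδdef]
      push_cast
      field_simp
    calc (((F (s+t+1)).filter (ErrorPoint U (Af c q.num.toNat q.den N0 t))).card : ℝ)
        ≤ 2 ^ (s+1) + ((t:ℝ)+1) * ((δ:ℝ) * 2 ^ (s+t+1+1)) := hsum
      _ ≤ ((ε:ℝ)/4) * 2 ^ (s+t+1+1) + ((ε:ℝ)/4) * 2 ^ (s+t+1+1) := by
          have h26 : ((t:ℝ)+1) * ((δ:ℝ) * 2 ^ (s+t+1+1)) = ((ε:ℝ)/4) * 2 ^ (s+t+1+1) := by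
            rw [← mul_assoc, hb2]
          rw [h26]
          exact add_le_add_left hb1 _
      _ ≤ (ε:ℝ) * 2 ^ (s+t+1+1) := by nlinarith [pow_pos (show (0:ℝ) < 2 by norm_num) (s+t+1+1)]
end

section
/- Let U be a left-total optimal machine. For every rational ε > 0 there exists a partial computable function A : List Bool →. Bool that makes no wrong answers (whenever A(x) terminates, its output is true if U(x) is defined and false if U(x) is undefined) and satisfies liminf_{n→∞} ε_n(A) ≤ ε. -/
open Filter

namespace LTP

/-- the string of length `j` whose value (MSB first) is `i % 2^j`. -/
def str (j i : ℕ) : List Bool := ((List.range j).map (fun t => i.testBit t)).reverse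

def step (a : ℕ) (b : Bool) : ℕ := 2 * a + b.toNat

/-- the numeric value of a string, MSB first. -/
def rank (x : List Bool) : ℕ := x.foldl step 0

@[simp] theorem str_length (j i : ℕ) : (str j i).length = j := by
  simp [str]

theorem str_succ (j i : ℕ) : str (j + 1) i = i.testBit j :: str j i := by
  simp [str, List.range_succ]

theorem foldl_step (l : List Bool) (a : ℕ) :
    l.foldl step a = a * 2 ^ l.length + l.foldl step 0 := by
  induction l generalizing a with
  | nil => simp
  | cons b l ih =>
    rw [List.foldl_cons, List.foldl_cons, ih (step a b), ih (step 0 b)]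
    simp only [step, List.length_cons, pow_succ]
    ring

theorem rank_cons (b : Bool) (l : List Bool) :
    rank (b :: l) = b.toNat * 2 ^ l.length + rank l := by
  show (b :: l).foldl step 0 = _
  rw [List.foldl_cons, foldl_step]
  simp [step, rank]

theorem rank_lt (x : List Bool) : rank x < 2 ^ x.length := by
  induction x with
  | nil => simp [rank, step]
  | cons b l ih =>
    rw [rank_cons]
    have hb : b.toNat ≤ 1 := Bool.toNat_le b
    have := Nat.mul_le_mul_right (2 ^ l.length) hb
    simp only [List.length_cons, pow_succ]
    omega

theorem rank_str (j i : ℕ) : rank (str j i) = i % 2 ^ j := by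
  induction j with
  | zero => simp [str, rank, step, Nat.mod_one]
  | succ j ih =>
    rw [str_succ, rank_cons, str_length, ih, Nat.testBit_eq_decide_div_mod_eq]
    have h2 : i % 2 ^ (j + 1) = i % 2 ^ j + 2 ^ j * (i / 2 ^ j % 2) := by
      rw [pow_succ, Nat.mod_mul]
    have : (i / 2 ^ j % 2) = 0 ∨ (i / 2 ^ j % 2) = 1 := by omega
    rcases this with h | h <;> simp [h, h2]
    omega

theorem str_mod (j i : ℕ) : str j (i % 2 ^ j) = str j i := by
  unfold str
  congr 1
  apply List.map_congr_left
  intro t ht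
  rw [List.mem_range] at ht
  rw [Nat.testBit_mod_two_pow]
  simp [ht]

theorem str_rank (x : List Bool) : str x.length (rank x) = x := by
  induction x with
  | nil => simp [str]
  | cons b l ih =>
    have hL : rank l < 2 ^ l.length := rank_lt l
    rw [List.length_cons, str_succ, rank_cons]
    have hdiv : (b.toNat * 2 ^ l.length + rank l) / 2 ^ l.length = b.toNat := by
      have h2 : (0:ℕ) < 2 ^ l.length := Nat.pow_pos (by norm_num)
      rw [Nat.add_div h2]
      simp [Nat.mul_div_cancel _ h2, Nat.div_eq_of_lt hL, Nat.mod_eq_of_lt hL]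
      omega
    have hhead : (b.toNat * 2 ^ l.length + rank l).testBit l.length = b := by
      rw [Nat.testBit_eq_decide_div_mod_eq, hdiv]
      cases b <;> decide
    have hmod : (b.toNat * 2 ^ l.length + rank l) % 2 ^ l.length = rank l := by
      rw [Nat.add_comm, Nat.add_mul_mod_self_right, Nat.mod_eq_of_lt hL]
    have htail : str l.length (b.toNat * 2 ^ l.length + rank l) = l := by
      rw [← str_mod, hmod]; exact ih
    rw [hhead, htail]




theorem lex_iff_rank : ∀ (x y : List Bool), x.length = y.length →
    (List.Lex (· < ·) x y ↔ rank x < rank y) := by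
  intro x
  induction x with
  | nil =>
    intro y hy
    rw [List.length_nil] at hy
    rw [List.eq_nil_of_length_eq_zero hy.symm]
    simp [List.not_lex_nil]
  | cons a l ih =>
    intro y hy
    cases y with
    | nil => simp at hy
    | cons b m =>
      simp only [List.length_cons, Nat.succ_inj] at hy
      rw [rank_cons, rank_cons, ← hy]
      constructor
      · intro hlex
        cases hlex with
        | rel hab =>
          rcases Bool.lt_iff.1 hab with ⟨rfl, rfl⟩
          have := rank_lt l
          simp only [Bool.toNat_false, Bool.toNat_true, zero_mul, zero_add, one_mul]
          omega
        | cons hlm =>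
          have := (ih m hy).1 hlm
          omega
      · intro hr
        by_cases hab : a = b
        · subst hab
          exact List.Lex.cons ((ih m hy).2 (by omega))
        · have hcases : (a = false ∧ b = true) ∨ (a = true ∧ b = false) := by
            cases a <;> cases b <;> simp_all
          rcases hcases with ⟨rfl, rfl⟩ | ⟨rfl, rfl⟩
          · exact List.Lex.rel (by simp [Bool.lt_iff])
          · exfalso
            have := rank_lt m
            rw [← hy] at this
            simp only [Bool.toNat_false, Bool.toNat_true, zero_mul, zero_add, one_mul] at hr
            omega

theorem dcl_eq_range (S : Finset ℕ) (h : ∀ i' ∈ S, ∀ i ≤ i', i ∈ S) :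
    S = Finset.range S.card := by
  ext i
  simp only [Finset.mem_range]
  constructor
  · intro hi
    have hsub : Finset.range (i + 1) ⊆ S := by
      intro k hk
      exact h i hi k (by simpa [Nat.lt_succ_iff] using Finset.mem_range.1 hk)
    have := Finset.card_le_card hsub
    simpa using this
  · intro hi
    by_contra hnot
    have hsub : S ⊆ Finset.range i := by
      intro k hk
      rw [Finset.mem_range]
      by_contra hk2
      exact hnot (h k hk i (by omega))
    have := Finset.card_le_card hsub
    simp at this
    omega



open Nat.Partrec (Code)
open Nat.Partrec.Code

def halts (c : Code) (s : ℕ) (x : List Bool) : Bool :=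
  (evaln s c (Encodable.encode x)).isSome

theorem halts_mono {c : Code} {s s' : ℕ} {x : List Bool} (h : s ≤ s')
    (hh : halts c s x = true) : halts c s' x = true := by
  unfold halts at *
  rw [Option.isSome_iff_exists] at hh ⊢
  obtain ⟨y, hy⟩ := hh
  exact ⟨y, evaln_mono h hy⟩

section Counting

variable (U : List Bool →. ℕ) (c : Code)

open Classical in
noncomputable def AJ (j : ℕ) : Finset ℕ :=
  (Finset.range (2 ^ j)).filter (fun i => (U (str j i)).Dom)

noncomputable def aJ (j : ℕ) : ℕ := (AJ U j).card

noncomputable def DN (n : ℕ) : ℕ := ∑ j ∈ Finset.range (n + 1), aJ U j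

def FJ (s j : ℕ) : Finset ℕ :=
  (Finset.range (2 ^ j)).filter (fun i => halts c s (str j i) = true)

def cntJ (s j : ℕ) : ℕ := (FJ c s j).card

def cntLE (s n : ℕ) : ℕ := ∑ j ∈ Finset.range (n + 1), cntJ c s j

variable {U c}

theorem mem_AJ {j i : ℕ} : i ∈ AJ U j ↔ i < 2 ^ j ∧ (U (str j i)).Dom := by
  classical
  simp [AJ, Finset.mem_filter]

theorem mem_FJ {s j i : ℕ} : i ∈ FJ c s j ↔ i < 2 ^ j ∧ halts c s (str j i) = true := by
  rw [FJ, Finset.mem_filter, Finset.mem_range]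

theorem FJ_mono {s s' j : ℕ} (h : s ≤ s') : FJ c s j ⊆ FJ c s' j := by
  intro i hi
  rw [mem_FJ] at hi ⊢
  exact ⟨hi.1, halts_mono h hi.2⟩

section Sound
variable (hsound : ∀ s x, halts c s x = true → (U x).Dom)
include hsound

theorem FJ_subset_AJ (s j : ℕ) : FJ c s j ⊆ AJ U j := by
  intro i hi
  rw [mem_FJ] at hi
  rw [mem_AJ]
  exact ⟨hi.1, hsound _ _ hi.2⟩

theorem cntJ_le_aJ (s j : ℕ) : cntJ c s j ≤ aJ U j :=
  Finset.card_le_card (FJ_subset_AJ hsound s j)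

theorem cntLE_le_DN (s n : ℕ) : cntLE c s n ≤ DN U n :=
  Finset.sum_le_sum fun j _ => cntJ_le_aJ hsound s j

theorem exists_stage (hcomp : ∀ x, (U x).Dom → ∃ s, halts c s x = true) (n : ℕ) :
    ∃ s, ∀ j ≤ n, cntJ c s j = aJ U j := by
  classical
  have hj : ∀ j, ∃ s, FJ c s j = AJ U j := by
    intro j
    have hex : ∀ i ∈ AJ U j, ∃ s, halts c s (str j i) = true := by
      intro i hi
      exact hcomp _ (mem_AJ.1 hi).2
    choose f hf using hex
    refine ⟨(AJ U j).attach.sup (fun i => f i.1 i.2), ?_⟩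
    apply Finset.Subset.antisymm (FJ_subset_AJ hsound _ _)
    intro i hi
    have hle : f i hi ≤ (AJ U j).attach.sup (fun i => f i.1 i.2) :=
      Finset.le_sup (f := fun (i : {x // x ∈ AJ U j}) => f i.1 i.2) (Finset.mem_attach _ ⟨i, hi⟩)
    exact mem_FJ.2 ⟨(mem_AJ.1 hi).1, halts_mono hle (hf i hi)⟩
  choose g hg using hj
  refine ⟨(Finset.range (n + 1)).sup g, fun j hjn => ?_⟩
  have h1 : FJ c (g j) j ⊆ FJ c ((Finset.range (n + 1)).sup g) j :=
    FJ_mono (Finset.le_sup (Finset.mem_range.2 (by omega)))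
  have h2 : FJ c ((Finset.range (n + 1)).sup g) j = AJ U j :=
    Finset.Subset.antisymm (FJ_subset_AJ hsound _ _) (hg j ▸ h1)
  rw [cntJ, h2, aJ]

end Sound

theorem aJ_le (j : ℕ) : aJ U j ≤ 2 ^ j := by
  rw [aJ]
  calc (AJ U j).card ≤ (Finset.range (2 ^ j)).card := Finset.card_le_card (by
    intro i hi; exact Finset.mem_range.2 (mem_AJ.1 hi).1)
  _ = 2 ^ j := Finset.card_range _

theorem sum_two_pow (n : ℕ) : ∑ j ∈ Finset.range n, 2 ^ j = 2 ^ n - 1 := by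
  induction n with
  | zero => simp
  | succ n ih =>
    rw [Finset.sum_range_succ, ih]
    have : 1 ≤ 2 ^ n := Nat.one_le_two_pow
    have : 2 ^ (n + 1) = 2 ^ n + 2 ^ n := by rw [pow_succ]; omega
    omega

theorem DN_lt (n : ℕ) : DN U n < 2 ^ (n + 1) := by
  have h1 : DN U n ≤ ∑ j ∈ Finset.range (n + 1), 2 ^ j :=
    Finset.sum_le_sum fun j _ => aJ_le j
  rw [sum_two_pow] at h1
  have : 1 ≤ 2 ^ (n + 1) := Nat.one_le_two_pow
  omega

section LT
variable (hLT : LeftTotal U)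
include hLT

theorem AJ_eq_range (j : ℕ) : AJ U j = Finset.range (aJ U j) := by
  rw [aJ]
  apply dcl_eq_range
  intro i' hi' i hii'
  rw [mem_AJ] at hi' ⊢
  have hilt : i < 2 ^ j := lt_of_le_of_lt hii' hi'.1
  refine ⟨hilt, ?_⟩
  rcases Nat.lt_or_ge i i' with h | h
  · apply hLT (str j i) (str j i') (by simp)
    · rw [lex_iff_rank _ _ (by simp), rank_str, rank_str,
        Nat.mod_eq_of_lt hilt, Nat.mod_eq_of_lt hi'.1]
      exact h
    · exact hi'.2
  · have : i = i' := by omega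
    rw [this]; exact hi'.2

theorem dom_of_rank_lt {x : List Bool} (h : rank x < aJ U x.length) : (U x).Dom := by
  have h2 : rank x ∈ AJ U x.length := by
    rw [AJ_eq_range hLT, Finset.mem_range]; exact h
  have := (mem_AJ.1 h2).2
  rwa [str_rank] at this

theorem not_dom_of_rank_ge {x : List Bool} (h : aJ U x.length ≤ rank x) : ¬(U x).Dom := by
  intro hdom
  have h2 : rank x ∈ AJ U x.length :=
    mem_AJ.2 ⟨rank_lt x, by rwa [str_rank]⟩
  rw [AJ_eq_range hLT, Finset.mem_range] at h2
  omega

end LT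
end Counting

/-! ### ceiling arithmetic -/

def ceilN (x b : ℕ) : ℕ := (x + b - 1) / b

theorem ceilN_le_iff {b : ℕ} (hb : 0 < b) {x m : ℕ} : ceilN x b ≤ m ↔ x ≤ b * m := by
  rw [ceilN, Nat.div_le_iff_le_mul_add_pred hb]
  omega

theorem le_mul_ceilN {b : ℕ} (hb : 0 < b) (x : ℕ) : x ≤ b * ceilN x b :=
  (ceilN_le_iff hb).1 le_rfl

def TT (a b n : ℕ) : ℕ := ceilN (a * 2 ^ (n + 1)) b

def MM (a b n : ℕ) : ℕ := TT (a + 1) b n - TT a b n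

theorem TT_mono {a b n : ℕ} : TT a b n ≤ TT (a + 1) b n := by
  have h : a * 2 ^ (n + 1) ≤ (a + 1) * 2 ^ (n + 1) :=
    Nat.mul_le_mul_right _ (Nat.le_succ a)
  exact Nat.div_le_div_right (by omega)

theorem TT_add_MM {a b n : ℕ} : TT a b n + MM a b n = TT (a + 1) b n := by
  have := @TT_mono a b n
  rw [MM]; omega

theorem TT_le_of_good {a b n D : ℕ} (hb : 0 < b) (h : a * 2 ^ (n + 1) ≤ b * D) :
    TT a b n ≤ D := (ceilN_le_iff hb).2 h

theorem lt_TT_succ {a b n D : ℕ} (hb : 0 < b) (h : b * D < (a + 1) * 2 ^ (n + 1)) :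
    D < TT (a + 1) b n := by
  by_contra hc
  have := (ceilN_le_iff hb).1 (le_trans (le_rfl : TT (a+1) b n ≤ _) (by omega : TT (a+1) b n ≤ D))
  omega

theorem MM_le {a b n : ℕ} (hb : 0 < b) : MM a b n ≤ 2 ^ (n + 1) / b + 1 := by
  have h1 : a * 2 ^ (n + 1) ≤ b * TT a b n := le_mul_ceilN hb _
  have h2 : 2 ^ (n + 1) ≤ b * (2 ^ (n + 1) / b) + b := by
    have hd := Nat.div_add_mod (2 ^ (n + 1)) b
    have hm := Nat.mod_lt (2 ^ (n + 1)) hb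
    omega
  have h3 : TT (a + 1) b n ≤ TT a b n + (2 ^ (n + 1) / b + 1) := by
    rw [TT, ceilN_le_iff hb, Nat.succ_mul, Nat.mul_add, Nat.mul_add, Nat.mul_one]
    omega
  have h4 := @TT_mono a b n
  rw [MM]; omega

/-! ### choice of parameters -/

theorem exists_params (U : List Bool →. ℕ) (b : ℕ) (hb : 0 < b) :
    ∃ a N₀ : ℕ, (∀ n, N₀ ≤ n → b * DN U n < (a + 1) * 2 ^ (n + 1)) ∧
      (∀ N, ∃ n, N ≤ n ∧ a * 2 ^ (n + 1) ≤ b * DN U n) := by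
  set S : Set ℕ := {m : ℕ | ∀ N, ∃ n, N ≤ n ∧ m * 2 ^ (n + 1) ≤ b * DN U n} with hS
  have h0 : 0 ∈ S := fun N => ⟨N, le_rfl, by simp⟩
  have hbdd : BddAbove S := by
    refine ⟨b, fun m hm => ?_⟩
    obtain ⟨n, -, hn⟩ := hm 0
    have hDlt : DN U n < 2 ^ (n + 1) := DN_lt n
    have : m * 2 ^ (n + 1) ≤ b * 2 ^ (n + 1) :=
      le_trans hn (Nat.mul_le_mul_left _ (le_of_lt hDlt))
    exact Nat.le_of_mul_le_mul_right (by rwa [Nat.mul_comm m, Nat.mul_comm b] at this)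
      (Nat.pow_pos (by norm_num))
  set a := sSup S with ha
  have haS : a ∈ S := Nat.sSup_mem ⟨0, h0⟩ hbdd
  have hnot : (a + 1) ∉ S := by
    intro h
    have := le_csSup hbdd h
    omega
  rw [hS, Set.mem_setOf_eq] at hnot
  push_neg at hnot
  obtain ⟨N₀, hN₀⟩ := hnot
  refine ⟨a, N₀, fun n hn => ?_, haS⟩
  have := hN₀ n
  omega

/-! ### the algorithm -/

theorem foldl_or (g : ℕ → Bool) : ∀ (l : List ℕ) (b : Bool),
    l.foldl (fun acc t => acc || g t) b = (b || l.any g) := by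
  intro l
  induction l with
  | nil => simp
  | cons t l ih =>
    intro b
    rw [List.foldl_cons, ih, List.any_cons]
    cases b <;> cases g t <;> simp

def PF (c : Code) (a b k₀ N₀ : ℕ) (x : List Bool) (s : ℕ) : Bool :=
  (List.range k₀).foldl (fun acc t =>
    acc || (decide (N₀ ≤ x.length + t) &&
            decide (TT a b (x.length + t) ≤ cntLE c s (x.length + t)) &&
            decide (cntJ c s x.length + MM a b (x.length + t) ≤ rank x))) false

def PP (c : Code) (a b k₀ N₀ : ℕ) (x : List Bool) (s : ℕ) : Bool :=
  halts c s x || PF c a b k₀ N₀ x s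

def Alg (c : Code) (a b k₀ N₀ : ℕ) : List Bool →. Bool :=
  fun x => (Nat.rfind (fun s => Part.some (PP c a b k₀ N₀ x s))).map (fun s => halts c s x)

theorem PF_iff {c : Code} {a b k₀ N₀ : ℕ} {x : List Bool} {s : ℕ} :
    PF c a b k₀ N₀ x s = true ↔ ∃ t < k₀, N₀ ≤ x.length + t ∧
      TT a b (x.length + t) ≤ cntLE c s (x.length + t) ∧
      cntJ c s x.length + MM a b (x.length + t) ≤ rank x := by
  rw [PF, foldl_or, Bool.false_or, List.any_eq_true]
  constructor
  · rintro ⟨t, ht, hg⟩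
    rw [List.mem_range] at ht
    simp only [Bool.and_eq_true, decide_eq_true_eq] at hg
    exact ⟨t, ht, hg.1.1, hg.1.2, hg.2⟩
  · rintro ⟨t, ht, h1, h2, h3⟩
    refine ⟨t, List.mem_range.2 ht, ?_⟩
    simp only [Bool.and_eq_true, decide_eq_true_eq]
    exact ⟨⟨h1, h2⟩, h3⟩

section Correct

variable {U : List Bool →. ℕ} {c : Code} {a b k₀ N₀ : ℕ}
variable (hLT : LeftTotal U)
variable (hsound : ∀ s x, halts c s x = true → (U x).Dom)
variable (hb : 0 < b)
variable (hN₀ : ∀ n, N₀ ≤ n → b * DN U n < (a + 1) * 2 ^ (n + 1))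

include hLT hsound hb hN₀ in
theorem safety {x : List Bool} {s : ℕ} (h : PF c a b k₀ N₀ x s = true) : ¬(U x).Dom := by
  obtain ⟨t, ht, hn0, htrig, hrank⟩ := PF_iff.1 h
  set j := x.length with hj
  set n := j + t with hn
  have hjn : j ≤ n := by omega
  have h1 : cntLE c s n ≤ DN U n := cntLE_le_DN hsound s n
  have h2 : DN U n < TT (a + 1) b n := lt_TT_succ hb (hN₀ n (by omega))
  have hjmem : j ∈ Finset.range (n + 1) := Finset.mem_range.2 (by omega)
  have h3 : aJ U j + cntLE c s n ≤ cntJ c s j + DN U n := by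
    have e1 : cntJ c s j + ∑ j' ∈ (Finset.range (n + 1)).erase j, cntJ c s j' = cntLE c s n :=
      Finset.add_sum_erase _ _ hjmem
    have e2 : aJ U j + ∑ j' ∈ (Finset.range (n + 1)).erase j, aJ U j' = DN U n :=
      Finset.add_sum_erase _ _ hjmem
    have e3 : ∑ j' ∈ (Finset.range (n + 1)).erase j, cntJ c s j' ≤
        ∑ j' ∈ (Finset.range (n + 1)).erase j, aJ U j' :=
      Finset.sum_le_sum fun j' _ => cntJ_le_aJ hsound s j'
    omega
  have h5 : TT a b n + MM a b n = TT (a + 1) b n := TT_add_MM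
  have hfinal : aJ U j ≤ rank x := by omega
  exact not_dom_of_rank_ge hLT hfinal

include hsound in
theorem alg_true_dom {x : List Bool} (h : true ∈ Alg c a b k₀ N₀ x) : (U x).Dom := by
  rw [Alg] at h
  obtain ⟨s₀, hs₀, hval⟩ := Part.mem_map_iff _ |>.1 h
  exact hsound _ _ hval

include hLT hsound hb hN₀ in
theorem alg_false_not_dom {x : List Bool} (h : false ∈ Alg c a b k₀ N₀ x) : ¬(U x).Dom := by
  rw [Alg] at h
  obtain ⟨s₀, hs₀, hval⟩ := Part.mem_map_iff _ |>.1 h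
  have hspec := Nat.rfind_spec hs₀
  rw [Part.mem_some_iff] at hspec
  rw [PP] at hspec
  have : PF c a b k₀ N₀ x s₀ = true := by
    cases hPF : PF c a b k₀ N₀ x s₀
    · rw [hPF, Bool.or_false, hval] at hspec; simp at hspec
    · rfl
  exact safety hLT hsound hb hN₀ this

include hLT hsound hb hN₀ in
theorem alg_dom_of_true {x : List Bool} (hdom : (U x).Dom)
    (hcomp : ∀ x, (U x).Dom → ∃ s, halts c s x = true) :
    true ∈ Alg c a b k₀ N₀ x := by
  obtain ⟨s, hs⟩ := hcomp x hdom
  have hPP : PP c a b k₀ N₀ x s = true := by rw [PP, hs, Bool.true_or]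
  have hdom2 : (Nat.rfind (fun s => Part.some (PP c a b k₀ N₀ x s))).Dom :=
    Nat.rfind_dom.2 ⟨s, by rw [Part.mem_some_iff]; exact hPP.symm, fun _ => trivial⟩
  set s₀ := (Nat.rfind (fun s => Part.some (PP c a b k₀ N₀ x s))).get hdom2 with hs₀def
  have hs₀ : s₀ ∈ Nat.rfind (fun s => Part.some (PP c a b k₀ N₀ x s)) := Part.get_mem hdom2
  have hspec := Nat.rfind_spec hs₀
  rw [Part.mem_some_iff] at hspec
  have hhalts : halts c s₀ x = true := by
    cases hh : halts c s₀ x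
    · exfalso
      rw [PP, hh, Bool.false_or] at hspec
      exact safety hLT hsound hb hN₀ hspec.symm hdom
    · rfl
  rw [Alg]
  exact Part.mem_map_iff _ |>.2 ⟨s₀, hs₀, hhalts⟩

include hsound in
theorem alg_false_of_PF {x : List Bool} (hx : ¬(U x).Dom)
    (hPF : ∃ s, PF c a b k₀ N₀ x s = true) :
    false ∈ Alg c a b k₀ N₀ x := by
  obtain ⟨s, hs⟩ := hPF
  have hPP : PP c a b k₀ N₀ x s = true := by rw [PP, hs, Bool.or_true]
  have hdom2 : (Nat.rfind (fun s => Part.some (PP c a b k₀ N₀ x s))).Dom :=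
    Nat.rfind_dom.2 ⟨s, by rw [Part.mem_some_iff]; exact hPP.symm, fun _ => trivial⟩
  set s₀ := (Nat.rfind (fun s => Part.some (PP c a b k₀ N₀ x s))).get hdom2 with hs₀def
  have hs₀ : s₀ ∈ Nat.rfind (fun s => Part.some (PP c a b k₀ N₀ x s)) := Part.get_mem hdom2
  have hhalts : halts c s₀ x = false := by
    cases hh : halts c s₀ x
    · rfl
    · exact absurd (hsound _ _ hh) hx
  rw [Alg]
  exact Part.mem_map_iff _ |>.2 ⟨s₀, hs₀, hhalts⟩

end Correct

section Count

variable {U : List Bool →. ℕ} {c : Code} {a b k₀ N₀ : ℕ}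
variable (hLT : LeftTotal U)
variable (hsound : ∀ s x, halts c s x = true → (U x).Dom)
variable (hcomp : ∀ x, (U x).Dom → ∃ s, halts c s x = true)
variable (hb : 0 < b)
variable (hN₀ : ∀ n, N₀ ≤ n → b * DN U n < (a + 1) * 2 ^ (n + 1))

include hLT hsound hcomp hb hN₀ in
theorem good_count {n : ℕ} (hgood : a * 2 ^ (n + 1) ≤ b * DN U n) (hn0 : N₀ ≤ n) :
    {x : List Bool | x.length ≤ n ∧ ErrorPoint U (Alg c a b k₀ N₀) x}.ncard
      ≤ 2 ^ (n + 1 - k₀) + k₀ * (2 ^ (n + 1) / b + 1) := by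
  classical
  obtain ⟨sS, hsS⟩ := exists_stage hsound hcomp n
  have hcntLE : cntLE c sS n = DN U n := by
    rw [cntLE, DN]
    exact Finset.sum_congr rfl fun j hj => hsS j (by
      rw [Finset.mem_range] at hj; omega)
  have htrig : TT a b n ≤ cntLE c sS n := by
    rw [hcntLE]; exact TT_le_of_good hb hgood
  set Bnd : ℕ → Finset ℕ := fun j =>
    if n < j + k₀ then Finset.Ico (aJ U j) (aJ U j + MM a b n) else Finset.range (2 ^ j)
    with hBnd
  set B : Finset (ℕ × ℕ) :=
    (Finset.range (n + 1)).biUnion (fun j => (Bnd j).image (fun i => (j, i))) with hB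
  have hsub : {x : List Bool | x.length ≤ n ∧ ErrorPoint U (Alg c a b k₀ N₀) x}
      ⊆ ↑(B.image (fun p : ℕ × ℕ => str p.1 p.2)) := by
    rintro x ⟨hxlen, hxerr⟩
    set j := x.length with hj
    have hndom : ¬(U x).Dom := by
      intro hdom
      exact hxerr (Or.inl ⟨hdom, alg_dom_of_true hLT hsound hb hN₀ hdom hcomp⟩)
    have hrk_ge : aJ U j ≤ rank x := by
      by_contra hlt
      push_neg at hlt
      exact hndom (dom_of_rank_lt hLT hlt)
    have hrmem : rank x ∈ Bnd j := by
      rw [show Bnd j = (if n < j + k₀ then Finset.Ico (aJ U j) (aJ U j + MM a b n)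
        else Finset.range (2 ^ j)) from rfl]
      by_cases hw : n < j + k₀
      · rw [if_pos hw, Finset.mem_Ico]
        refine ⟨hrk_ge, ?_⟩
        by_contra hge
        push_neg at hge
        have hPF : PF c a b k₀ N₀ x sS = true := by
          rw [PF_iff]
          refine ⟨n - j, by omega, ?_⟩
          have hnj : x.length + (n - j) = n := by omega
          rw [hnj]
          exact ⟨by omega, htrig, by rw [← hj, hsS j (by omega)]; omega⟩
        exact hxerr (Or.inr ⟨hndom, alg_false_of_PF hsound hndom ⟨sS, hPF⟩⟩)
      · rw [if_neg hw, Finset.mem_range]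
        exact rank_lt x
    have : ((j, rank x) : ℕ × ℕ) ∈ B := by
      rw [hB]
      refine Finset.mem_biUnion.2 ⟨j, Finset.mem_range.2 (by omega), ?_⟩
      exact Finset.mem_image.2 ⟨rank x, hrmem, rfl⟩
    refine Finset.mem_coe.2 (Finset.mem_image.2 ⟨(j, rank x), this, ?_⟩)
    exact str_rank x
  have h1 : {x : List Bool | x.length ≤ n ∧ ErrorPoint U (Alg c a b k₀ N₀) x}.ncard
      ≤ (B.image (fun p : ℕ × ℕ => str p.1 p.2)).card := by
    rw [← Set.ncard_coe_finset]
    exact Set.ncard_le_ncard hsub (Finset.finite_toSet _)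
  have h2 : (B.image (fun p : ℕ × ℕ => str p.1 p.2)).card ≤ B.card := Finset.card_image_le
  have h3 : B.card ≤ ∑ j ∈ Finset.range (n + 1), (Bnd j).card := by
    rw [hB]
    refine le_trans (Finset.card_biUnion_le) (Finset.sum_le_sum fun j _ => Finset.card_image_le)
  have h4 : ∑ j ∈ Finset.range (n + 1), (Bnd j).card
      ≤ 2 ^ (n + 1 - k₀) + k₀ * (2 ^ (n + 1) / b + 1) := by
    rw [← Finset.sum_filter_add_sum_filter_not (Finset.range (n + 1)) (fun j => n < j + k₀)]
    have hwin : ∑ j ∈ (Finset.range (n + 1)).filter (fun j => n < j + k₀), (Bnd j).card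
        ≤ k₀ * (2 ^ (n + 1) / b + 1) := by
      have hcard : ((Finset.range (n + 1)).filter (fun j => n < j + k₀)).card ≤ k₀ := by
        have hsub2 : (Finset.range (n + 1)).filter (fun j => n < j + k₀)
            ⊆ Finset.Ico (n + 1 - k₀) (n + 1) := by
          intro j hjm
          rw [Finset.mem_filter, Finset.mem_range] at hjm
          rw [Finset.mem_Ico]
          omega
        calc ((Finset.range (n + 1)).filter (fun j => n < j + k₀)).card
            ≤ (Finset.Ico (n + 1 - k₀) (n + 1)).card := Finset.card_le_card hsub2
          _ = (n + 1) - (n + 1 - k₀) := Nat.card_Ico _ _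
          _ ≤ k₀ := by omega
      have hterm : ∀ j ∈ (Finset.range (n + 1)).filter (fun j => n < j + k₀),
          (Bnd j).card ≤ 2 ^ (n + 1) / b + 1 := by
        intro j hjm
        rw [Finset.mem_filter] at hjm
        rw [show Bnd j = (if n < j + k₀ then Finset.Ico (aJ U j) (aJ U j + MM a b n)
          else Finset.range (2 ^ j)) from rfl, if_pos hjm.2, Nat.card_Ico]
        have := MM_le (a := a) (n := n) hb
        omega
      calc ∑ j ∈ (Finset.range (n + 1)).filter (fun j => n < j + k₀), (Bnd j).card
          ≤ ∑ _j ∈ (Finset.range (n + 1)).filter (fun j => n < j + k₀), (2 ^ (n + 1) / b + 1) :=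
            Finset.sum_le_sum hterm
        _ = ((Finset.range (n + 1)).filter (fun j => n < j + k₀)).card * (2 ^ (n + 1) / b + 1) := by
            rw [Finset.sum_const, smul_eq_mul]
        _ ≤ k₀ * (2 ^ (n + 1) / b + 1) := Nat.mul_le_mul_right _ hcard
    have hlow : ∑ j ∈ (Finset.range (n + 1)).filter (fun j => ¬(n < j + k₀)), (Bnd j).card
        ≤ 2 ^ (n + 1 - k₀) := by
      have hsub3 : (Finset.range (n + 1)).filter (fun j => ¬(n < j + k₀))
          ⊆ Finset.range (n + 1 - k₀) := by
        intro j hjm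
        rw [Finset.mem_filter, Finset.mem_range] at hjm
        rw [Finset.mem_range]
        omega
      have : ∑ j ∈ (Finset.range (n + 1)).filter (fun j => ¬(n < j + k₀)), (Bnd j).card
          ≤ ∑ j ∈ (Finset.range (n + 1)).filter (fun j => ¬(n < j + k₀)), 2 ^ j := by
        refine Finset.sum_le_sum fun j hjm => ?_
        rw [Finset.mem_filter] at hjm
        rw [show Bnd j = (if n < j + k₀ then Finset.Ico (aJ U j) (aJ U j + MM a b n)
          else Finset.range (2 ^ j)) from rfl, if_neg hjm.2, Finset.card_range]
      refine le_trans this (le_trans (Finset.sum_le_sum_of_subset hsub3) ?_)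
      rw [sum_two_pow]
      exact Nat.sub_le _ _
    calc ∑ j ∈ (Finset.range (n + 1)).filter (fun j => n < j + k₀), (Bnd j).card
          + ∑ j ∈ (Finset.range (n + 1)).filter (fun j => ¬(n < j + k₀)), (Bnd j).card
        ≤ k₀ * (2 ^ (n + 1) / b + 1) + 2 ^ (n + 1 - k₀) := add_le_add hwin hlow
      _ = 2 ^ (n + 1 - k₀) + k₀ * (2 ^ (n + 1) / b + 1) := Nat.add_comm _ _
  exact le_trans (le_trans (le_trans h1 h2) h3) h4

end Count

/-! ### computability of the algorithm -/

section Comp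
open Primrec

theorem pw2_primrec : Primrec (fun n : ℕ => 2 ^ n) := by
  have h : Primrec (fun n : ℕ => Nat.rec (motive := fun _ => ℕ) 1 (fun _ ih => 2 * ih) n) :=
    Primrec.nat_rec₁ 1 (Primrec₂.comp (Primrec.nat_mul) (Primrec.const 2) Primrec.snd).to₂
  apply h.of_eq
  intro n
  induction n with
  | zero => rfl
  | succ n ih => simpa [pow_succ, ih] using by ring

theorem rank_primrec : Primrec rank := by
  have h : Primrec₂ (fun (_ : List Bool) (p : ℕ × Bool) => 2 * p.1 + p.2.toNat) :=
    Primrec.to₂ (Primrec.nat_add.comp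
      (Primrec.nat_mul.comp (Primrec.const 2) (Primrec.fst.comp Primrec.snd))
      ((Primrec.dom_bool Bool.toNat).comp (Primrec.snd.comp Primrec.snd)))
  exact (Primrec.list_foldl Primrec.id (Primrec.const 0) h).of_eq (fun x => rfl)

theorem testBit_primrec : Primrec₂ Nat.testBit := by
  have h : Primrec (fun p : ℕ × ℕ => decide (p.1 / 2 ^ p.2 % 2 = 1)) :=
    PrimrecPred.decide <| Primrec.eq.comp
      (Primrec.nat_mod.comp
        (Primrec.nat_div.comp Primrec.fst (pw2_primrec.comp Primrec.snd))
        (Primrec.const 2))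
      (Primrec.const 1)
  exact Primrec.to₂ (h.of_eq (fun p => (Nat.testBit_eq_decide_div_mod_eq).symm))

theorem str_primrec : Primrec₂ str := by
  have hmap : Primrec (fun p : ℕ × ℕ => (List.range p.1).map (fun t => p.2.testBit t)) :=
    Primrec.list_map (Primrec.list_range.comp Primrec.fst)
      (Primrec.to₂ (testBit_primrec.comp (Primrec.snd.comp Primrec.fst) Primrec.snd))
  exact Primrec.to₂ ((Primrec.list_reverse.comp hmap).of_eq (fun p => rfl))

theorem halts_primrec (c : Code) : Primrec₂ (fun (s : ℕ) (x : List Bool) => halts c s x) :=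
  Primrec.to₂ (Primrec.option_isSome.comp
    ((Nat.Partrec.Code.primrec_evaln).comp
      (Primrec.pair (Primrec.pair Primrec.fst (Primrec.const c))
        (Primrec.encode.comp Primrec.snd))))

theorem sum_range_eq_foldl (g : ℕ → ℕ) (N : ℕ) :
    ∑ i ∈ Finset.range N, g i = (List.range N).foldl (fun acc i => acc + g i) 0 := by
  induction N with
  | zero => simp
  | succ N ih =>
    rw [Finset.sum_range_succ, ih, List.range_succ, List.foldl_append]
    rfl

theorem cntJ_eq_foldl (c : Code) (s j : ℕ) :
    cntJ c s j = (List.range (2 ^ j)).foldl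
      (fun acc i => acc + (bif halts c s (str j i) then 1 else 0)) 0 := by
  rw [cntJ, FJ, Finset.card_filter, ← sum_range_eq_foldl]
  refine Finset.sum_congr rfl fun i _ => ?_
  cases halts c s (str j i) <;> simp

theorem cntLE_eq_foldl (c : Code) (s n : ℕ) :
    cntLE c s n = (List.range (n + 1)).foldl (fun acc j => acc + cntJ c s j) 0 := by
  rw [cntLE, sum_range_eq_foldl]

theorem cntJ_primrec (c : Code) : Primrec₂ (cntJ c) := by
  have hh : Primrec₂ (fun (p : ℕ × ℕ) (q : ℕ × ℕ) =>
      q.1 + (bif halts c p.1 (str p.2 q.2) then 1 else 0)) :=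
    Primrec.to₂ (Primrec.nat_add.comp (Primrec.fst.comp Primrec.snd)
      (Primrec.cond
        ((halts_primrec c).comp (Primrec.fst.comp Primrec.fst)
          (str_primrec.comp (Primrec.snd.comp Primrec.fst) (Primrec.snd.comp Primrec.snd)))
        (Primrec.const 1) (Primrec.const 0)))
  have := Primrec.list_foldl
    (Primrec.list_range.comp (pw2_primrec.comp (Primrec.snd (α := ℕ) (β := ℕ))))
    (Primrec.const 0) hh
  exact Primrec.to₂ (this.of_eq (fun p => (cntJ_eq_foldl c p.1 p.2).symm))

theorem cntLE_primrec (c : Code) : Primrec₂ (cntLE c) := by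
  have hh : Primrec₂ (fun (p : ℕ × ℕ) (q : ℕ × ℕ) => q.1 + cntJ c p.1 q.2) :=
    Primrec.to₂ (Primrec.nat_add.comp (Primrec.fst.comp Primrec.snd)
      ((cntJ_primrec c).comp (Primrec.fst.comp Primrec.fst) (Primrec.snd.comp Primrec.snd)))
  have := Primrec.list_foldl
    (Primrec.list_range.comp (Primrec.succ.comp (Primrec.snd (α := ℕ) (β := ℕ))))
    (Primrec.const 0) hh
  exact Primrec.to₂ (this.of_eq (fun p => (cntLE_eq_foldl c p.1 p.2).symm))

theorem TT_primrec (a b : ℕ) : Primrec (TT a b) := by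
  have : Primrec (fun n : ℕ => (a * 2 ^ (n + 1) + b - 1) / b) :=
    Primrec.nat_div.comp
      (Primrec.nat_sub.comp
        (Primrec.nat_add.comp
          (Primrec.nat_mul.comp (Primrec.const a) (pw2_primrec.comp Primrec.succ))
          (Primrec.const b))
        (Primrec.const 1))
      (Primrec.const b)
  exact this.of_eq (fun n => rfl)

theorem MM_primrec (a b : ℕ) : Primrec (MM a b) :=
  Primrec.nat_sub.comp (TT_primrec (a + 1) b) (TT_primrec a b)

theorem PF_primrec (c : Code) (a b k₀ N₀ : ℕ) : Primrec₂ (PF c a b k₀ N₀) := by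
  have hlen : Primrec (fun p : (List Bool × ℕ) × (Bool × ℕ) => p.1.1.length) :=
    Primrec.list_length.comp (Primrec.fst.comp Primrec.fst)
  have ht : Primrec (fun p : (List Bool × ℕ) × (Bool × ℕ) => p.2.2) :=
    Primrec.snd.comp Primrec.snd
  have hn : Primrec (fun p : (List Bool × ℕ) × (Bool × ℕ) => p.1.1.length + p.2.2) :=
    Primrec.nat_add.comp hlen ht
  have hs : Primrec (fun p : (List Bool × ℕ) × (Bool × ℕ) => p.1.2) :=
    Primrec.snd.comp Primrec.fst
  have hx : Primrec (fun p : (List Bool × ℕ) × (Bool × ℕ) => p.1.1) :=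
    Primrec.fst.comp Primrec.fst
  have d1 : Primrec (fun p : (List Bool × ℕ) × (Bool × ℕ) =>
      decide (N₀ ≤ p.1.1.length + p.2.2)) :=
    PrimrecPred.decide <| Primrec.nat_le.comp (Primrec.const N₀) hn
  have d2 : Primrec (fun p : (List Bool × ℕ) × (Bool × ℕ) =>
      decide (TT a b (p.1.1.length + p.2.2) ≤ cntLE c p.1.2 (p.1.1.length + p.2.2))) :=
    PrimrecPred.decide <| Primrec.nat_le.comp ((TT_primrec a b).comp hn) ((cntLE_primrec c).comp hs hn)
  have d3 : Primrec (fun p : (List Bool × ℕ) × (Bool × ℕ) =>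
      decide (cntJ c p.1.2 p.1.1.length + MM a b (p.1.1.length + p.2.2) ≤ rank p.1.1)) :=
    PrimrecPred.decide <| Primrec.nat_le.comp
      (Primrec.nat_add.comp ((cntJ_primrec c).comp hs hlen) ((MM_primrec a b).comp hn))
      (rank_primrec.comp hx)
  have hh : Primrec₂ (fun (p : List Bool × ℕ) (q : Bool × ℕ) =>
      q.1 || (decide (N₀ ≤ p.1.length + q.2) &&
              decide (TT a b (p.1.length + q.2) ≤ cntLE c p.2 (p.1.length + q.2)) &&
              decide (cntJ c p.2 p.1.length + MM a b (p.1.length + q.2) ≤ rank p.1))) :=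
    Primrec.to₂ ((Primrec.dom_bool₂ (· || ·)).comp (Primrec.fst.comp Primrec.snd)
      ((Primrec.dom_bool₂ (· && ·)).comp ((Primrec.dom_bool₂ (· && ·)).comp d1 d2) d3))
  have := Primrec.list_foldl (Primrec.const (List.range k₀))
    (Primrec.const false) (hh : Primrec₂ _)
  exact Primrec.to₂ (this.of_eq (fun p => rfl))

theorem PP_primrec (c : Code) (a b k₀ N₀ : ℕ) : Primrec₂ (PP c a b k₀ N₀) :=
  Primrec.to₂ ((Primrec.dom_bool₂ (· || ·)).comp
    ((halts_primrec c).comp Primrec.snd Primrec.fst)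
    ((PF_primrec c a b k₀ N₀).comp Primrec.fst Primrec.snd))

theorem Alg_partrec (c : Code) (a b k₀ N₀ : ℕ) : Partrec (Alg c a b k₀ N₀) := by
  have h1 : Computable₂ (PP c a b k₀ N₀) := (PP_primrec c a b k₀ N₀).to_comp
  have h2 := Partrec.rfind h1.partrec₂
  have h3 : Computable₂ (fun (x : List Bool) (s : ℕ) => halts c s x) :=
    ((halts_primrec c).comp Primrec.snd Primrec.fst : Primrec _).to₂.to_comp
  exact (h2.map h3).of_eq (fun x => rfl)

end Comp

open Nat.Partrec.Code

theorem main (U : List Bool →. ℕ)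
    (hU : OptimalMachine U) (hLT : LeftTotal U) (ε : ℚ) (hε : 0 < ε) :
    ∃ A : List Bool →. Bool, Partrec A ∧
      (∀ x, (true ∈ A x → (U x).Dom) ∧ (false ∈ A x → ¬(U x).Dom)) ∧
      Filter.liminf (fun n => errRate U A n) Filter.atTop ≤ (ε : ℝ) := by
  classical
  obtain ⟨hpart, -⟩ := hU
  obtain ⟨c, hc⟩ := Nat.Partrec.Code.exists_code.1 hpart
  have hεR : (0:ℝ) < (ε:ℝ) := by exact_mod_cast hε
  have hsound : ∀ s x, halts c s x = true → (U x).Dom := by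
    intro s x h
    rw [halts, Option.isSome_iff_exists] at h
    obtain ⟨y, hy⟩ := h
    have hy2 : y ∈ c.eval (Encodable.encode x) := evaln_sound hy
    rw [hc] at hy2
    simp only [Encodable.encodek, Part.coe_some, Part.bind_some] at hy2
    obtain ⟨z, hz, -⟩ := Part.mem_map_iff _ |>.1 hy2
    exact Part.dom_iff_mem.2 ⟨z, hz⟩
  have hcomp : ∀ x, (U x).Dom → ∃ s, halts c s x = true := by
    intro x h
    obtain ⟨z, hz⟩ := Part.dom_iff_mem.1 h
    have hmem : Encodable.encode z ∈ c.eval (Encodable.encode x) := by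
      rw [hc]
      simp only [Encodable.encodek, Part.coe_some, Part.bind_some]
      exact Part.mem_map_iff _ |>.2 ⟨z, hz, rfl⟩
    obtain ⟨k, hk⟩ := evaln_complete.1 hmem
    refine ⟨k, ?_⟩
    rw [halts, Option.isSome_iff_exists]
    exact ⟨_, hk⟩
  obtain ⟨k₀, hk₀⟩ : ∃ k₀ : ℕ, (4/(ε:ℝ)) < 2 ^ k₀ := pow_unbounded_of_one_lt _ (by norm_num)
  set b : ℕ := ⌈(4*(k₀:ℝ))/(ε:ℝ)⌉₊ + 1 with hbdef
  have hb : 0 < b := Nat.succ_pos _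
  obtain ⟨aa, N₀, hN₀, hfreq⟩ := exists_params U b hb
  set N₂ : ℕ := ⌈(4*(k₀:ℝ))/(ε:ℝ)⌉₊ with hN₂def
  refine ⟨Alg c aa b k₀ N₀, Alg_partrec c aa b k₀ N₀, ?_, ?_⟩
  · intro x
    exact ⟨fun h => alg_true_dom hsound h,
           fun h => alg_false_not_dom hLT hsound hb hN₀ h⟩
  · have hnonneg : ∀ n, (0:ℝ) ≤ errRate U (Alg c aa b k₀ N₀) n := by
      intro n
      rw [errRate]
      positivity
    have hbound : Filter.IsBoundedUnder (· ≥ ·) Filter.atTop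
        (fun n => errRate U (Alg c aa b k₀ N₀) n) :=
      ⟨0, Filter.eventually_map.2 (Filter.Eventually.of_forall hnonneg)⟩
    apply Filter.liminf_le_of_frequently_le _ hbound
    rw [Filter.frequently_atTop]
    intro N
    obtain ⟨n, hn1, hgood⟩ := hfreq (max N (max N₀ (max k₀ N₂)))
    have hnN : N ≤ n := le_trans (le_max_left _ _) hn1
    have hnN₀ : N₀ ≤ n := le_trans (le_trans (le_max_left _ _) (le_max_right _ _)) hn1
    have hnk₀ : k₀ ≤ n := le_trans (le_trans (le_trans (le_max_left _ _) (le_max_right _ _)) (le_max_right _ _)) hn1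
    have hnN₂ : N₂ ≤ n := le_trans (le_trans (le_trans (le_max_right _ _) (le_max_right _ _)) (le_max_right _ _)) hn1
    refine ⟨n, hnN, ?_⟩
    have hcount := good_count (k₀ := k₀) hLT hsound hcomp hb hN₀ hgood hnN₀
    have h2pos : (0:ℝ) < 2 ^ (n+1) := by positivity
    rw [errRate, div_le_iff₀ h2pos]
    have hcast : ({x : List Bool | x.length ≤ n ∧ ErrorPoint U (Alg c aa b k₀ N₀) x}.ncard : ℝ)
        ≤ ((2 ^ (n + 1 - k₀) + k₀ * (2 ^ (n + 1) / b + 1) : ℕ) : ℝ) := by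
      exact_mod_cast hcount
    -- three bounds
    have hpow : ((2:ℝ)) ^ (n + 1 - k₀) * 2 ^ k₀ = 2 ^ (n + 1) := by
      rw [← pow_add]
      congr 1
      omega
    have h2k : (0:ℝ) < 2 ^ k₀ := by positivity
    have f1 : ((2:ℝ)) ^ (n + 1 - k₀) ≤ ((ε:ℝ)/4) * 2 ^ (n + 1) := by
      rw [← hpow]
      have h1 : (1:ℝ) ≤ ((ε:ℝ)/4) * 2 ^ k₀ := by
        rw [div_mul_eq_mul_div, le_div_iff₀ (by norm_num : (0:ℝ) < 4)]
        have := (div_lt_iff₀ hεR).1 hk₀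
        nlinarith
      nlinarith [pow_pos (by norm_num : (0:ℝ) < 2) (n + 1 - k₀)]
    have f2 : ((k₀:ℝ)) * ((2 ^ (n + 1) / b : ℕ) : ℝ) ≤ ((ε:ℝ)/4) * 2 ^ (n + 1) := by
      have hdle : (((2 ^ (n + 1) / b : ℕ)) : ℝ) ≤ (2:ℝ) ^ (n + 1) / (b:ℝ) := by
        have := Nat.cast_div_le (α := ℝ) (m := 2 ^ (n + 1)) (n := b)
        simpa using this
      have hbR : (0:ℝ) < (b:ℝ) := by exact_mod_cast hb
      have hkb : (k₀:ℝ) ≤ ((ε:ℝ)/4) * b := by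
        have hceil : (4*(k₀:ℝ))/(ε:ℝ) ≤ (b:ℝ) := by
          rw [hbdef]
          push_cast
          have := Nat.le_ceil ((4*(k₀:ℝ))/(ε:ℝ))
          linarith
        rw [div_le_iff₀ hεR] at hceil
        nlinarith
      calc ((k₀:ℝ)) * ((2 ^ (n + 1) / b : ℕ) : ℝ)
          ≤ (k₀:ℝ) * ((2:ℝ) ^ (n + 1) / (b:ℝ)) := by
            exact mul_le_mul_of_nonneg_left hdle (by positivity)
        _ ≤ ((ε:ℝ)/4) * 2 ^ (n + 1) := by
            rw [mul_div_assoc']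
            rw [div_le_iff₀ hbR]
            nlinarith
    have f3 : ((k₀:ℝ)) ≤ ((ε:ℝ)/4) * 2 ^ (n + 1) := by
      have hn2 : ((n:ℝ)) + 1 ≤ 2 ^ (n + 1) := by
        have : n + 1 < 2 ^ (n + 1) := Nat.lt_two_pow_self
        exact_mod_cast this.le
      have hceil : (4*(k₀:ℝ))/(ε:ℝ) ≤ (n:ℝ) + 1 := by
        have h1 := Nat.le_ceil ((4*(k₀:ℝ))/(ε:ℝ))
        have h2 : ((N₂:ℝ)) ≤ (n:ℝ) := by exact_mod_cast hnN₂
        rw [hN₂def] at h2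
        linarith
      rw [div_le_iff₀ hεR] at hceil
      nlinarith
    have hfin : ((2 ^ (n + 1 - k₀) + k₀ * (2 ^ (n + 1) / b + 1) : ℕ) : ℝ)
        ≤ (ε:ℝ) * 2 ^ (n + 1) := by
      push_cast
      linarith [f1, f2, f3, hεR, h2pos]
    linarith

end LTP

/-- for a left-total optimal machine, there are algorithms making no wrong
answers whose liminf error rate is arbitrarily small. -/
theorem leftTotal_exists_no_error_small_liminf (U : List Bool →. ℕ)
    (hU : OptimalMachine U) (hLT : LeftTotal U) (ε : ℚ) (hε : 0 < ε) :
    ∃ A : List Bool →. Bool, Partrec A ∧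
      (∀ x, (true ∈ A x → (U x).Dom) ∧ (false ∈ A x → ¬(U x).Dom)) ∧
      Filter.liminf (fun n => errRate U A n) Filter.atTop ≤ (ε : ℝ) := by
  exact LTP.main U hU hLT ε hε
end

section
/- Let U be an optimal machine. The sequence ρ_n(U) of halting fractions does not converge: there is no real number L such that ρ_n(U) → L as n → ∞. -/
open Filter

open Encodable

namespace HNC

theorem pair_mono {a a' b b' : ℕ} (ha : a ≤ a') (hb : b ≤ b') :
    Nat.pair a b ≤ Nat.pair a' b' := by
  unfold Nat.pair
  split <;> split
  · nlinarith
  · nlinarith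
  · nlinarith
  · nlinarith

def Gb : ℕ → ℕ := fun m => Nat.rec 0 (fun _ ih => Nat.pair 1 ih + 1) m

theorem Gb_succ (m : ℕ) : Gb (m + 1) = Nat.pair 1 (Gb m) + 1 := rfl

theorem Gb_mono : Monotone Gb := by
  apply monotone_nat_of_le_succ
  intro m
  rw [Gb_succ]
  exact le_trans (Nat.right_le_pair 1 (Gb m)) (Nat.le_succ _)

theorem encode_le_Gb : ∀ (q : List Bool) (m : ℕ), q.length ≤ m → encode q ≤ Gb m := by
  intro q
  induction q with
  | nil => intro m _; rw [Encodable.encode_list_nil]; exact Nat.zero_le _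
  | cons b l ih =>
    intro m hm
    cases m with
    | zero => simp at hm
    | succ m =>
      rw [Encodable.encode_list_cons, Gb_succ]
      have hb : encode b ≤ 1 := by cases b <;> simp
      have hl : encode l ≤ Gb m := ih m (by simpa using hm)
      exact Nat.succ_le_succ (pair_mono hb hl)

def idxN : List Bool → ℕ := fun x => x.foldr (fun b acc => 2 * acc + cond b 1 0) 0

theorem idxN_cons (b : Bool) (l : List Bool) :
    idxN (b :: l) = 2 * idxN l + cond b 1 0 := rfl

theorem idxN_inj : ∀ (x y : List Bool), x.length = y.length → idxN x = idxN y → x = y := by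
  intro x
  induction x with
  | nil => intro y h _; cases y with
    | nil => rfl
    | cons c m => simp at h
  | cons b l ih =>
    intro y h he
    cases y with
    | nil => simp at h
    | cons c m =>
      rw [idxN_cons, idxN_cons] at he
      have hb : cond b 1 0 = cond c 1 0 ∧ idxN l = idxN m := by
        cases b <;> cases c <;> simp at he ⊢ <;> omega
      have : b = c := by cases b <;> cases c <;> simp at hb <;> try rfl
      subst this
      have := ih m (by simpa using h) hb.2
      rw [this]

theorem finite_len_le (m : ℕ) : {q : List Bool | q.length ≤ m}.Finite := by
  have himg : encode '' {q : List Bool | q.length ≤ m} ⊆ ↑(Finset.range (Gb m + 1)) := by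
    rintro e ⟨q, hq, rfl⟩
    simp only [Finset.coe_range, Set.mem_Iio]
    exact Nat.lt_succ_of_le (encode_le_Gb q m hq)
  have : (encode '' {q : List Bool | q.length ≤ m}).Finite :=
    Set.Finite.subset (Finset.range (Gb m + 1)).finite_toSet himg
  exact Set.Finite.of_finite_image this (encode_injective.injOn)

theorem ncard_len_eq (n : ℕ) : Set.ncard {x : List Bool | x.length = n} = 2 ^ n := by
  rw [← Nat.card_coe_set_eq]
  have e : {x : List Bool | x.length = n} ≃ List.Vector Bool n := Equiv.refl _
  rw [Nat.card_congr e, Nat.card_eq_fintype_card, card_vector, Fintype.card_bool]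


open Nat.Partrec (Code)
open Nat.Partrec.Code

def okb (cU : Code) (m t e : ℕ) : Bool :=
  match decode₂ (List Bool) e with
  | some q => decide (q.length ≤ m) && (evaln t cU e).isSome
  | none => false

def lf (cU : Code) (m t : ℕ) : List ℕ := (List.range (Gb m + 1)).filter (okb cU m t)

def cnt (cU : Code) (m t : ℕ) : ℕ := (lf cU m t).length

def mx (cU : Code) (m t : ℕ) : ℕ :=
  ((lf cU m t).map (fun e => (evaln t cU e).getD 0)).foldr max 0

theorem okb_encode (cU : Code) (m t : ℕ) (q : List Bool) :
    okb cU m t (encode q) = ((decide (q.length ≤ m)) && (evaln t cU (encode q)).isSome) := by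
  unfold okb
  rw [decode₂_encode]

theorem okb_some {cU : Code} {m t e : ℕ} (h : okb cU m t e = true) :
    ∃ q : List Bool, encode q = e ∧ q.length ≤ m ∧ (evaln t cU e).isSome := by
  unfold okb at h
  rcases hd : decode₂ (List Bool) e with _ | q
  · rw [hd] at h; simp at h
  · rw [hd] at h
    simp only [Bool.and_eq_true, decide_eq_true_eq] at h
    exact ⟨q, mem_decode₂.1 (by rw [hd]; rfl), h.1, h.2⟩

theorem mem_lf {cU : Code} {m t e : ℕ} :
    e ∈ lf cU m t ↔ e < Gb m + 1 ∧ okb cU m t e = true := by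
  unfold lf
  rw [List.mem_filter, List.mem_range]

theorem mem_lf_encode {cU : Code} {m t : ℕ} {q : List Bool}
    (hq : q.length ≤ m) (hs : (evaln t cU (encode q)).isSome) : encode q ∈ lf cU m t := by
  rw [mem_lf]
  refine ⟨Nat.lt_succ_of_le (encode_le_Gb q m hq), ?_⟩
  rw [okb_encode]
  simp [hq, hs]

theorem cnt_eq_ncard (cU : Code) (m t : ℕ) :
    cnt cU m t
      = Set.ncard {q : List Bool | q.length ≤ m ∧ (evaln t cU (encode q)).isSome = true} := by
  have himg : encode '' {q : List Bool | q.length ≤ m ∧ (evaln t cU (encode q)).isSome = true}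
      = ↑(lf cU m t).toFinset := by
    ext e
    simp only [Set.mem_image, Set.mem_setOf_eq, Finset.coe_sort_coe, List.coe_toFinset,
      Set.mem_setOf_eq, List.mem_toFinset]
    constructor
    · rintro ⟨q, ⟨h1, h2⟩, rfl⟩
      exact mem_lf_encode h1 h2
    · intro he
      rcases okb_some (mem_lf.1 he).2 with ⟨q, rfl, h1, h2⟩
      exact ⟨q, ⟨h1, h2⟩, rfl⟩
  have hnd : (lf cU m t).Nodup := (List.nodup_range).filter _
  calc cnt cU m t = (lf cU m t).toFinset.card := (List.toFinset_card_of_nodup hnd).symm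
    _ = Set.ncard (↑(lf cU m t).toFinset : Set ℕ) := (Set.ncard_coe_finset _).symm
    _ = _ := by rw [← himg, Set.ncard_image_of_injective _ encode_injective]

theorem le_foldr_max {a : ℕ} : ∀ (l : List ℕ) (b : ℕ), a ∈ l → a ≤ l.foldr max b := by
  intro l
  induction l with
  | nil => intro b h; simp at h
  | cons x xs ih =>
    intro b h
    rcases List.mem_cons.1 h with rfl | h
    · exact le_max_left _ _
    · exact le_trans (ih b h) (le_max_right _ _)

theorem le_mx {cU : Code} {m t : ℕ} {q : List Bool} (hq : q.length ≤ m) {w : ℕ}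
    (hw : w ∈ evaln t cU (encode q)) : w ≤ mx cU m t := by
  have hs : (evaln t cU (encode q)).isSome := by
    rcases hw with h; exact Option.isSome_iff_exists.2 ⟨w, hw⟩
  have hm : (evaln t cU (encode q)).getD 0 ∈ (lf cU m t).map (fun e => (evaln t cU e).getD 0) :=
    List.mem_map_of_mem (mem_lf_encode hq hs)
  have : (evaln t cU (encode q)).getD 0 = w := by
    rw [Option.mem_def] at hw; rw [hw]; rfl
  rw [← this]
  exact le_foldr_max _ 0 hm


theorem code_of_partrec {U : List Bool →. ℕ} (h : Partrec U) :
    ∃ c : Code, ∀ q : List Bool, c.eval (encode q) = U q := by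
  rcases exists_code.1 h with ⟨c, hc⟩
  refine ⟨c, fun q => ?_⟩
  have := congrFun hc (encode q)
  rw [this]
  simp [encodek]
  exact Part.map_id' Encodable.encode_nat (U q)

section WithU

variable {U : List Bool →. ℕ} {cU : Code}

theorem dom_of_evaln (hcU : ∀ q : List Bool, cU.eval (encode q) = U q)
    {t : ℕ} {q : List Bool} (h : (evaln t cU (encode q)).isSome = true) : (U q).Dom := by
  rcases Option.isSome_iff_exists.1 h with ⟨w, hw⟩
  have : w ∈ cU.eval (encode q) := evaln_sound hw
  rw [hcU q] at this
  exact Part.dom_iff_mem.2 ⟨w, this⟩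

theorem mem_of_evaln (hcU : ∀ q : List Bool, cU.eval (encode q) = U q)
    {t : ℕ} {q : List Bool} {w : ℕ} (h : w ∈ evaln t cU (encode q)) : w ∈ U q := by
  have : w ∈ cU.eval (encode q) := evaln_sound h
  rwa [hcU q] at this

theorem evaln_of_dom (hcU : ∀ q : List Bool, cU.eval (encode q) = U q)
    {q : List Bool} (h : (U q).Dom) : ∃ t, (evaln t cU (encode q)).isSome = true := by
  have hm : (U q).get h ∈ U q := Part.get_mem h
  have hm2 : (U q).get h ∈ cU.eval (encode q) := by rw [hcU q]; exact hm
  rcases evaln_complete.1 hm2 with ⟨t, ht⟩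
  exact ⟨t, Option.isSome_iff_exists.2 ⟨_, ht⟩⟩

/-- the halting set of `U` up to length `m` -/
def Hset (U : List Bool →. ℕ) (m : ℕ) : Set (List Bool) :=
  {x : List Bool | x.length ≤ m ∧ (U x).Dom}

theorem Hset_finite (U : List Bool →. ℕ) (m : ℕ) : (Hset U m).Finite :=
  Set.Finite.subset (finite_len_le m) (fun q hq => hq.1)

open Classical in
theorem exists_cnt_ge (hcU : ∀ q : List Bool, cU.eval (encode q) = U q) (m : ℕ) :
    ∃ t, (Hset U m).ncard ≤ cnt cU m t := by
  classical
  set F := (Hset_finite U m).toFinset with hF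
  set g : List Bool → ℕ := fun q =>
    if h : (U q).Dom then Nat.find (evaln_of_dom hcU h) else 0 with hg
  refine ⟨F.sup g, ?_⟩
  rw [cnt_eq_ncard]
  apply Set.ncard_le_ncard
  · intro q hq
    refine ⟨hq.1, ?_⟩
    have hdom : (U q).Dom := hq.2
    have h1 : (evaln (g q) cU (encode q)).isSome = true := by
      rw [hg]; simp only [hdom, dif_pos]
      exact Nat.find_spec (evaln_of_dom hcU hdom)
    have hle : g q ≤ F.sup g := Finset.le_sup (by rw [hF]; exact (Hset_finite U m).mem_toFinset.2 hq)
    rcases Option.isSome_iff_exists.1 h1 with ⟨w, hw⟩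
    exact Option.isSome_iff_exists.2 ⟨w, evaln_mono hle hw⟩
  · exact Set.Finite.subset (finite_len_le m) (fun q hq => hq.1)

end WithU

theorem KU_le {V : List Bool →. ℕ} {w : ℕ} {p : List Bool} (h : w ∈ V p) :
    KU V w ≤ (p.length : ℕ∞) :=
  sInf_le ⟨p, h, rfl⟩

theorem exists_short_prog {V : List Bool →. ℕ} {w : ℕ} {N : ℕ} (h : KU V w ≤ (N : ℕ∞)) :
    ∃ p : List Bool, w ∈ V p ∧ p.length ≤ N := by
  by_contra hc
  push_neg at hc
  have : ((N : ℕ∞) + 1) ≤ KU V w := by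
    apply le_sInf
    rintro l ⟨p, hp, rfl⟩
    have : N + 1 ≤ p.length := hc p hp
    exact_mod_cast this
  have h2 : ((N : ℕ∞) + 1) ≤ (N : ℕ∞) := le_trans this h
  have h3 : ((N + 1 : ℕ) : ℕ∞) ≤ ((N : ℕ) : ℕ∞) := by push_cast; exact h2
  have h4 : N + 1 ≤ N := by exact_mod_cast h3
  omega

def aOf (n : ℕ) : ℕ := n.unpair.1.unpair.1
def uOf (n : ℕ) : ℕ := n.unpair.2.unpair.1
def vOf (n : ℕ) : ℕ := n.unpair.2.unpair.2

def thr (cU : Code) (n t : ℕ) : Bool :=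
  decide (uOf n * 2 ^ (n + aOf n + 1) ≤ cnt cU (n + aOf n) t * (vOf n + 1))

theorem thr_iff (cU : Code) (n t : ℕ) :
    thr cU n t = true ↔
      uOf n * 2 ^ (n + aOf n + 1) ≤ cnt cU (n + aOf n) t * (vOf n + 1) := by
  unfold thr
  exact ⟨of_decide_eq_true, decide_eq_true⟩

def VO (cU : Code) (x : List Bool) (t : ℕ) : Option ℕ :=
  cond (thr cU x.length t) (some (mx cU (x.length + aOf x.length) t + 1 + idxN x)) none

def Vm (cU : Code) : List Bool →. ℕ := fun x => Nat.rfindOpt (VO cU x)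

theorem mem_Vm {cU : Code} {x : List Bool} {n : ℕ} (hn : x.length = n)
    (ht : ∃ t, thr cU n t = true) :
    mx cU (n + aOf n) (Nat.find ht) + 1 + idxN x ∈ Vm cU x := by
  have h0 : thr cU n (Nat.find ht) = true := Nat.find_spec ht
  have hmin : ∀ s, s < Nat.find ht → thr cU n s = false := by
    intro s hs
    have := Nat.find_min ht hs
    simpa using this
  show _ ∈ Nat.rfindOpt (VO cU x)
  unfold Nat.rfindOpt
  apply Part.mem_bind_iff.2
  refine ⟨Nat.find ht, ?_, ?_⟩
  · apply Nat.mem_rfind.2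
    constructor
    · simp [VO, hn, h0, Part.coe_some, Part.mem_some_iff]
    · intro s hs
      simp [VO, hn, hmin s hs, Part.coe_some, Part.mem_some_iff]
  · simp [VO, hn, h0, Part.coe_some, Part.mem_some_iff]

theorem main_count {U : List Bool →. ℕ} {cU : Code} (hcU : ∀ q : List Bool, cU.eval (encode q) = U q)
    {a : ℕ} (hopt : ∀ w : ℕ, KU U w ≤ KU (Vm cU) w + (a : ℕ∞))
    {n : ℕ} (ha : aOf n = a) (ht : ∃ t, thr cU n t = true) :
    cnt cU (n + a) (Nat.find ht) + 2 ^ n ≤ (Hset U (n + a)).ncard := by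
  classical
  set t₀ := Nat.find ht with ht₀
  set m := n + a with hm
  -- the distinguished values
  set w : List Bool → ℕ := fun x => mx cU m t₀ + 1 + idxN x with hw
  have hVm : ∀ x : List Bool, x.length = n → w x ∈ Vm cU x := by
    intro x hx
    have := mem_Vm hx ht
    rwa [ha, ← hm, ← ht₀] at this
  have hKU : ∀ x : List Bool, x.length = n → KU U (w x) ≤ ((m : ℕ) : ℕ∞) := by
    intro x hx
    have h1 : KU (Vm cU) (w x) ≤ (n : ℕ∞) := by
      have := KU_le (hVm x hx)
      rwa [hx] at this
    calc KU U (w x) ≤ KU (Vm cU) (w x) + (a : ℕ∞) := hopt _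
      _ ≤ (n : ℕ∞) + (a : ℕ∞) := add_le_add h1 le_rfl
      _ = ((m : ℕ) : ℕ∞) := by rw [hm]; push_cast; rfl
  have hEx : ∀ x : List Bool, x.length = n → ∃ q : List Bool, w x ∈ U q ∧ q.length ≤ m :=
    fun x hx => exists_short_prog (hKU x hx)
  choose φ hφ1 hφ2 using hEx
  set ψ : List Bool → List Bool := fun x => if hx : x.length = n then φ x hx else [] with hψ
  set Sn : Set (List Bool) := {x : List Bool | x.length = n} with hSn
  set Esub : Set (List Bool) :=
    {q : List Bool | q.length ≤ m ∧ (evaln t₀ cU (encode q)).isSome = true} with hEsub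
  have hE_sub : Esub ⊆ Hset U m := fun q hq => ⟨hq.1, dom_of_evaln hcU hq.2⟩
  have hψ_mem : ∀ x ∈ Sn, ψ x ∈ Hset U m := by
    intro x hx
    have hx' : x.length = n := hx
    simp only [hψ, hx', dif_pos]
    exact ⟨hφ2 x hx', Part.dom_iff_mem.2 ⟨w x, hφ1 x hx'⟩⟩
  have hψ_disj : ∀ x ∈ Sn, ψ x ∉ Esub := by
    intro x hx hmem
    have hx' : x.length = n := hx
    have hq : ψ x = φ x hx' := by simp [hψ, hx']
    rcases Option.isSome_iff_exists.1 hmem.2 with ⟨w', hw'⟩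
    have h1 : w' ∈ U (ψ x) := mem_of_evaln hcU hw'
    have h2 : w x ∈ U (ψ x) := by rw [hq]; exact hφ1 x hx'
    have h3 : w' = w x := Part.mem_unique h1 h2
    have h4 : w' ≤ mx cU m t₀ := le_mx hmem.1 hw'
    rw [h3] at h4
    have h5 : mx cU m t₀ + 1 + idxN x ≤ mx cU m t₀ := h4
    omega
  have hinj : Set.InjOn ψ Sn := by
    intro x hx y hy he
    have hx' : x.length = n := hx
    have hy' : y.length = n := hy
    have h1 : w x ∈ U (ψ x) := by simp only [hψ, hx', dif_pos]; exact hφ1 x hx'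
    have h2 : w y ∈ U (ψ x) := by rw [he]; simp only [hψ, hy', dif_pos]; exact hφ1 y hy'
    have h3 : w x = w y := Part.mem_unique h1 h2
    have h4 : idxN x = idxN y := by rw [hw] at h3; simpa using h3
    exact idxN_inj x y (by rw [hx', hy']) h4
  have hdisj : Disjoint Esub (ψ '' Sn) := by
    rw [Set.disjoint_right]
    rintro q ⟨x, hx, rfl⟩
    exact hψ_disj x hx
  have hfin : (Hset U m).Finite := Hset_finite U m
  have hEfin : Esub.Finite := hfin.subset hE_sub
  have hψfin : (ψ '' Sn).Finite := hfin.subset (fun q ⟨x, hx, hq⟩ => hq ▸ hψ_mem x hx)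
  have hcard : Esub.ncard + 2 ^ n ≤ (Hset U m).ncard := by
    have h1 : (ψ '' Sn).ncard = 2 ^ n := by
      rw [Set.ncard_image_of_injOn hinj, hSn, ncard_len_eq]
    have h2 : (Esub ∪ ψ '' Sn).ncard = Esub.ncard + 2 ^ n := by
      rw [Set.ncard_union_eq hdisj hEfin hψfin, h1]
    rw [← h2]
    apply Set.ncard_le_ncard _ hfin
    apply Set.union_subset hE_sub
    rintro q ⟨x, hx, rfl⟩
    exact hψ_mem x hx
  rw [cnt_eq_ncard]
  exact hcard



section PrimrecFacts

theorem pGb : Primrec Gb := by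
  have hh : Primrec₂ (fun (_ : ℕ) (p : ℕ × ℕ) => Nat.pair 1 p.2 + 1) :=
    (Primrec.succ.comp
      (Primrec₂.natPair.comp (Primrec.const 1) (Primrec.snd.comp Primrec.snd))).to₂
  exact (Primrec.nat_rec' Primrec.id (Primrec.const 0) hh).of_eq (fun m => rfl)

theorem pPow : Primrec₂ ((· ^ ·) : ℕ → ℕ → ℕ) :=
  Primrec₂.unpaired'.1 Nat.Primrec.pow

variable (cU : Code)

theorem pokb : Primrec fun p : (ℕ × ℕ) × ℕ => okb cU p.1.1 p.1.2 p.2 := by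
  have ho : Primrec fun p : (ℕ × ℕ) × ℕ => decode₂ (List Bool) p.2 :=
    Primrec.decode₂.comp Primrec.snd
  have hlen : Primrec fun z : ((ℕ × ℕ) × ℕ) × List Bool => decide (z.2.length ≤ z.1.1.1) :=
    (PrimrecRel.comp Primrec.nat_le (Primrec.list_length.comp Primrec.snd)
      (Primrec.fst.comp (Primrec.fst.comp Primrec.fst))).decide
  have hev : Primrec fun z : ((ℕ × ℕ) × ℕ) × List Bool =>
      (evaln z.1.1.2 cU z.1.2).isSome :=
    Primrec.option_isSome.comp
      (Nat.Partrec.Code.primrec_evaln.comp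
        (Primrec.pair
          (Primrec.pair (Primrec.snd.comp (Primrec.fst.comp Primrec.fst)) (Primrec.const cU))
          (Primrec.snd.comp Primrec.fst)))
  have hg : Primrec₂ fun (p : (ℕ × ℕ) × ℕ) (q : List Bool) =>
      (decide (q.length ≤ p.1.1) && (evaln p.1.2 cU p.2).isSome) :=
    (Primrec.cond hlen hev (Primrec.const false)).to₂.of_eq (fun p q => by
      cases decide (q.length ≤ p.1.1) <;> simp)
  exact (Primrec.option_casesOn ho (Primrec.const false) hg).of_eq (fun p => by
    unfold okb
    cases decode₂ (List Bool) p.2 <;> rfl)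

theorem cnt_foldr (m t : ℕ) :
    cnt cU m t
      = (List.range (Gb m + 1)).foldr
          (fun e acc => bif okb cU m t e then acc + 1 else acc) 0 := by
  unfold cnt lf
  generalize List.range (Gb m + 1) = l
  induction l with
  | nil => rfl
  | cons x xs ih =>
    rcases h : okb cU m t x with _ | _ <;>
      simp [List.filter_cons, h, ih]

theorem mx_foldr (m t : ℕ) :
    mx cU m t
      = (List.range (Gb m + 1)).foldr
          (fun e acc => bif okb cU m t e then max ((evaln t cU e).getD 0) acc else acc) 0 := by
  unfold mx lf
  generalize List.range (Gb m + 1) = l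
  induction l with
  | nil => rfl
  | cons x xs ih =>
    rcases h : okb cU m t x with _ | _ <;>
      simp [List.filter_cons, h, ih]

theorem prange : Primrec fun p : ℕ × ℕ => List.range (Gb p.1 + 1) :=
  Primrec.list_range.comp (Primrec.succ.comp (pGb.comp Primrec.fst))

theorem pcnt : Primrec₂ (cnt cU) := by
  have hh : Primrec₂ fun (p : ℕ × ℕ) (z : ℕ × ℕ) =>
      bif okb cU p.1 p.2 z.1 then z.2 + 1 else z.2 := by
    have hok : Primrec fun y : (ℕ × ℕ) × ℕ × ℕ => okb cU y.1.1 y.1.2 y.2.1 :=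
      (pokb cU).comp (Primrec.pair Primrec.fst (Primrec.fst.comp Primrec.snd))
    exact (Primrec.cond hok
      (Primrec.succ.comp (Primrec.snd.comp Primrec.snd))
      (Primrec.snd.comp Primrec.snd)).to₂
  have := Primrec.list_foldr (prange) (Primrec.const 0) hh
  exact (this.to₂.of_eq (fun m t => (cnt_foldr cU m t).symm))

theorem pmx : Primrec₂ (mx cU) := by
  have hh : Primrec₂ fun (p : ℕ × ℕ) (z : ℕ × ℕ) =>
      bif okb cU p.1 p.2 z.1 then max ((evaln p.2 cU z.1).getD 0) z.2 else z.2 := by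
    have hok : Primrec fun y : (ℕ × ℕ) × ℕ × ℕ => okb cU y.1.1 y.1.2 y.2.1 :=
      (pokb cU).comp (Primrec.pair Primrec.fst (Primrec.fst.comp Primrec.snd))
    have hget : Primrec fun y : (ℕ × ℕ) × ℕ × ℕ => (evaln y.1.2 cU y.2.1).getD 0 :=
      Primrec₂.comp Primrec.option_getD
        (Nat.Partrec.Code.primrec_evaln.comp
          (Primrec.pair
            (Primrec.pair (Primrec.snd.comp Primrec.fst) (Primrec.const cU))
            (Primrec.fst.comp Primrec.snd)))
        (Primrec.const 0)
    exact (Primrec.cond hok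
      (Primrec₂.comp Primrec.nat_max hget (Primrec.snd.comp Primrec.snd))
      (Primrec.snd.comp Primrec.snd)).to₂
  have := Primrec.list_foldr (prange) (Primrec.const 0) hh
  exact (this.to₂.of_eq (fun m t => (mx_foldr cU m t).symm))

theorem paOf : Primrec aOf :=
  Primrec.fst.comp (Primrec.unpair.comp (Primrec.fst.comp Primrec.unpair))

theorem puOf : Primrec uOf :=
  Primrec.fst.comp (Primrec.unpair.comp (Primrec.snd.comp Primrec.unpair))

theorem pvOf : Primrec vOf :=
  Primrec.snd.comp (Primrec.unpair.comp (Primrec.snd.comp Primrec.unpair))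

theorem pthr : Primrec₂ (thr cU) := by
  have h1 : Primrec fun p : ℕ × ℕ => uOf p.1 * 2 ^ (p.1 + aOf p.1 + 1) :=
    Primrec₂.comp Primrec.nat_mul (puOf.comp Primrec.fst)
      (Primrec₂.comp pPow (Primrec.const 2)
        (Primrec.succ.comp
          (Primrec₂.comp Primrec.nat_add Primrec.fst (paOf.comp Primrec.fst))))
  have h2 : Primrec fun p : ℕ × ℕ => cnt cU (p.1 + aOf p.1) p.2 * (vOf p.1 + 1) :=
    Primrec₂.comp Primrec.nat_mul
      (Primrec₂.comp (pcnt cU)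
        (Primrec₂.comp Primrec.nat_add Primrec.fst (paOf.comp Primrec.fst)) Primrec.snd)
      (Primrec.succ.comp (pvOf.comp Primrec.fst))
  have := PrimrecRel.comp Primrec.nat_le h1 h2
  exact (this.decide.to₂.of_eq (fun n t => rfl))

theorem pidxN : Primrec idxN := by
  have hh : Primrec₂ fun (_ : List Bool) (z : Bool × ℕ) => 2 * z.2 + cond z.1 1 0 :=
    (Primrec₂.comp Primrec.nat_add
      (Primrec₂.comp Primrec.nat_mul (Primrec.const 2) (Primrec.snd.comp Primrec.snd))
      (Primrec.cond (Primrec.fst.comp Primrec.snd) (Primrec.const 1) (Primrec.const 0))).to₂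
  exact (Primrec.list_foldr Primrec.id (Primrec.const 0) hh).of_eq (fun l => rfl)

theorem pVO : Computable₂ (VO cU) := by
  have hthr' : Primrec fun p : List Bool × ℕ => thr cU p.1.length p.2 :=
    Primrec₂.comp (pthr cU) (Primrec.list_length.comp Primrec.fst) Primrec.snd
  have hval : Primrec fun p : List Bool × ℕ =>
      mx cU (p.1.length + aOf p.1.length) p.2 + 1 + idxN p.1 := by
    have hlen : Primrec fun p : List Bool × ℕ => p.1.length :=
      Primrec.list_length.comp Primrec.fst
    exact Primrec₂.comp Primrec.nat_add
      (Primrec.succ.comp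
        (Primrec₂.comp (pmx cU)
          (Primrec₂.comp Primrec.nat_add hlen (paOf.comp hlen)) Primrec.snd))
      (pidxN.comp Primrec.fst)
  have : Primrec fun p : List Bool × ℕ =>
      bif thr cU p.1.length p.2
      then some (mx cU (p.1.length + aOf p.1.length) p.2 + 1 + idxN p.1)
      else none :=
    Primrec.cond hthr' (Primrec.option_some.comp hval) (Primrec.const none)
  exact (this.to₂.of_eq (fun x t => rfl)).to_comp

theorem Vm_partrec' : Partrec (Vm cU) :=
  Partrec.rfindOpt (pVO cU)

end PrimrecFacts

theorem Vm_partrec (cU : Code) : Partrec (Vm cU) := Vm_partrec' cU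

theorem haltRate_eq (U : List Bool →. ℕ) (m : ℕ) :
    haltRate U m = ((Hset U m).ncard : ℝ) / 2 ^ (m + 1) := rfl

theorem haltRate_nonneg (U : List Bool →. ℕ) (m : ℕ) : 0 ≤ haltRate U m := by
  rw [haltRate_eq]
  positivity

theorem combine_nat {u v m n a c0 H : ℕ} (hthr : u * 2 ^ (m + 1) ≤ c0 * (v + 1))
    (hcnt : c0 + 2 ^ n ≤ H) : u * 2 ^ (m + 1) + 2 ^ n * (v + 1) ≤ H * (v + 1) := by
  nlinarith [Nat.mul_le_mul_right (v + 1) hcnt]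

theorem real_bound {u v n a H : ℕ}
    (hnat : u * 2 ^ (n + a + 1) + 2 ^ n * (v + 1) ≤ H * (v + 1)) :
    (u : ℝ) / (v + 1) + 1 / 2 ^ (a + 1) ≤ (H : ℝ) / 2 ^ (n + a + 1) := by
  have h : ((u * 2 ^ (n + a + 1) + 2 ^ n * (v + 1) : ℕ) : ℝ) ≤ ((H * (v + 1) : ℕ) : ℝ) :=
    Nat.cast_le.2 hnat
  push_cast at h
  have hv : (0 : ℝ) < (v : ℝ) + 1 := by positivity
  have hp : (0 : ℝ) < (2 : ℝ) ^ (n + a + 1) := by positivity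
  have hq : (0 : ℝ) < (2 : ℝ) ^ (a + 1) := by positivity
  rw [div_add_div _ _ (ne_of_gt hv) (ne_of_gt hq), div_le_div_iff₀ (by positivity) hp]
  have hpow : (2 : ℝ) ^ (n + a + 1) = 2 ^ n * 2 ^ (a + 1) := by
    rw [show n + a + 1 = n + (a + 1) from by omega, pow_add]
  nlinarith [mul_le_mul_of_nonneg_right h (le_of_lt hq)]

theorem nat_of_real {u v M H : ℕ} (h : (u : ℝ) / (v + 1) ≤ (H : ℝ) / 2 ^ M) :
    u * 2 ^ M ≤ H * (v + 1) := by
  have hv : (0 : ℝ) < (v : ℝ) + 1 := by positivity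
  have hp : (0 : ℝ) < (2 : ℝ) ^ M := by positivity
  rw [div_le_div_iff₀ hv hp] at h
  have : ((u * 2 ^ M : ℕ) : ℝ) ≤ ((H * (v + 1) : ℕ) : ℝ) := by push_cast; linarith
  exact_mod_cast this




open Encodable in
theorem final_step {U : List Bool →. ℕ} {cU : Code}
    (hcU : ∀ q : List Bool, cU.eval (encode q) = U q)
    {a : ℕ} (hopt : ∀ w : ℕ, KU U w ≤ KU (Vm cU) w + (a : ℕ∞))
    (u v r : ℕ)
    (hterm : ∀ m, r ≤ m → u * 2 ^ (m + 1) ≤ (Hset U m).ncard * (v + 1)) :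
    ∃ m, r ≤ m ∧ (u : ℝ) / (v + 1) + 1 / 2 ^ (a + 1) ≤ haltRate U m := by
  obtain ⟨n, haOf, huOf, hvOf, hnr⟩ :
      ∃ n, aOf n = a ∧ uOf n = u ∧ vOf n = v ∧ r ≤ n :=
    ⟨Nat.pair (Nat.pair a r) (Nat.pair u v), by simp [aOf], by simp [uOf],
      by simp [vOf], le_trans (Nat.right_le_pair a r) (Nat.left_le_pair _ _)⟩
  refine ⟨n + a, by omega, ?_⟩
  obtain ⟨t1, ht1⟩ := exists_cnt_ge hcU (n + a)
  have hthr : ∃ t, thr cU n t = true := by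
    refine ⟨t1, (thr_iff cU n t1).2 ?_⟩
    rw [haOf, huOf, hvOf]
    exact le_trans (hterm (n + a) (by omega)) (Nat.mul_le_mul_right _ ht1)
  have hmain := main_count hcU hopt haOf hthr
  have h5 := (thr_iff cU n (Nat.find hthr)).1 (Nat.find_spec hthr)
  rw [haOf, huOf, hvOf] at h5
  have hnat : u * 2 ^ (n + a + 1) + 2 ^ n * (v + 1) ≤ (Hset U (n + a)).ncard * (v + 1) :=
    combine_nat (a := a) (n := n) h5 hmain
  rw [haltRate_eq]
  exact real_bound hnat

end HNC

/-- the sequence of halting fractions of an optimal machine does not converge. -/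
theorem haltRate_not_convergent (U : List Bool →. ℕ) (hU : OptimalMachine U) :
    ¬ ∃ L : ℝ, Filter.Tendsto (fun n => haltRate U n) Filter.atTop (nhds L) := by
  rintro ⟨L, hL⟩
  obtain ⟨hUpr, hopt'⟩ := hU
  obtain ⟨cU, hcU⟩ := HNC.code_of_partrec hUpr
  obtain ⟨a, hopt⟩ := hopt' _ (HNC.Vm_partrec cU)
  have hL0 : 0 ≤ L := ge_of_tendsto' hL (fun m => HNC.haltRate_nonneg U m)
  obtain ⟨u, v, hth_ev, hgt⟩ :
      ∃ u v : ℕ,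
        (∀ᶠ m in Filter.atTop, u * 2 ^ (m + 1) ≤ (HNC.Hset U m).ncard * (v + 1)) ∧
        L - 1 / 2 ^ (a + 2) < (u : ℝ) / (v + 1) := by
    by_cases hLc : L < 1 / 2 ^ (a + 2)
    · refine ⟨0, 0, Filter.Eventually.of_forall (fun m => by simp), ?_⟩
      have h0 : L - 1 / 2 ^ (a + 2) < 0 := by linarith
      calc L - 1 / 2 ^ (a + 2) < 0 := h0
        _ ≤ ((0 : ℕ) : ℝ) / ((0 : ℕ) + 1) := by norm_num
    · push_neg at hLc
      have hpos : (0 : ℝ) < 1 / 2 ^ (a + 2) := by positivity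
      obtain ⟨q, hq1, hq2⟩ := exists_rat_btwn (show L - 1 / 2 ^ (a + 2) < L by linarith)
      have hq0 : (0 : ℝ) < (q : ℝ) := lt_of_le_of_lt (by linarith) hq1
      have hqpos : 0 < q := by exact_mod_cast hq0
      have hden : (q.den - 1) + 1 = q.den := Nat.succ_pred_eq_of_pos q.pos
      have hqcast : ((q.num.toNat : ℝ)) / (((q.den - 1 : ℕ) : ℝ) + 1) = (q : ℝ) := by
        have hnum : (q.num.toNat : ℤ) = q.num := Int.toNat_of_nonneg (le_of_lt (Rat.num_pos.2 hqpos))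
        rw [Rat.cast_def]
        rw [show (((q.den - 1 : ℕ) : ℝ) + 1) = (q.den : ℝ) by
          rw [← hden]; push_cast; ring]
        congr 1
        exact_mod_cast congrArg (fun z : ℤ => (z : ℝ)) hnum
      refine ⟨q.num.toNat, q.den - 1, ?_, ?_⟩
      · have hev : ∀ᶠ m in Filter.atTop, (q : ℝ) < haltRate U m :=
          hL.eventually (lt_mem_nhds hq2)
        filter_upwards [hev] with m hm
        have hle : ((q.num.toNat : ℝ)) / (((q.den - 1 : ℕ) : ℝ) + 1)
            ≤ ((HNC.Hset U m).ncard : ℝ) / 2 ^ (m + 1) := by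
          rw [hqcast, ← HNC.haltRate_eq]
          exact le_of_lt hm
        exact HNC.nat_of_real (by exact_mod_cast hle)
      · rw [show (((q.den - 1 : ℕ) : ℝ) + 1) = ((q.den - 1 : ℕ) : ℝ) + 1 from rfl] at hqcast
        calc L - 1 / 2 ^ (a + 2) < (q : ℝ) := hq1
          _ = _ := hqcast.symm
  have hlt : L < L + 1 / 2 ^ (a + 2) := by
    have hpos : (0 : ℝ) < 1 / 2 ^ (a + 2) := by positivity
    linarith
  have hev2 : ∀ᶠ m in Filter.atTop, haltRate U m < L + 1 / 2 ^ (a + 2) :=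
    hL.eventually (gt_mem_nhds hlt)
  obtain ⟨M1, hM1⟩ := Filter.eventually_atTop.1 hth_ev
  obtain ⟨M2, hM2⟩ := Filter.eventually_atTop.1 hev2
  obtain ⟨m, hm1, hm2⟩ :=
    HNC.final_step hcU hopt u v (M1 + M2) (fun m hm => hM1 m (by omega))
  have h6 := hM2 m (by omega)
  have h1 : (1 : ℝ) / 2 ^ (a + 1) = 2 * (1 / 2 ^ (a + 2)) := by
    rw [pow_succ]
    ring
  linarith
end

section
/- Let U be a machine such that for every machine V there exists a total computable length-bounded function h with the property that U(h(x)) = V(x) whenever V(x) is defined (U(h(x)) may be defined arbitrarily when V(x) is undefined). Then U is effectively optimal. -/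
open Filter

namespace SemiTransAux

open Nat.Partrec (Code)
open Nat.Partrec.Code Encodable Denumerable

/-- Fold computing `((number of leading trues, rest after first false), the list itself)`. -/
def splitAux (z : List Bool) : (ℕ × List Bool) × List Bool :=
  z.foldr (fun b s => ((cond b (s.1.1 + 1) 0, cond b s.1.2 s.2), b :: s.2)) ((0, []), [])

lemma splitAux_cons (b : Bool) (z : List Bool) :
    splitAux (b :: z) =
      ((cond b ((splitAux z).1.1 + 1) 0, cond b (splitAux z).1.2 (splitAux z).2),
        b :: (splitAux z).2) := rfl

lemma splitAux_snd (z : List Bool) : (splitAux z).2 = z := by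
  induction z with
  | nil => rfl
  | cons b z ih => rw [splitAux_cons]; simp [ih]

def eOf (z : List Bool) : ℕ := (splitAux z).1.1
def xOf (z : List Bool) : List Bool := (splitAux z).1.2

lemma splitAux_encode (e : ℕ) (x : List Bool) :
    splitAux (List.replicate e true ++ false :: x) =
      ((e, x), List.replicate e true ++ false :: x) := by
  induction e with
  | zero =>
      rw [List.replicate_zero, List.nil_append, splitAux_cons, splitAux_snd]
      rfl
  | succ e ih =>
      rw [List.replicate_succ, List.cons_append, splitAux_cons, ih]
      rfl

lemma eOf_encode (e : ℕ) (x : List Bool) :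
    eOf (List.replicate e true ++ false :: x) = e := by
  simp [eOf, splitAux_encode]

lemma xOf_encode (e : ℕ) (x : List Bool) :
    xOf (List.replicate e true ++ false :: x) = x := by
  simp [xOf, splitAux_encode]

lemma splitAux_primrec : Primrec splitAux := by
  have h : Primrec₂ (fun (_ : List Bool)
      (p : Bool × ((ℕ × List Bool) × List Bool)) =>
      ((cond p.1 (p.2.1.1 + 1) 0, cond p.1 p.2.1.2 p.2.2), p.1 :: p.2.2)) := by
    have h' : Primrec (fun q : List Bool × (Bool × ((ℕ × List Bool) × List Bool)) =>
        ((cond q.2.1 (q.2.2.1.1 + 1) 0, cond q.2.1 q.2.2.1.2 q.2.2.2), q.2.1 :: q.2.2.2)) := by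
      refine Primrec.pair (Primrec.pair ?_ ?_) ?_
      · exact Primrec.cond (Primrec.fst.comp Primrec.snd)
          (Primrec.succ.comp <| Primrec.fst.comp <| Primrec.fst.comp <|
            Primrec.snd.comp Primrec.snd) (Primrec.const 0)
      · exact Primrec.cond (Primrec.fst.comp Primrec.snd)
          (Primrec.snd.comp <| Primrec.fst.comp <| Primrec.snd.comp Primrec.snd)
          (Primrec.snd.comp <| Primrec.snd.comp Primrec.snd)
      · exact Primrec.list_cons.comp (Primrec.fst.comp Primrec.snd)
          (Primrec.snd.comp <| Primrec.snd.comp Primrec.snd)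
    exact h'
  exact (Primrec.list_foldr Primrec.id (Primrec.const ((0, []), [])) h).of_eq
    fun z => rfl

lemma eOf_primrec : Primrec eOf :=
  Primrec.fst.comp (Primrec.fst.comp splitAux_primrec)

lemma xOf_primrec : Primrec xOf :=
  Primrec.snd.comp (Primrec.fst.comp splitAux_primrec)

/-- `Gfun U z` : decode a code index `e` from the prefix of `z`, run `φ_e(z)` to get
(the encoding of) a program `q`, then run `U q`. -/
def Gfun (U : List Bool →. ℕ) (z : List Bool) : Part ℕ :=
  ((ofNat Code (eOf z)).eval (encode z)).bind fun m =>
    ((decode (α := List Bool) m : Option (List Bool)) : Part (List Bool)).bind U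

lemma gfun_partrec {U : List Bool →. ℕ} (hU : Partrec U) : Partrec (Gfun U) := by
  have h1 : Partrec fun z : List Bool => (ofNat Code (eOf z)).eval (encode z) :=
    eval_part.comp ((Computable.ofNat Code).comp eOf_primrec.to_comp)
      Computable.encode
  refine h1.bind ?_
  have h2 : Partrec fun p : List Bool × ℕ =>
      ((decode (α := List Bool) p.2 : Option (List Bool)) : Part (List Bool)) :=
    Computable.ofOption (Computable.decode.comp Computable.snd)
  exact (h2.bind ((hU.comp Computable.snd).to₂)).to₂

/-- One dovetailed step: prefer the `V`-branch; on the `U∘φ`-branch, add one to the output. -/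
def Fstep (cV cG : Code) (z : List Bool) (t : ℕ) : Option ℕ :=
  (evaln t cV (encode (xOf z))) <|> (evaln t cG (encode z)).map Nat.succ

lemma fstep_computable (cV cG : Code) : Computable₂ (Fstep cV cG) := by
  have hV : Primrec₂ fun (z : List Bool) (t : ℕ) => evaln t cV (encode (xOf z)) :=
    Primrec.to₂ <| primrec_evaln.comp <|
      ((Primrec.snd).pair (Primrec.const cV)).pair
        (Primrec.encode.comp (xOf_primrec.comp Primrec.fst))
  have hG : Primrec₂ fun (z : List Bool) (t : ℕ) => (evaln t cG (encode z)).map Nat.succ :=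
    Primrec.to₂ <| Primrec.option_map
      (primrec_evaln.comp <| ((Primrec.snd).pair (Primrec.const cG)).pair
        (Primrec.encode.comp Primrec.fst))
      (Primrec.succ.comp Primrec.snd).to₂
  exact (Primrec.option_orElse.comp hV hG).to_comp

def Mmach (cV cG : Code) : List Bool →. ℕ := fun z => Nat.rfindOpt (Fstep cV cG z)

lemma mmach_partrec (cV cG : Code) : Partrec (Mmach cV cG) :=
  Partrec.rfindOpt (fstep_computable cV cG)

end SemiTransAux


open SemiTransAux Nat.Partrec.Code Encodable in
/-- a machine admitting length-bounded total computable "semi-translators"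
from every machine is effectively optimal. -/
theorem semiTranslator_implies_effOptimal (U : List Bool →. ℕ) (hU : Partrec U)
    (hsemi : ∀ V : List Bool →. ℕ, Partrec V → ∃ h : List Bool → List Bool,
      Computable h ∧ LengthBounded h ∧ ∀ x y, y ∈ V x → y ∈ U (h x)) :
    EffOptimal U := by
  refine ⟨hU, fun V hV => ?_⟩
  obtain ⟨cV, hcV⟩ := exists_code.1 hV
  have hVeval : ∀ x : List Bool, eval cV (encode x) = V x := by
    intro x
    rw [hcV]
    simp [Encodable.encodek, Part.map_id']
  obtain ⟨cG, hcG⟩ := exists_code.1 (gfun_partrec hU)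
  have hGeval : ∀ z : List Bool, eval cG (encode z) = Gfun U z := by
    intro z
    rw [hcG]
    simp [Encodable.encodek, Part.map_id']
  obtain ⟨H, hHcomp, ⟨d, hd⟩, hH⟩ := hsemi (Mmach cV cG) (mmach_partrec cV cG)
  obtain ⟨cH, hcH⟩ := exists_code.1 hHcomp
  set e₀ := encode cH with he₀
  -- the key evaluation: on inputs of the special form, `Gfun U` runs `U` on `H`'s output
  have hGz : ∀ x : List Bool,
      Gfun U (List.replicate e₀ true ++ false :: x) =
        U (H (List.replicate e₀ true ++ false :: x)) := by
    intro x
    unfold Gfun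
    rw [eOf_encode, he₀, Denumerable.ofNat_encode, hcH]
    simp [Encodable.encodek]
    exact Part.bind_some _ _
  have main : ∀ x : List Bool,
      U (H (List.replicate e₀ true ++ false :: x)) = V x := by
    intro x
    set z := List.replicate e₀ true ++ false :: x with hz
    have hUHG : ∀ u : ℕ, u ∈ U (H z) ↔ u ∈ eval cG (encode z) := by
      intro u; rw [hGeval, hGz]
    -- any output of the machine `Mmach cV cG` at `z` is a correct output of `V x`
    have hMcases : ∀ a, a ∈ Mmach cV cG z →
        a ∈ V x ∨ ∃ u, u ∈ U (H z) ∧ a = u + 1 := by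
      intro a ha
      obtain ⟨t, ht⟩ := Nat.rfindOpt_spec ha
      unfold Fstep at ht
      rw [hz, xOf_encode, ← hz] at ht
      rcases hev : evaln t cV (encode x) with _ | v
      · rw [hev] at ht
        simp only [Option.orElse_eq_orElse, Option.orElse_none, Option.mem_def, Option.map_eq_some_iff] at ht
        obtain ⟨u, hu, rfl⟩ := ht
        exact Or.inr ⟨u, (hUHG u).2 (evaln_sound hu), rfl⟩
      · rw [hev] at ht
        simp only [Option.orElse_eq_orElse, Option.orElse_some, Option.mem_def, Option.some_inj] at ht
        subst ht
        exact Or.inl (by rw [← hVeval]; exact evaln_sound (by rw [hev]; rfl))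
    have hMdomV : ∀ v, v ∈ V x → (Mmach cV cG z).Dom := by
      intro v hv
      rw [← hVeval] at hv
      obtain ⟨t, ht⟩ := evaln_complete.1 hv
      refine Nat.rfindOpt_dom.2 ⟨t, v, ?_⟩
      unfold Fstep
      rw [hz, xOf_encode, ← hz, Option.mem_def.1 ht]
      simp
    have hMdomU : ∀ u, u ∈ U (H z) → (Mmach cV cG z).Dom := by
      intro u hu
      obtain ⟨t, ht⟩ := evaln_complete.1 ((hUHG u).1 hu)
      rcases hev : evaln t cV (encode x) with _ | v
      · refine Nat.rfindOpt_dom.2 ⟨t, u + 1, ?_⟩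
        unfold Fstep
        rw [hz, xOf_encode, ← hz, hev, Option.mem_def.1 ht]
        simp
      · refine Nat.rfindOpt_dom.2 ⟨t, v, ?_⟩
        unfold Fstep
        rw [hz, xOf_encode, ← hz, hev]
        simp
    by_cases hdom : (U (H z)).Dom
    · obtain ⟨u, hu⟩ := Part.dom_iff_mem.1 hdom
      have hMdom : (Mmach cV cG z).Dom := hMdomU u hu
      have ha : (Mmach cV cG z).get hMdom ∈ Mmach cV cG z := Part.get_mem hMdom
      set a := (Mmach cV cG z).get hMdom with hadef
      have haU : a ∈ U (H z) := hH z a ha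
      rcases hMcases a ha with haV | ⟨u', hu', he⟩
      · exact (Part.eq_some_iff.2 haU).trans (Part.eq_some_iff.2 haV).symm
      · exfalso
        have : u' = a := Part.mem_unique hu' haU
        omega
    · have hVnone : V x = Part.none := by
        refine Part.eq_none_iff'.2 fun hv => ?_
        have hvv : (V x).get hv ∈ V x := Part.get_mem hv
        have hMdom : (Mmach cV cG z).Dom := hMdomV _ hvv
        exact hdom (Part.dom_iff_mem.2
          ⟨(Mmach cV cG z).get hMdom, hH z _ (Part.get_mem hMdom)⟩)
      rw [hVnone, Part.eq_none_iff'.2 hdom]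
  refine ⟨fun x => H (List.replicate e₀ true ++ false :: x), ?_, ⟨e₀ + 1 + d, ?_⟩, ?_⟩
  · exact hHcomp.comp
      ((Primrec.list_append.comp (Primrec.const (List.replicate e₀ true))
        (Primrec.list_cons.comp (Primrec.const false) Primrec.id)).to_comp)
  · intro x
    calc (H (List.replicate e₀ true ++ false :: x)).length
        ≤ (List.replicate e₀ true ++ false :: x).length + d := hd _
      _ = x.length + (e₀ + 1 + d) := by simp; omega
  · intro x
    exact main x
end
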